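/- arXiv:2505.04296 — 10 statements merged into one kernel-verified Lean document; each statement's English description precedes it below -/
import Mathlib

section
/- Let f and g be monic polynomials over ℂ of degrees m and n with companion matrices C_f and C_g. Then the composition g(f)(t) equals det(t·I_{mn} − M), where M is the block companion matrix of the matrix polynomial q(t) = f(t)·I_n − C_g, i.e., the mn×mn block matrix with blocks I_n on the subdiagonal and last block column (−a₀I_n + C_g, −a₁I_n, …, −a_{m-1}I_n)ᵀ. -/
open Polynomial Matrix

/-- The Frobenius companion matrix of the monic polynomial
`t ^ n + a (n-1) * t ^ (n-1) + ⋯ + a 0`. -/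
def companion (n : ℕ) (a : Fin n → ℂ) : Matrix (Fin n) (Fin n) ℂ :=
  Matrix.of fun i j => if (j : ℕ) = n - 1 then -a i else if (i : ℕ) = (j : ℕ) + 1 then 1 else 0

variable {R : Type*} [CommRing R]


/-- Block companion linearization of the matrix polynomial `x^m • 1 + ∑ x^i • A i`. -/
def LM (m n : ℕ) (x : R) (A : Fin m → Matrix (Fin n) (Fin n) R) :
    Matrix (Fin m × Fin n) (Fin m × Fin n) R :=
  Matrix.of fun ip jq =>
    (if (jq.1 : ℕ) = m - 1 then A ip.1 ip.2 jq.2 else 0)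
    + (if (ip.1 : ℕ) = (jq.1 : ℕ) then x else 0) * (if ip.2 = jq.2 then 1 else 0)
    - (if (ip.1 : ℕ) = (jq.1 : ℕ) + 1 then 1 else 0) * (if ip.2 = jq.2 then 1 else 0)

def sumEquiv (k n : ℕ) : (Fin n ⊕ (Fin k × Fin n)) ≃ (Fin (k+1) × Fin n) where
  toFun := Sum.elim (fun p => (0, p)) (fun ip => (ip.1.succ, ip.2))
  invFun := fun x => Fin.cases (Sum.inl x.2) (fun i => Sum.inr (i, x.2)) x.1
  left_inv := by rintro (p | ⟨i, p⟩) <;> simp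
  right_inv := by
    rintro ⟨i, p⟩
    induction i using Fin.cases <;> simp

theorem LM_det {K : Type*} [Field K] (n : ℕ) (x : K) (hx : x ≠ 0) :
    ∀ m, 0 < m → ∀ A : Fin m → Matrix (Fin n) (Fin n) K,
      (LM m n x A).det
        = (x ^ m • (1 : Matrix (Fin n) (Fin n) K) + ∑ i : Fin m, x ^ (i : ℕ) • A i).det := by
  intro m
  induction m with
  | zero => omega
  | succ k ih =>
    intro _ A
    rcases Nat.eq_zero_or_pos k with hk | hk
    · subst hk
      rw [← det_submatrix_equiv_self (Equiv.uniqueProd (Fin n) (Fin 1)).symm (LM 1 n x A)]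
      have : (LM 1 n x A).submatrix (Equiv.uniqueProd (Fin n) (Fin 1)).symm
            (Equiv.uniqueProd (Fin n) (Fin 1)).symm
          = x ^ 1 • (1 : Matrix (Fin n) (Fin n) K) + ∑ i : Fin 1, x ^ (i : ℕ) • A i := by
        ext p q
        simp [LM, Matrix.one_apply, Fin.sum_univ_succ]
        split_ifs <;> ring
      rw [this]
    · -- inductive step
      have h0k : ¬ ((0:ℕ) = k) := by omega
      set Bmat : Matrix (Fin n) (Fin k × Fin n) K :=
        Matrix.of fun p (jq : Fin k × Fin n) =>
          if (jq.1 : ℕ) = k - 1 then A 0 p jq.2 else 0 with hB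
      set Cmat : Matrix (Fin k × Fin n) (Fin n) K :=
        Matrix.of fun (ip : Fin k × Fin n) q =>
          if (ip.1 : ℕ) = 0 then -(if ip.2 = q then (1:K) else 0) else 0 with hC
      rw [← det_submatrix_equiv_self (sumEquiv k n) (LM (k+1) n x A)]
      have hsub : (LM (k+1) n x A).submatrix (sumEquiv k n) (sumEquiv k n)
          = fromBlocks (x • (1 : Matrix (Fin n) (Fin n) K)) Bmat Cmat
              (LM k n x (fun i => A i.succ)) := by
        ext ij kl
        cases ij with
        | inl p =>
          cases kl with
          | inl q =>
            simp [LM, sumEquiv, Matrix.one_apply, h0k]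
          | inr jq =>
            simp [LM, sumEquiv, hB]
            split_ifs <;> first | rfl | (exfalso; omega) | ring
        | inr ip =>
          cases kl with
          | inl q =>
            simp [LM, sumEquiv, hC, h0k]
            split_ifs <;> first | rfl | (exfalso; omega) | ring
          | inr jq =>
            simp [LM, sumEquiv]
            split_ifs <;> first | rfl | (exfalso; omega) | ring
      rw [hsub]
      haveI : Invertible (x • (1 : Matrix (Fin n) (Fin n) K)) :=
        ⟨x⁻¹ • 1, by rw [Matrix.smul_mul, Matrix.one_mul, smul_smul, inv_mul_cancel₀ hx, one_smul],
          by rw [Matrix.smul_mul, Matrix.one_mul, smul_smul, mul_inv_cancel₀ hx, one_smul]⟩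
      have hinv : ⅟(x • (1 : Matrix (Fin n) (Fin n) K)) = x⁻¹ • 1 :=
        invOf_eq_right_inv (by
          rw [Matrix.smul_mul, Matrix.one_mul, smul_smul, mul_inv_cancel₀ hx, one_smul])
      rw [det_fromBlocks₁₁, hinv]
      have hD : LM k n x (fun i => A i.succ) - Cmat * (x⁻¹ • (1 : Matrix (Fin n) (Fin n) K)) * Bmat
          = LM k n x (fun i => A i.succ + (if (i:ℕ) = 0 then x⁻¹ • A 0 else (0 : Matrix (Fin n) (Fin n) K))) := by
        have h1 : Cmat * (x⁻¹ • (1 : Matrix (Fin n) (Fin n) K)) * Bmat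
            = x⁻¹ • (Cmat * Bmat) := by
          rw [Matrix.mul_smul, Matrix.mul_one, Matrix.smul_mul]
        rw [h1]
        have hCB : Cmat * Bmat = Matrix.of (fun (ip jq : Fin k × Fin n) =>
            if (ip.1:ℕ) = 0 then (if (jq.1:ℕ) = k-1 then -(A 0 ip.2 jq.2) else 0) else 0) := by
          ext ip jq
          simp [Matrix.mul_apply, hB, hC, ite_mul, mul_ite]
          split_ifs <;> simp
        rw [hCB]
        ext ip jq
        simp [LM, Matrix.smul_apply, smul_eq_mul]
        split_ifs
        all_goals try (exfalso; omega)
        all_goals try ring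
        all_goals try rfl
        all_goals simp
      rw [hD, ih hk]
      have hdet1 : (x • (1 : Matrix (Fin n) (Fin n) K)).det = x ^ n := by
        simp [Matrix.det_smul]
      rw [hdet1]
      set S := x ^ k • (1 : Matrix (Fin n) (Fin n) K)
        + ∑ i : Fin k, x ^ (i:ℕ) • (A i.succ + (if (i:ℕ) = 0 then x⁻¹ • A 0 else (0 : Matrix (Fin n) (Fin n) K))) with hS
      have h2 : x ^ n * S.det = (x • S).det := by
        rw [Matrix.det_smul]; simp
      rw [h2]
      congr 1
      have hsum0 : ∑ i : Fin k, (if (i:ℕ) = 0 then (A 0 : Matrix (Fin n) (Fin n) K) else 0)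
          = A 0 := by
        have h3 : ∀ i : Fin k, ((i:ℕ) = 0) ↔ (i = ⟨0, hk⟩) := by
          intro i; simp [Fin.ext_iff]
        simp only [h3]
        simp
      rw [hS, smul_add, Finset.smul_sum, Fin.sum_univ_succ]
      have h4 : ∀ i : Fin k, x • (x ^ (i:ℕ) • (A i.succ + (if (i:ℕ) = 0 then x⁻¹ • A 0 else (0 : Matrix (Fin n) (Fin n) K))))
          = x ^ ((i:ℕ)+1) • A i.succ + (if (i:ℕ) = 0 then (A 0 : Matrix (Fin n) (Fin n) K) else 0) := by
        intro i
        rcases eq_or_ne (i:ℕ) 0 with h | h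
        · simp [h, smul_smul, smul_add, pow_succ, mul_comm, mul_assoc, hx]
          try rw [smul_smul, mul_inv_cancel₀ hx, one_smul]
        · simp [h, smul_smul, smul_add, pow_succ, mul_comm]
      simp only [h4]
      rw [Finset.sum_add_distrib, hsum0, smul_smul, ← pow_succ']
      simp [Fin.val_succ]
      abel

set_option synthInstance.maxHeartbeats 1000000 in
set_option maxHeartbeats 1000000 in
theorem LM_det_poly (n : ℕ) (m : ℕ) (hm : 0 < m) (A : Fin m → Matrix (Fin n) (Fin n) ℂ[X]) :
    (LM m n (X : ℂ[X]) A).det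
      = ((X : ℂ[X]) ^ m • (1 : Matrix (Fin n) (Fin n) ℂ[X])
          + ∑ i : Fin m, (X : ℂ[X]) ^ (i : ℕ) • A i).det := by
  have hinj := RatFunc.algebraMap_injective ℂ
  set φ := algebraMap ℂ[X] (RatFunc ℂ) with hφ
  apply hinj
  rw [RingHom.map_det, RingHom.map_det, RingHom.mapMatrix_apply, RingHom.mapMatrix_apply]
  have hX : φ X ≠ 0 := by
    intro h
    exact Polynomial.X_ne_zero (hinj (by simpa using h))
  have h1 : (LM m n (X : ℂ[X]) A).map φ = LM m n (φ X) (fun i => (A i).map φ) := by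
    ext ip jq
    simp [LM, Matrix.map_apply, apply_ite φ, _root_.map_mul, _root_.map_sub, _root_.map_add, _root_.map_one, _root_.map_zero]
  have h2 : (((X : ℂ[X]) ^ m • (1 : Matrix (Fin n) (Fin n) ℂ[X])
        + ∑ i : Fin m, (X : ℂ[X]) ^ (i : ℕ) • A i)).map φ
      = (φ X) ^ m • (1 : Matrix (Fin n) (Fin n) (RatFunc ℂ))
        + ∑ i : Fin m, (φ X) ^ (i : ℕ) • (A i).map φ := by
    ext p q
    simp [Matrix.map_apply, Matrix.add_apply, Matrix.smul_apply, Matrix.one_apply,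
      Matrix.sum_apply, apply_ite φ, smul_eq_mul, map_pow, _root_.map_one, _root_.map_zero, _root_.map_add, _root_.map_mul,
      Finset.mul_sum]
  rw [h1, h2]
  exact LM_det n (φ X) hX m hm _

set_option maxRecDepth 4000 in
theorem companion_charpoly (n : ℕ) (hn : 0 < n) (b : Fin n → ℂ) :
    (companion n b).charpoly = X ^ n + ∑ k : Fin n, C (b k) * X ^ (k : ℕ) := by
  have hc : (companion n b).charpoly = (charmatrix (companion n b)).det := rfl
  rw [hc]
  set e : Fin n ≃ Fin n × Fin 1 := (Equiv.prodUnique (Fin n) (Fin 1)).symm with he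
  set A' : Fin n → Matrix (Fin 1) (Fin 1) ℂ[X] := fun k => Matrix.of fun _ _ => C (b k) with hA
  have h1 : charmatrix (companion n b) = (LM n 1 (X : ℂ[X]) A').submatrix e e := by
    refine Matrix.ext fun i j => ?_
    have hi := i.isLt
    have hj := j.isLt
    rw [charmatrix_apply]
    simp [LM, companion, Matrix.diagonal_apply, Matrix.submatrix_apply, he, hA,
      apply_ite (C : ℂ →+* ℂ[X]), _root_.map_one, _root_.map_zero, map_neg, Fin.ext_iff]
    split_ifs
    all_goals try (exfalso; omega)
    all_goals try ring
    all_goals simp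
  rw [h1, det_submatrix_equiv_self, LM_det_poly 1 n hn A']
  have h2 : ((X : ℂ[X]) ^ n • (1 : Matrix (Fin 1) (Fin 1) ℂ[X])
      + ∑ i : Fin n, (X : ℂ[X]) ^ (i : ℕ) • A' i).det
      = X ^ n + ∑ k : Fin n, C (b k) * X ^ (k : ℕ) := by
    rw [Matrix.det_fin_one]
    simp only [Matrix.add_apply, Matrix.smul_apply, Matrix.sum_apply, Matrix.one_apply,
      if_pos rfl, smul_eq_mul, mul_one, hA, Matrix.of_apply]
    rw [if_pos trivial, mul_one]
    congr 1
    exact Finset.sum_congr rfl fun k _ => by rw [mul_comm]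
  rw [h2]

set_option maxRecDepth 4000 in
theorem statement2 (m n : ℕ) (hm : 0 < m) (hn : 0 < n) (a : Fin m → ℂ) (b : Fin n → ℂ)
    (f g : ℂ[X])
    (hf : f = X ^ m + ∑ i, C (a i) * X ^ (i : ℕ))
    (hg : g = X ^ n + ∑ k, C (b k) * X ^ (k : ℕ)) :
    g.comp f = Matrix.charpoly (Matrix.of fun ip jq : Fin m × Fin n =>
      if (jq.1 : ℕ) = m - 1 then
        -(a ip.1) * (if ip.2 = jq.2 then 1 else 0)
          + (if (ip.1 : ℕ) = 0 then companion n b ip.2 jq.2 else 0)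
      else if (ip.1 : ℕ) = (jq.1 : ℕ) + 1 then (if ip.2 = jq.2 then (1 : ℂ) else 0)
      else 0) := by
  classical
  set Abig : Fin m → Matrix (Fin n) (Fin n) ℂ[X] := fun i => Matrix.of fun p q =>
    C (a i) * (if p = q then 1 else 0)
      - (if (i : ℕ) = 0 then C (companion n b p q) else 0) with hAbig
  unfold Matrix.charpoly
  have h1 : charmatrix (Matrix.of fun ip jq : Fin m × Fin n =>
      if (jq.1 : ℕ) = m - 1 then
        -(a ip.1) * (if ip.2 = jq.2 then 1 else 0)
          + (if (ip.1 : ℕ) = 0 then companion n b ip.2 jq.2 else 0)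
      else if (ip.1 : ℕ) = (jq.1 : ℕ) + 1 then (if ip.2 = jq.2 then (1 : ℂ) else 0)
      else 0) = LM m n X Abig := by
    refine Matrix.ext fun ip jq => ?_
    obtain ⟨i, p⟩ := ip
    obtain ⟨j, q⟩ := jq
    have hi := i.isLt
    have hj := j.isLt
    rw [charmatrix_apply]
    simp only [LM, Matrix.diagonal_apply, Matrix.of_apply, hAbig, Prod.mk.injEq,
      apply_ite (C : ℂ →+* ℂ[X]), map_neg, _root_.map_mul, _root_.map_add,
      _root_.map_one, _root_.map_zero, Fin.ext_iff, ite_and]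
    split_ifs
    all_goals try (exfalso; omega)
    all_goals try ring
    all_goals simp
  rw [h1, LM_det_poly n m hm Abig]
  have h4 : (X : ℂ[X]) ^ m • (1 : Matrix (Fin n) (Fin n) ℂ[X])
      + ∑ i : Fin m, (X : ℂ[X]) ^ (i : ℕ) • Abig i
      = Matrix.of fun p q =>
          f * (if p = q then 1 else 0) - C (companion n b p q) := by
    refine Matrix.ext fun p q => ?_
    simp only [Matrix.add_apply, Matrix.smul_apply, Matrix.sum_apply, Matrix.one_apply,
      smul_eq_mul, Matrix.of_apply, hAbig]
    rw [hf]
    have hsum1 : ∑ i : Fin m, (X : ℂ[X]) ^ (i : ℕ)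
        * (C (a i) * (if p = q then 1 else 0)
            - (if (i : ℕ) = 0 then C (companion n b p q) else 0))
        = (∑ i : Fin m, C (a i) * X ^ (i : ℕ)) * (if p = q then 1 else 0)
            - C (companion n b p q) := by
      simp only [mul_sub]
      rw [Finset.sum_sub_distrib]
      congr 1
      · rw [Finset.sum_mul]
        exact Finset.sum_congr rfl fun i _ => by ring
      · have h3 : ∀ i : Fin m, ((i : ℕ) = 0) = (i = ⟨0, hm⟩) := fun i => by
          simp [Fin.ext_iff]
        simp only [h3, mul_ite, mul_zero]
        rw [Finset.sum_ite_eq' Finset.univ]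
        simp
    rw [hsum1]
    ring
  rw [h4]
  have h5 : (Matrix.of fun p q =>
        f * (if p = q then (1 : ℂ[X]) else 0) - C (companion n b p q))
      = (charmatrix (companion n b)).map (eval₂RingHom (C : ℂ →+* ℂ[X]) f) := by
    refine Matrix.ext fun p q => ?_
    rw [Matrix.map_apply, charmatrix_apply]
    simp only [Matrix.of_apply, Matrix.diagonal_apply, _root_.map_sub,
      apply_ite (eval₂RingHom (C : ℂ →+* ℂ[X]) f), _root_.map_zero, coe_eval₂RingHom,
      eval₂_X, eval₂_C]
    split_ifs <;> ring
  rw [h5, ← RingHom.mapMatrix_apply, ← RingHom.map_det]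
  have h6 : (charmatrix (companion n b)).det = (companion n b).charpoly := rfl
  rw [h6, companion_charpoly n hn b, hg]
  simp [Polynomial.comp, Polynomial.coe_eval₂RingHom]
end

section
/- Let M_1, …, M_m and N_1, …, N_{m-1} be n×n complex matrices. The determinant of the block matrix whose first block row is (M_1, M_2, …, M_m), with −I_n on the subdiagonal, N_j in position (j+1, j+1) for j = 1,…,m−1, and zeros elsewhere, equals det(M_1·N_1⋯N_{m-1} + M_2·N_2⋯N_{m-1} + ⋯ + M_{m-1}·N_{m-1} + M_m). -/
open Matrix

noncomputable def blk (m n : ℕ) (M : Fin m → Matrix (Fin n) (Fin n) ℂ)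
    (N : ℕ → Matrix (Fin n) (Fin n) ℂ) : Matrix (Fin m × Fin n) (Fin m × Fin n) ℂ :=
  Matrix.of fun ip jq : Fin m × Fin n =>
      if (ip.1 : ℕ) = 0 then M jq.1 ip.2 jq.2
      else if (ip.1 : ℕ) = (jq.1 : ℕ) + 1 then -(if ip.2 = jq.2 then (1 : ℂ) else 0)
      else if ip.1 = jq.1 then N (ip.1 : ℕ) ip.2 jq.2
      else 0

def esub (m n : ℕ) : (Fin n ⊕ (Fin (m+1) × Fin n)) ≃ (Fin (m+2) × Fin n) :=
  (Equiv.sumCongr ((Equiv.uniqueProd (Fin n) (Fin 1)).symm) (Equiv.refl _)).trans <|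
  (Equiv.sumProdDistrib (Fin 1) (Fin (m+1)) (Fin n)).symm.trans <|
  (finSumFinEquiv.prodCongr (Equiv.refl (Fin n))).trans <|
  ((finCongr (by omega : 1 + (m+1) = m+2)).prodCongr (Equiv.refl (Fin n)))

lemma esub_inl (m n : ℕ) (x : Fin n) : esub m n (Sum.inl x) = (⟨0, by omega⟩, x) := by
  simp [esub, Equiv.uniqueProd, finSumFinEquiv]; rfl

lemma esub_inr (m n : ℕ) (i : Fin (m+1)) (x : Fin n) :
    esub m n (Sum.inr (i, x)) = (⟨(i:ℕ)+1, by omega⟩, x) := by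
  simp only [esub, Equiv.trans_apply, Equiv.sumCongr_apply, Equiv.prodCongr_apply]
  apply Prod.ext
  · simp [finSumFinEquiv, Fin.ext_iff, Fin.natAdd, Nat.add_comm]
  · simp [finSumFinEquiv]

lemma step (m n : ℕ) (M : Fin (m+2) → Matrix (Fin n) (Fin n) ℂ)
    (N : ℕ → Matrix (Fin n) (Fin n) ℂ) :
    (blk (m+2) n M N).det =
      (blk (m+1) n (Fin.cons (M 0 * N 1 + M 1) (fun j => M j.succ.succ)) (fun k => N (k+1))).det := by
  classical
  set B := blk (m+2) n M N with hB
  set σp : Equiv.Perm (Fin (m+2) × Fin n) :=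
    Equiv.prodCongrLeft (fun _ : Fin n => Equiv.swap (0 : Fin (m+2)) 1) with hσp
  set Bb : Matrix (Fin n) (Fin (m+1) × Fin n) ℂ :=
    Matrix.of (fun x jq => if (jq.1 : ℕ) = 0 then N 1 x jq.2 else 0) with hBb
  set Cb : Matrix (Fin (m+1) × Fin n) (Fin n) ℂ :=
    Matrix.of (fun ip y => if (ip.1 : ℕ) = 0 then M 0 ip.2 y else 0) with hCb
  set D := blk (m+1) n (fun j => M j.succ) (fun k => N (k+1)) with hD
  have hsub : (B.submatrix σp id).submatrix (esub m n) (esub m n)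
      = fromBlocks (-1) Bb Cb D := by
    ext ij kl
    rcases ij with x | ⟨i, x⟩ <;> rcases kl with y | ⟨j, y⟩ <;>
      simp only [Matrix.submatrix_apply, esub_inl, esub_inr, id_eq,
        hσp, Equiv.prodCongrLeft_apply, hB, hBb, hCb, hD, blk, fromBlocks,
        Matrix.of_apply, Sum.elim_inl, Sum.elim_inr] <;>
      simp [Equiv.swap_apply_def, Fin.ext_iff, Matrix.one_apply, Matrix.neg_apply, -Fin.val_eq_zero_iff] <;>
      split_ifs <;> first | rfl | omega | simp_all
  haveI : Invertible (-1 : Matrix (Fin n) (Fin n) ℂ) := ⟨-1, by simp, by simp⟩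
  have hinv : (⅟(-1 : Matrix (Fin n) (Fin n) ℂ)) = -1 := invOf_eq_right_inv (by simp)
  have hDC : D - Cb * ⅟(-1 : Matrix (Fin n) (Fin n) ℂ) * Bb
      = blk (m+1) n (Fin.cons (M 0 * N 1 + M 1) (fun j => M j.succ.succ)) (fun k => N (k+1)) := by
    rw [hinv, Matrix.mul_neg, Matrix.mul_one, Matrix.neg_mul, sub_neg_eq_add]
    ext ⟨i, x⟩ ⟨j, y⟩
    rcases Fin.eq_zero_or_eq_succ j with rfl | ⟨j', rfl⟩ <;>
    by_cases hi : (i : ℕ) = 0 <;>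
      simp [hD, hCb, hBb, blk, Matrix.mul_apply, hi, Fin.val_succ, add_comm, Fin.ext_iff, -Fin.val_eq_zero_iff]
  have h1 := Matrix.det_submatrix_equiv_self (esub m n) (B.submatrix σp id)
  rw [hsub, Matrix.det_permute, Matrix.det_fromBlocks₁₁, hDC] at h1
  have hsign : Equiv.Perm.sign σp = (-1)^n := by
    rw [hσp, Equiv.Perm.sign_prodCongrLeft]
    rw [Equiv.Perm.sign_swap (by simp [Fin.ext_iff] : (0 : Fin (m+2)) ≠ 1)]
    simp
  have hdet1 : (-1 : Matrix (Fin n) (Fin n) ℂ).det = (-1)^n := by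
    simpa using Matrix.det_neg (1 : Matrix (Fin n) (Fin n) ℂ)
  rw [hsign, hdet1] at h1
  have hcast : ((((-1)^n : ℤˣ) : ℤ) : ℂ) = (-1)^n := by push_cast; ring
  rw [hcast] at h1
  exact (mul_left_cancel₀ (pow_ne_zero n (by norm_num : (-1:ℂ) ≠ 0)) h1).symm

lemma lmc (n : ℕ) (N : ℕ → Matrix (Fin n) (Fin n) ℂ) (f g : ℕ → ℕ) (L1 L2 : ℕ)
    (hL : L1 = L2) (hfg : ∀ k, f k = g k) :
    ((List.range L1).map fun k => N (f k)).prod = ((List.range L2).map fun k => N (g k)).prod := by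
  subst hL
  congr 1
  apply List.map_congr_left
  intro a _
  rw [hfg]

lemma sum_eq (m n : ℕ) (M : Fin (m+2) → Matrix (Fin n) (Fin n) ℂ)
    (N : ℕ → Matrix (Fin n) (Fin n) ℂ) :
    (∑ i : Fin (m+1), (Fin.cons (M 0 * N 1 + M 1) (fun j => M j.succ.succ) : Fin (m+1) → Matrix (Fin n) (Fin n) ℂ) i *
        ((List.range (m + 1 - 1 - (i : ℕ))).map fun k => N ((i : ℕ) + 1 + k + 1)).prod)
    = ∑ i : Fin (m+2), M i * ((List.range (m + 2 - 1 - (i : ℕ))).map fun k => N ((i : ℕ) + 1 + k)).prod := by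
  rw [Fin.sum_univ_succ, Fin.sum_univ_succ, Fin.sum_univ_succ (n := m)]
  simp only [Fin.cons_zero, Fin.cons_succ, Fin.val_succ, Fin.val_zero, Fin.succ_zero_eq_one, Fin.val_one]
  set P : Matrix (Fin n) (Fin n) ℂ := ((List.range m).map fun k => N (k + 2)).prod with hP
  have h1 : ((List.range (m + 1 - 1 - 0)).map fun k => N (0 + 1 + k + 1)).prod = P :=
    lmc n N _ _ _ _ (by omega) (fun k => by omega)
  have h3 : ((List.range (m + 2 - 1 - 1)).map fun k => N (1 + 1 + k)).prod = P :=
    lmc n N _ _ _ _ (by omega) (fun k => by omega)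
  have h2 : ((List.range (m + 2 - 1 - 0)).map fun k => N (0 + 1 + k)).prod = N 1 * P := by
    rw [show m + 2 - 1 - 0 = m + 1 by omega, List.range_succ_eq_map]
    simp only [List.map_cons, List.prod_cons, List.map_map]
    congr 1
  have h4 : ∀ x : Fin m,
      ((List.range (m + 1 - 1 - ((x:ℕ) + 1))).map fun k => N ((x:ℕ) + 1 + 1 + k + 1)).prod
      = ((List.range (m + 2 - 1 - ((x:ℕ) + 1 + 1))).map fun k => N ((x:ℕ) + 1 + 1 + 1 + k)).prod :=
    fun x => lmc n N _ _ _ _ (by omega) (fun k => by omega)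
  rw [h1, h2, h3]
  rw [Finset.sum_congr rfl (fun x _ => by rw [h4 x])]
  noncomm_ring

lemma key (n m : ℕ) : ∀ (M : Fin (m+1) → Matrix (Fin n) (Fin n) ℂ) (N : ℕ → Matrix (Fin n) (Fin n) ℂ),
    (blk (m+1) n M N).det
      = (∑ i : Fin (m+1), M i * ((List.range (m + 1 - 1 - (i : ℕ))).map fun k => N ((i : ℕ) + 1 + k)).prod).det := by
  induction m with
  | zero =>
    intro M N
    have h : (blk 1 n M N).submatrix ((Equiv.uniqueProd (Fin n) (Fin 1)).symm)
        ((Equiv.uniqueProd (Fin n) (Fin 1)).symm) = M 0 := by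
      ext x y
      simp [blk, Equiv.uniqueProd, Fin.fin_one_eq_zero]
    have h2 : (∑ i : Fin 1, M i * ((List.range (1 - 1 - (i : ℕ))).map fun k => N ((i : ℕ) + 1 + k)).prod) = M 0 := by
      simp
    rw [h2, ← Matrix.det_submatrix_equiv_self ((Equiv.uniqueProd (Fin n) (Fin 1)).symm) (blk 1 n M N), h]
  | succ m ih =>
    intro M N
    rw [step m n M N, ih _ _, sum_eq m n M N]

theorem statement3 (m n : ℕ) (hm : 0 < m)
    (M : Fin m → Matrix (Fin n) (Fin n) ℂ) (N : ℕ → Matrix (Fin n) (Fin n) ℂ) :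
    Matrix.det (Matrix.of fun ip jq : Fin m × Fin n =>
      if (ip.1 : ℕ) = 0 then M jq.1 ip.2 jq.2
      else if (ip.1 : ℕ) = (jq.1 : ℕ) + 1 then -(if ip.2 = jq.2 then (1 : ℂ) else 0)
      else if ip.1 = jq.1 then N (ip.1 : ℕ) ip.2 jq.2
      else 0)
    = Matrix.det (∑ i : Fin m,
        M i * ((List.range (m - 1 - (i : ℕ))).map fun k => N ((i : ℕ) + 1 + k)).prod) := by
  obtain ⟨m', rfl⟩ : ∃ m', m = m' + 1 := ⟨m - 1, by omega⟩
  exact key n m' M N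
end

section
/- For every positive integer n and complex numbers x, y, z, the product p_n(z; x, y) = ∏_{r,s=1}^{n} (z^{1/n} + ε^r x^{1/n} + ε^s y^{1/n}), where ε is a primitive n-th root of unity and fixed n-th roots are chosen, is a polynomial in x, y, z that is symmetric in the three variables x, y, z. -/
open Finset MvPolynomial

noncomputable def pn (n : ℕ) (z x y : ℂ) : ℂ :=
  ∏ r : Fin n, ∏ s : Fin n,
    (z ^ (n : ℂ)⁻¹
      + Complex.exp (2 * Real.pi * Complex.I * ((r : ℕ) + 1) / n) * x ^ (n : ℂ)⁻¹
      + Complex.exp (2 * Real.pi * Complex.I * ((s : ℕ) + 1) / n) * y ^ (n : ℂ)⁻¹)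

namespace S4

noncomputable def eps (n : ℕ) : ℂ := Complex.exp (2 * Real.pi * Complex.I / n)

variable {n : ℕ}

lemma hprim (hn : 0 < n) : IsPrimitiveRoot (eps n) n :=
  Complex.isPrimitiveRoot_exp n hn.ne'

lemma eps_pow_n (hn : 0 < n) : eps n ^ n = 1 := (hprim hn).pow_eq_one

lemma epow_mod (hn : 0 < n) (a : ℕ) : eps n ^ a = eps n ^ (a % n) := by
  conv_lhs => rw [← Nat.div_add_mod a n]
  rw [pow_add, pow_mul, eps_pow_n hn, one_pow, one_mul]

lemma mem_N_iff (hn : 0 < n) {x : ℂ} : x ∈ Polynomial.nthRootsFinset n (1 : ℂ) ↔ x ^ n = 1 :=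
  Polynomial.mem_nthRootsFinset hn 1

lemma ne_zero_of_mem_N (hn : 0 < n) {x : ℂ} (hx : x ∈ Polynomial.nthRootsFinset n (1 : ℂ)) :
    x ≠ 0 := by
  intro h
  have := (mem_N_iff hn).1 hx
  rw [h, zero_pow hn.ne'] at this
  exact zero_ne_one this

lemma exp_form (hn : 0 < n) (k : ℕ) :
    Complex.exp (2 * Real.pi * Complex.I * (k + 1) / n) = eps n ^ (k + 1) := by
  rw [eps, ← Complex.exp_nat_mul]
  congr 1
  have h0 : (n : ℂ) ≠ 0 := Nat.cast_ne_zero.2 hn.ne'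
  field_simp
  push_cast
  ring

lemma permMul {M : Type*} [CommMonoid M] (hn : 0 < n) {z0 : ℂ}
    (h0 : z0 ∈ Polynomial.nthRootsFinset n (1 : ℂ)) (f : ℂ → M) :
    ∏ z ∈ Polynomial.nthRootsFinset n (1 : ℂ), f (z0 * z)
      = ∏ z ∈ Polynomial.nthRootsFinset n (1 : ℂ), f z := by
  have hz0 : z0 ≠ 0 := ne_zero_of_mem_N hn h0
  refine Finset.prod_nbij' (fun z => z0 * z) (fun z => z0⁻¹ * z) ?_ ?_ ?_ ?_ ?_
  · intro a ha
    rw [mem_N_iff hn]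
    rw [mul_pow, (mem_N_iff hn).1 h0, (mem_N_iff hn).1 ha, one_mul]
  · intro a ha
    rw [mem_N_iff hn]
    rw [mul_pow, inv_pow, (mem_N_iff hn).1 h0, (mem_N_iff hn).1 ha, inv_one, one_mul]
  · intro a _; field_simp
  · intro a _; field_simp
  · intro a _; rfl

lemma permInv {M : Type*} [CommMonoid M] (hn : 0 < n) (f : ℂ → M) :
    ∏ z ∈ Polynomial.nthRootsFinset n (1 : ℂ), f z⁻¹
      = ∏ z ∈ Polynomial.nthRootsFinset n (1 : ℂ), f z := by
  refine Finset.prod_nbij' (fun z => z⁻¹) (fun z => z⁻¹) ?_ ?_ ?_ ?_ ?_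
  · intro a ha
    rw [mem_N_iff hn]
    rw [inv_pow, (mem_N_iff hn).1 ha, inv_one]
  · intro a ha
    rw [mem_N_iff hn]
    rw [inv_pow, (mem_N_iff hn).1 ha, inv_one]
  · intro a _; simp
  · intro a _; simp
  · intro a _; rfl

lemma L1 {M : Type*} [CommMonoid M] (hn : 0 < n) (g : ℂ → M) :
    ∏ r : Fin n, g (Complex.exp (2 * Real.pi * Complex.I * ((r : ℕ) + 1) / n)) =
      ∏ z ∈ Polynomial.nthRootsFinset n (1 : ℂ), g z := by
  haveI : NeZero n := ⟨hn.ne'⟩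
  refine Finset.prod_bij (fun (r : Fin n) _ => eps n ^ ((r : ℕ) + 1)) ?_ ?_ ?_ ?_
  · intro r _
    rw [mem_N_iff hn, ← pow_mul, mul_comm, pow_mul, eps_pow_n hn, one_pow]
  · intro r _ s _ h
    have h2 : eps n ^ (((r : ℕ) + 1) % n) = eps n ^ (((s : ℕ) + 1) % n) := by
      rw [← epow_mod hn, ← epow_mod hn]; exact h
    have := (hprim hn).pow_inj (Nat.mod_lt _ hn) (Nat.mod_lt _ hn) h2
    have hr := r.is_lt; have hs := s.is_lt
    ext
    rcases Nat.lt_or_ge ((r : ℕ) + 1) n with h3 | h3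
    · rcases Nat.lt_or_ge ((s : ℕ) + 1) n with h4 | h4
      · rw [Nat.mod_eq_of_lt h3, Nat.mod_eq_of_lt h4] at this; omega
      · have h5 : (s : ℕ) + 1 = n := by omega
        rw [Nat.mod_eq_of_lt h3, h5, Nat.mod_self] at this; omega
    · have h5 : (r : ℕ) + 1 = n := by omega
      rcases Nat.lt_or_ge ((s : ℕ) + 1) n with h4 | h4
      · rw [h5, Nat.mod_self, Nat.mod_eq_of_lt h4] at this; omega
      · have h6 : (s : ℕ) + 1 = n := by omega
        omega
  · intro b hb
    obtain ⟨i, hi, hpow⟩ := (hprim hn).eq_pow_of_pow_eq_one ((mem_N_iff hn).1 hb)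
    rcases Nat.eq_zero_or_pos i with h0 | h0
    · refine ⟨⟨n - 1, by omega⟩, Finset.mem_univ _, ?_⟩
      simp only []
      rw [show (n - 1) + 1 = n by omega, eps_pow_n hn, ← hpow, h0, pow_zero]
    · refine ⟨⟨i - 1, by omega⟩, Finset.mem_univ _, ?_⟩
      simp only []
      rw [show (i - 1) + 1 = i by omega, hpow]
  · intro r _
    rw [exp_form hn]

noncomputable def Qpoly (n : ℕ) : MvPolynomial (Fin 3) ℂ :=
  ∏ z ∈ Polynomial.nthRootsFinset n (1 : ℂ), ∏ w ∈ Polynomial.nthRootsFinset n (1 : ℂ),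
    (X 2 + C z * X 0 + C w * X 1)

noncomputable def sc (c : Fin 3 → ℂ) :
    MvPolynomial (Fin 3) ℂ →ₐ[ℂ] MvPolynomial (Fin 3) ℂ :=
  aeval fun i => C (c i) * X i

lemma sc_monomial (c : Fin 3 → ℂ) (d : Fin 3 →₀ ℕ) (a : ℂ) :
    sc c (monomial d a) = monomial d ((∏ i : Fin 3, c i ^ d i) * a) := by
  rw [sc, aeval_monomial, monomial_eq]
  have h1 : (d.prod fun i k => (C (c i) * X i : MvPolynomial (Fin 3) ℂ) ^ k)
      = (d.prod fun i k => (C (c i ^ k) : MvPolynomial (Fin 3) ℂ))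
        * d.prod fun i k => (X i : MvPolynomial (Fin 3) ℂ) ^ k := by
    rw [← Finsupp.prod_mul]
    apply Finsupp.prod_congr
    intro i _
    rw [mul_pow, C_pow]
  rw [h1, Finsupp.prod_fintype _ _ (fun i => by rw [pow_zero, C_1])]
  have h2 : (∏ i : Fin 3, (C (c i ^ d i) : MvPolynomial (Fin 3) ℂ))
      = C (∏ i : Fin 3, c i ^ d i) := (map_prod _ _ _).symm
  rw [h2, algebraMap_eq, map_mul]
  ring

lemma coeff_sc (c : Fin 3 → ℂ) (p : MvPolynomial (Fin 3) ℂ) (d : Fin 3 →₀ ℕ) :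
    coeff d (sc c p) = (∏ i : Fin 3, c i ^ d i) * coeff d p := by
  conv_lhs => rw [p.as_sum, map_sum, MvPolynomial.coeff_sum]
  have h1 : ∀ d' ∈ p.support, coeff d (sc c (monomial d' (coeff d' p)))
      = if d' = d then (∏ i : Fin 3, c i ^ d i) * coeff d' p else 0 := by
    intro d' _
    rw [sc_monomial, coeff_monomial]
    split_ifs with h
    · subst h; rfl
    · rfl
  rw [Finset.sum_congr rfl h1, Finset.sum_ite_eq' p.support d
    (fun d' => (∏ i : Fin 3, c i ^ d i) * coeff d' p)]
  split_ifs with h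
  · rfl
  · rw [notMem_support_iff.1 h, mul_zero]

lemma sc_factor (c : Fin 3 → ℂ) (z w : ℂ) :
    sc c (X 2 + C z * X 0 + C w * X 1)
      = C (c 2) * X 2 + C (z * c 0) * X 0 + C (w * c 1) * X 1 := by
  rw [sc]
  simp only [map_add, map_mul, aeval_X, aeval_C, algebraMap_eq, C_mul]
  ring

lemma eps_mem (hn : 0 < n) : eps n ∈ Polynomial.nthRootsFinset n (1 : ℂ) :=
  (mem_N_iff hn).2 (eps_pow_n hn)

lemma sc_Q_left (hn : 0 < n) : sc ![eps n, 1, 1] (Qpoly n) = Qpoly n := by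
  rw [Qpoly, map_prod]
  have step : ∀ z ∈ Polynomial.nthRootsFinset n (1 : ℂ),
      (sc ![eps n, 1, 1] (∏ w ∈ Polynomial.nthRootsFinset n (1 : ℂ), (X 2 + C z * X 0 + C w * X 1)))
        = ∏ w ∈ Polynomial.nthRootsFinset n (1 : ℂ), (X 2 + C (eps n * z) * X 0 + C w * X 1) := by
    intro z _
    rw [map_prod]
    apply Finset.prod_congr rfl
    intro w _
    rw [sc_factor]
    simp only [Matrix.cons_val_zero, Matrix.cons_val_one, Matrix.head_cons,
      Matrix.cons_val_two, Matrix.tail_cons]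
    rw [C_1, one_mul, mul_one, mul_comm z (eps n)]
  rw [Finset.prod_congr rfl step]
  exact permMul hn (eps_mem hn)
    fun z => ∏ w ∈ Polynomial.nthRootsFinset n (1 : ℂ), (X 2 + C z * X 0 + C w * X 1)

lemma sc_Q_mid (hn : 0 < n) : sc ![1, eps n, 1] (Qpoly n) = Qpoly n := by
  rw [Qpoly, map_prod]
  apply Finset.prod_congr rfl
  intro z _
  rw [map_prod]
  have step : ∀ w ∈ Polynomial.nthRootsFinset n (1 : ℂ),
      sc ![1, eps n, 1] (X 2 + C z * X 0 + C w * X 1)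
        = X 2 + C z * X 0 + C (eps n * w) * X 1 := by
    intro w _
    rw [sc_factor]
    simp only [Matrix.cons_val_zero, Matrix.cons_val_one, Matrix.head_cons,
      Matrix.cons_val_two, Matrix.tail_cons]
    rw [C_1, one_mul, mul_one, mul_comm w (eps n)]
  rw [Finset.prod_congr rfl step]
  exact permMul hn (eps_mem hn) fun w => (X 2 + C z * X 0 + C w * X 1)

lemma sc_Q_diag (hn : 0 < n) : sc ![eps n, eps n, eps n] (Qpoly n) = Qpoly n := by
  rw [Qpoly, map_prod]
  apply Finset.prod_congr rfl
  intro z _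
  rw [map_prod]
  have step : ∀ w ∈ Polynomial.nthRootsFinset n (1 : ℂ),
      sc ![eps n, eps n, eps n] (X 2 + C z * X 0 + C w * X 1)
        = C (eps n) * (X 2 + C z * X 0 + C w * X 1) := by
    intro w _
    rw [sc_factor]
    simp only [Matrix.cons_val_zero, Matrix.cons_val_one, Matrix.head_cons,
      Matrix.cons_val_two, Matrix.tail_cons]
    rw [C_mul, C_mul]
    ring
  rw [Finset.prod_congr rfl step, Finset.prod_mul_distrib, Finset.prod_const,
    (hprim hn).card_nthRootsFinset, ← C_pow, eps_pow_n hn, C_1, one_mul]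

lemma dvd_exponents (hn : 0 < n) {d : Fin 3 →₀ ℕ} (hd : d ∈ (Qpoly n).support) :
    n ∣ d 0 ∧ n ∣ d 1 ∧ n ∣ d 2 := by
  have hc : coeff d (Qpoly n) ≠ 0 := mem_support_iff.1 hd
  have key : ∀ c : Fin 3 → ℂ, sc c (Qpoly n) = Qpoly n →
      (∏ i : Fin 3, c i ^ d i) = 1 := by
    intro c hsc
    have h1 := coeff_sc c (Qpoly n) d
    rw [hsc] at h1
    have h2 : (∏ i : Fin 3, c i ^ d i) * coeff d (Qpoly n)
        = 1 * coeff d (Qpoly n) := by rw [one_mul, ← h1]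
    exact mul_right_cancel₀ hc h2
  have k0 := key _ (sc_Q_left hn)
  have k1 := key _ (sc_Q_mid hn)
  have k2 := key _ (sc_Q_diag hn)
  rw [Fin.prod_univ_three] at k0 k1 k2
  simp only [Matrix.cons_val_zero, Matrix.cons_val_one, Matrix.head_cons,
    Matrix.cons_val_two, Matrix.tail_cons, one_pow, mul_one, one_mul] at k0 k1 k2
  have h0 : n ∣ d 0 := ((hprim hn).pow_eq_one_iff_dvd _).1 k0
  have h1 : n ∣ d 1 := ((hprim hn).pow_eq_one_iff_dvd _).1 k1
  have hsum : n ∣ d 0 + d 1 + d 2 := by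
    apply ((hprim hn).pow_eq_one_iff_dvd _).1
    rw [pow_add, pow_add, k2]
  have h2 : n ∣ d 2 := by
    have : d 2 = (d 0 + d 1 + d 2) - d 0 - d 1 := by omega
    rw [this]
    exact Nat.dvd_sub (Nat.dvd_sub hsum h0) h1
  exact ⟨h0, h1, h2⟩

noncomputable def Ppoly (n : ℕ) : MvPolynomial (Fin 3) ℂ :=
  ∑ d ∈ (Qpoly n).support,
    monomial (Finsupp.mapRange (· / n) (Nat.zero_div n) d) (coeff d (Qpoly n))

lemma eval_P (hn : 0 < n) (v : Fin 3 → ℂ) :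
    eval v (Ppoly n) = eval (fun i => v i ^ (n : ℂ)⁻¹) (Qpoly n) := by
  conv_rhs => rw [(Qpoly n).as_sum, map_sum]
  rw [Ppoly, map_sum]
  apply Finset.sum_congr rfl
  intro d hd
  rw [eval_monomial, eval_monomial]
  congr 1
  rw [Finsupp.prod_fintype _ _ (fun i => pow_zero _),
    Finsupp.prod_fintype _ _ (fun i => pow_zero _)]
  apply Finset.prod_congr rfl
  intro i _
  rw [Finsupp.mapRange_apply]
  have hdvd : n ∣ d i := by
    obtain ⟨h0, h1, h2⟩ := dvd_exponents hn hd
    fin_cases i <;> assumption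
  obtain ⟨k, hk⟩ := hdvd
  rw [hk, Nat.mul_div_cancel_left _ hn, pow_mul, Complex.cpow_nat_inv_pow _ hn.ne']

noncomputable def F (n : ℕ) (c a b : ℂ) : ℂ :=
  ∏ z ∈ Polynomial.nthRootsFinset n (1 : ℂ), ∏ w ∈ Polynomial.nthRootsFinset n (1 : ℂ),
    (c + z * a + w * b)

lemma F_swap_ab (c a b : ℂ) : F n c a b = F n c b a := by
  rw [F, F, Finset.prod_comm]
  apply Finset.prod_congr rfl; intro z _
  apply Finset.prod_congr rfl; intro w _
  ring

lemma F_swap_ca (hn : 0 < n) (c a b : ℂ) : F n c a b = F n a c b := by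
  symm
  rw [F, F]
  have step1 : ∀ z ∈ Polynomial.nthRootsFinset n (1 : ℂ),
      (∏ w ∈ Polynomial.nthRootsFinset n (1 : ℂ), (a + z * c + w * b))
        = ∏ w ∈ Polynomial.nthRootsFinset n (1 : ℂ), (c + z⁻¹ * a + w * b) := by
    intro z hz
    have hz0 : z ≠ 0 := ne_zero_of_mem_N hn hz
    rw [← permMul hn hz (fun w => a + z * c + w * b)]
    have step2 : ∀ w ∈ Polynomial.nthRootsFinset n (1 : ℂ),
        a + z * c + (z * w) * b = z * (c + z⁻¹ * a + w * b) := by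
      intro w _
      field_simp
      ring
    rw [Finset.prod_congr rfl step2, Finset.prod_mul_distrib, Finset.prod_const,
      (hprim hn).card_nthRootsFinset, (mem_N_iff hn).1 hz, one_mul]
  rw [Finset.prod_congr rfl step1,
    ← permInv hn (fun z => ∏ w ∈ Polynomial.nthRootsFinset n (1 : ℂ), (c + z * a + w * b))]

lemma eval_Q (u : Fin 3 → ℂ) : eval u (Qpoly n) = F n (u 2) (u 0) (u 1) := by
  rw [Qpoly, F, map_prod]
  apply Finset.prod_congr rfl; intro z _
  rw [map_prod]
  apply Finset.prod_congr rfl; intro w _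
  simp

lemma pn_eq (hn : 0 < n) (z x y : ℂ) :
    pn n z x y = F n (z ^ (n : ℂ)⁻¹) (x ^ (n : ℂ)⁻¹) (y ^ (n : ℂ)⁻¹) := by
  refine (L1 hn (fun zeta => ∏ s : Fin n,
      (z ^ (n : ℂ)⁻¹ + zeta * x ^ (n : ℂ)⁻¹
        + Complex.exp (2 * Real.pi * Complex.I * ((s : ℕ) + 1) / n) * y ^ (n : ℂ)⁻¹))).trans ?_
  exact Finset.prod_congr rfl fun zeta _ => L1 hn
    (fun eta => z ^ (n : ℂ)⁻¹ + zeta * x ^ (n : ℂ)⁻¹ + eta * y ^ (n : ℂ)⁻¹)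

lemma hswap (hn : 0 < n) (x y : Fin 3) (u : Fin 3 → ℂ) :
    F n (u (Equiv.swap x y 2)) (u (Equiv.swap x y 0)) (u (Equiv.swap x y 1))
      = F n (u 2) (u 0) (u 1) := by
  have hbc : F n (u 1) (u 0) (u 2) = F n (u 2) (u 0) (u 1) :=
    calc F n (u 1) (u 0) (u 2) = F n (u 1) (u 2) (u 0) := F_swap_ab _ _ _
      _ = F n (u 2) (u 1) (u 0) := (F_swap_ca hn (u 2) (u 1) (u 0)).symm
      _ = F n (u 2) (u 0) (u 1) := F_swap_ab _ _ _
  fin_cases x <;> fin_cases y <;> simp [Equiv.swap_apply_def] <;>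
    first
      | exact F_swap_ab _ _ _
      | exact (F_swap_ca hn (u 2) (u 0) (u 1)).symm
      | exact hbc

lemma key (hn : 0 < n) (sigma : Equiv.Perm (Fin 3)) :
    ∀ u : Fin 3 → ℂ,
      F n (u (sigma 2)) (u (sigma 0)) (u (sigma 1)) = F n (u 2) (u 0) (u 1) := by
  refine Equiv.Perm.swap_induction_on sigma ?_ ?_
  · intro u; simp
  · intro f x y hxy ih u
    have h1 : ∀ i : Fin 3, u ((Equiv.swap x y * f) i) = (u ∘ Equiv.swap x y) (f i) := by
      intro i; rw [Equiv.Perm.mul_apply]; rfl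
    rw [h1 2, h1 0, h1 1, ih (u ∘ Equiv.swap x y)]
    exact hswap hn x y u

end S4

theorem statement4 (n : ℕ) (hn : 0 < n) :
    ∃ P : MvPolynomial (Fin 3) ℂ,
      (∀ x y z : ℂ, MvPolynomial.eval ![x, y, z] P = pn n z x y) ∧
      MvPolynomial.IsSymmetric P := by
  refine ⟨S4.Ppoly n, ?_, ?_⟩
  · intro x y z
    rw [S4.eval_P hn, S4.eval_Q, S4.pn_eq hn]
    simp
  · intro sigma
    apply MvPolynomial.funext
    intro w
    rw [MvPolynomial.eval_rename, S4.eval_P hn, S4.eval_P hn, S4.eval_Q, S4.eval_Q]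
    exact S4.key hn sigma (fun i => w i ^ (n : ℂ)⁻¹)
end

section
/- For every positive integer n and complex x, y, z with z = wⁿ, one has p_n(wⁿ; x, y) = χ(F_x ⊞ F_y; w), where F_x and F_y are the Frobenius companion matrices of the polynomials tⁿ − x and tⁿ − y respectively, χ(M; w) = det(wI − M) is the characteristic polynomial, and ⊞ denotes the Kronecker sum. -/
open Polynomial Matrix Kronecker

/-- The Frobenius companion matrix `F(0, …, 0, (-1)^(n+1) * x)` of the polynomial
`t ^ n - c` (subdiagonal `1`s, last column `(c, 0, …, 0)ᵀ`); its characteristic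
polynomial is `t ^ n - c`. -/
def compC (n : ℕ) (c : ℂ) : Matrix (Fin n) (Fin n) ℂ :=
  Matrix.of fun i j =>
    if (i : ℕ) = 0 ∧ (j : ℕ) = n - 1 then c else if (i : ℕ) = (j : ℕ) + 1 then 1 else 0


lemma my_eval_charpoly {n : Type*} [Fintype n] [DecidableEq n] {R : Type*} [CommRing R]
    (M : Matrix n n R) (w : R) :
    (M.charpoly).eval w = (w • (1 : Matrix n n R) - M).det := by
  rw [Matrix.charpoly, ← Polynomial.coe_evalRingHom, RingHom.map_det]
  congr 1
  ext i j
  by_cases h : i = j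
  · subst h; simp [charmatrix_apply_eq, Matrix.one_apply]
  · simp [charmatrix_apply_ne _ _ _ h, Matrix.one_apply_ne h]


lemma det_kron_sum {n : ℕ} (T S : Matrix (Fin n) (Fin n) ℂ)
    (hT : ∀ i j : Fin n, i < j → T i j = 0) (hS : ∀ i j : Fin n, i < j → S i j = 0) (w : ℂ) :
    (w • (1 : Matrix (Fin n × Fin n) (Fin n × Fin n) ℂ)
        - (T ⊗ₖ (1 : Matrix (Fin n) (Fin n) ℂ) + (1 : Matrix (Fin n) (Fin n) ℂ) ⊗ₖ S)).det
      = ∏ i : Fin n, ∏ j : Fin n, (w - T i i - S j j) := by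
  set K : Matrix (Fin n × Fin n) (Fin n × Fin n) ℂ :=
    w • (1 : Matrix (Fin n × Fin n) (Fin n × Fin n) ℂ)
        - (T ⊗ₖ (1 : Matrix (Fin n) (Fin n) ℂ) + (1 : Matrix (Fin n) (Fin n) ℂ) ⊗ₖ S) with hK
  have hKapp : ∀ p q : Fin n × Fin n, K p q =
      (if p = q then w else 0) - (T p.1 q.1 * (if p.2 = q.2 then 1 else 0)
        + (if p.1 = q.1 then 1 else 0) * S p.2 q.2) := by
    intro p q
    simp [hK, Matrix.sub_apply, Matrix.smul_apply, Matrix.add_apply, Matrix.one_apply,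
      Matrix.kroneckerMap_apply, smul_eq_mul, mul_ite, mul_one, mul_zero]
  have hzero : ∀ p q : Fin n × Fin n, (finProdFinEquiv p : ℕ) < (finProdFinEquiv q : ℕ) →
      K p q = 0 := by
    rintro ⟨i, j⟩ ⟨k, l⟩ hlt
    have hval : ((j : ℕ) + n * i) < ((l : ℕ) + n * k) := by
      simpa [finProdFinEquiv] using hlt
    have hik : i ≤ k := by
      by_contra hc
      push_neg at hc
      have h1 : n * ((k : ℕ) + 1) ≤ n * (i : ℕ) := Nat.mul_le_mul_left n hc
      have h2 : (l : ℕ) < n := l.2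
      have h3 : n * (k : ℕ) + n = n * ((k : ℕ) + 1) := by ring
      omega
    rcases lt_or_eq_of_le hik with hik | hik
    · have hne : i ≠ k := ne_of_lt hik
      rw [hKapp]
      simp [hT i k hik, Prod.ext_iff, hne]
    · subst hik
      have hjl : j < l := by
        rw [Fin.lt_def]; omega
      rw [hKapp]
      simp [hS j l hjl, Prod.ext_iff, ne_of_lt hjl]
  -- transfer to Fin (n*n)
  have hdet : K.det = (K.submatrix finProdFinEquiv.symm finProdFinEquiv.symm).det :=
    (Matrix.det_submatrix_equiv_self finProdFinEquiv.symm K).symm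
  rw [hdet, Matrix.det_of_lowerTriangular]
  · simp only [Matrix.submatrix_apply]
    rw [Equiv.prod_comp finProdFinEquiv.symm (fun p => K p p), Fintype.prod_prod_type]
    apply Finset.prod_congr rfl
    intro i _
    apply Finset.prod_congr rfl
    intro j _
    rw [hKapp]
    simp
    ring
  · intro p q hpq
    simp only [Matrix.submatrix_apply]
    apply hzero
    have : (finProdFinEquiv (finProdFinEquiv.symm p) : ℕ) = (p : ℕ) := by rw [Equiv.apply_symm_apply]
    have : (finProdFinEquiv (finProdFinEquiv.symm q) : ℕ) = (q : ℕ) := by rw [Equiv.apply_symm_apply]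
    simp only [Equiv.apply_symm_apply]
    exact hpq



lemma compC_triangularize (n : ℕ) (hn : 0 < n) (x : ℂ) :
    ∃ P T : Matrix (Fin n) (Fin n) ℂ, IsUnit P.det ∧
      (∀ i j : Fin n, i < j → T i j = 0) ∧
      (∀ i : Fin n, T i i = -(Complex.exp (2 * Real.pi * Complex.I / n) ^ ((i : ℕ) + 1)
        * x ^ (n : ℂ)⁻¹)) ∧
      compC n ((-1) ^ n * x) * P = P * T := by
  have hn' : (n : ℂ) ≠ 0 := Nat.cast_ne_zero.mpr hn.ne'
  set ω : ℂ := Complex.exp (2 * Real.pi * Complex.I / n) with hω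
  have hωn : ω ^ n = 1 := by
    rw [hω, ← Complex.exp_nat_mul]
    rw [show (n : ℂ) * (2 * Real.pi * Complex.I / n) = 2 * Real.pi * Complex.I by
      field_simp]
    exact Complex.exp_two_pi_mul_I
  have hωprim : IsPrimitiveRoot ω n := Complex.isPrimitiveRoot_exp n hn.ne'
  set a : ℂ := x ^ (n : ℂ)⁻¹ with ha
  have han : a ^ n = x := Complex.cpow_nat_inv_pow x hn.ne'
  by_cases hx : x = 0
  · -- a = 0, companion matrix is already lower triangular
    have ha0 : a = 0 := by
      rw [ha, hx]
      exact Complex.zero_cpow (by simpa using hn')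
    refine ⟨1, compC n ((-1) ^ n * x), by simp, ?_, ?_, by rw [mul_one, one_mul]⟩
    · intro i j hij
      have h1 : (i : ℕ) ≠ (j : ℕ) + 1 := by
        have := Fin.lt_def.mp hij; omega
      simp [compC, hx, h1]
    · intro i
      have h1 : (i : ℕ) ≠ (i : ℕ) + 1 := by omega
      simp [compC, hx, ha0, h1]
  · -- x ≠ 0 : explicit Vandermonde diagonalization
    have ha' : a ≠ 0 := fun h => hx (by rw [← han, h, zero_pow hn.ne'])
    set d : Fin n → ℂ := fun r => -(ω ^ ((r : ℕ) + 1) * a) with hd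
    have hdn : ∀ r : Fin n, d r ^ n = (-1) ^ n * x := by
      intro r
      have h1 : d r ^ n = (-1) ^ n * ((ω ^ ((r : ℕ) + 1)) ^ n * a ^ n) := by
        rw [hd]; ring
      rw [h1, pow_right_comm, hωn, one_pow, one_mul, han]
    have hdinj : Function.Injective d := by
      intro r s hrs
      have h1 : ω ^ ((r : ℕ) + 1) = ω ^ ((s : ℕ) + 1) := by
        have := hrs
        simp only [hd, neg_inj] at this
        exact mul_right_cancel₀ ha' this
      have hω0 : ω ≠ 0 := hωprim.ne_zero hn.ne'
      rw [pow_succ, pow_succ] at h1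
      have h2 : ω ^ (r : ℕ) = ω ^ (s : ℕ) := mul_right_cancel₀ hω0 h1
      exact Fin.ext (hωprim.pow_inj r.2 s.2 h2)
    set P : Matrix (Fin n) (Fin n) ℂ :=
      Matrix.of (fun i r => d r ^ (n - 1 - (i : ℕ))) with hP
    refine ⟨P, Matrix.diagonal d, ?_, ?_, ?_, ?_⟩
    · -- invertibility via Vandermonde
      have hPsub : P = fun i => (Matrix.vandermonde d)ᵀ ((Fin.revPerm : Equiv.Perm (Fin n)) i) := by
        ext i r
        simp only [hP, Matrix.of_apply, Matrix.transpose_apply, Matrix.vandermonde,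
          Fin.revPerm_apply, Matrix.of_apply]
        congr 1
        simp [Fin.rev]
        omega
      have hdet : P.det = ((Equiv.Perm.sign (Fin.revPerm : Equiv.Perm (Fin n)) : ℤ) : ℂ)
          * (Matrix.vandermonde d)ᵀ.det := by
        rw [hPsub]
        exact Matrix.det_permute (Fin.revPerm : Equiv.Perm (Fin n)) ((Matrix.vandermonde d)ᵀ)
      rw [hdet, Matrix.det_transpose]
      apply isUnit_iff_ne_zero.mpr
      apply mul_ne_zero
      · rcases Int.units_eq_one_or (Equiv.Perm.sign (Fin.revPerm : Equiv.Perm (Fin n))) with h | h <;>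
          rw [h] <;> norm_num
      · exact Matrix.det_vandermonde_ne_zero_iff.mpr hdinj
    · intro i j hij
      exact Matrix.diagonal_apply_ne d (ne_of_lt hij)
    · intro i
      rw [Matrix.diagonal_apply_eq]
    · -- compC * P = P * diagonal d
      ext i r
      rw [Matrix.mul_diagonal]
      rw [Matrix.mul_apply]
      by_cases hi : (i : ℕ) = 0
      · have hlast : ∀ k : Fin n, compC n ((-1) ^ n * x) i k = if (k : ℕ) = n - 1 then (-1) ^ n * x else 0 := by
          intro k
          simp [compC, hi]
        have hsum : ∑ k : Fin n, compC n ((-1) ^ n * x) i k * P k r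
            = (-1) ^ n * x * P ⟨n - 1, by omega⟩ r := by
          rw [Finset.sum_eq_single (⟨n - 1, by omega⟩ : Fin n)]
          · rw [hlast]; simp
          · intro k _ hk
            rw [hlast]
            have : (k : ℕ) ≠ n - 1 := fun h => hk (Fin.ext h)
            simp [this]
          · simp
        rw [hsum]
        have h1 : P (⟨n - 1, by omega⟩ : Fin n) r = 1 := by
          simp [hP]
        have h2 : P i r = d r ^ (n - 1) := by
          simp [hP, hi]
        rw [h1, h2, mul_one]
        have h3 : d r ^ (n - 1) * d r = d r ^ n := by
          rw [← pow_succ]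
          congr 1
          omega
        rw [h3, hdn r]
      · have hrow : ∀ k : Fin n, compC n ((-1) ^ n * x) i k = if (i : ℕ) = (k : ℕ) + 1 then 1 else 0 := by
          intro k
          simp [compC, hi]
        have hone : (0 : ℕ) < (i : ℕ) := Nat.pos_of_ne_zero hi
        have hsum : ∑ k : Fin n, compC n ((-1) ^ n * x) i k * P k r
            = P ⟨(i : ℕ) - 1, by omega⟩ r := by
          rw [Finset.sum_eq_single (⟨(i : ℕ) - 1, by omega⟩ : Fin n)]
          · rw [hrow]
            rw [if_pos (by simp; omega), one_mul]
          · intro k _ hk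
            rw [hrow]
            have : (i : ℕ) ≠ (k : ℕ) + 1 := by
              intro h
              apply hk
              apply Fin.ext
              simp
              omega
            simp [this]
          · simp
        rw [hsum]
        simp only [hP, Matrix.of_apply]
        rw [← pow_succ]
        congr 1
        omega


open Fin.NatCast Fin.CommRing in
lemma cyc_prod_eq (n : ℕ) (hn : 0 < n) (u w a b : ℂ) (hu : u ^ n = w ^ n) :
    ∏ r : Fin n, ∏ s : Fin n,
      (u + Complex.exp (2 * Real.pi * Complex.I / n) ^ ((r : ℕ) + 1) * a
         + Complex.exp (2 * Real.pi * Complex.I / n) ^ ((s : ℕ) + 1) * b)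
    = ∏ r : Fin n, ∏ s : Fin n,
      (w + Complex.exp (2 * Real.pi * Complex.I / n) ^ ((r : ℕ) + 1) * a
         + Complex.exp (2 * Real.pi * Complex.I / n) ^ ((s : ℕ) + 1) * b) := by
  have : NeZero n := ⟨hn.ne'⟩
  have hn' : (n : ℂ) ≠ 0 := Nat.cast_ne_zero.mpr hn.ne'
  set ω : ℂ := Complex.exp (2 * Real.pi * Complex.I / n) with hω
  have hωn : ω ^ n = 1 := by
    rw [hω, ← Complex.exp_nat_mul]
    rw [show (n : ℂ) * (2 * Real.pi * Complex.I / n) = 2 * Real.pi * Complex.I by field_simp]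
    exact Complex.exp_two_pi_mul_I
  set g : Fin n → ℂ := fun t => ω ^ (t : ℕ) with hg
  have hcast : ∀ m : ℕ, ω ^ m = g (m : Fin n) := by
    intro m
    rw [hg]
    simp only []
    rw [Fin.val_natCast, pow_eq_pow_mod m hωn]
  have hadd : ∀ s t : Fin n, g (s + t) = g s * g t := by
    intro s t
    rw [hg]
    simp only []
    rw [Fin.val_add, ← pow_eq_pow_mod _ hωn, pow_add]
  have hgn : ∀ t : Fin n, g t ^ n = 1 := by
    intro t
    rw [hg]
    simp only []
    rw [pow_right_comm, hωn, one_pow]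
  have hshift : ∀ (F : Fin n → ℂ) (t : Fin n), ∏ r : Fin n, F (t + r) = ∏ r : Fin n, F r := by
    intro F t
    exact Fintype.prod_equiv (Equiv.addLeft t) _ _ (fun r => rfl)
  -- find t0 with u = g t0 * w
  obtain ⟨t0, ht0⟩ : ∃ t0 : Fin n, u = g t0 * w := by
    by_cases hw : w = 0
    · refine ⟨0, ?_⟩
      have : u ^ n = 0 := by rw [hu, hw, zero_pow hn.ne']
      rw [pow_eq_zero_iff hn.ne'] at this
      rw [this, hw, mul_zero]
    · have hζ : (u / w) ^ n = 1 := by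
        rw [div_pow, hu, div_self (pow_ne_zero n hw)]
      obtain ⟨i, hi, hωi⟩ := (Complex.isPrimitiveRoot_exp n hn.ne').eq_pow_of_pow_eq_one hζ
      refine ⟨⟨i, hi⟩, ?_⟩
      rw [hg]
      simp only []
      rw [← hω] at hωi
      rw [hωi]
      field_simp
  -- rewrite powers as g values
  have hωpow : ∀ r : Fin n, ω ^ ((r : ℕ) + 1) = g (1 + r) := by
    intro r
    rw [hcast ((r : ℕ) + 1)]
    congr 1
    push_cast
    rw [add_comm]
  simp only [hωpow, ht0]
  -- reindex by t0
  have step1 : ∀ H : Fin n → Fin n → ℂ,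
      (∏ r : Fin n, ∏ s : Fin n, H r s) = ∏ r : Fin n, ∏ s : Fin n, H (t0 + r) (t0 + s) := by
    intro H
    rw [← hshift (fun r => ∏ s, H r s) t0]
    exact Finset.prod_congr rfl fun r _ => (hshift (fun s => H (t0 + r) s) t0).symm
  rw [step1 (fun r s => g t0 * w + g (1 + r) * a + g (1 + s) * b)]
  -- now factor g t0 out of each term
  have hterm : ∀ r s : Fin n,
      g t0 * w + g (1 + (t0 + r)) * a + g (1 + (t0 + s)) * b
        = g t0 * (w + g (1 + r) * a + g (1 + s) * b) := by
    intro r s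
    have h1 : (1 : Fin n) + (t0 + r) = t0 + (1 + r) := by ring
    have h2 : (1 : Fin n) + (t0 + s) = t0 + (1 + s) := by ring
    rw [h1, h2, hadd t0 (1 + r), hadd t0 (1 + s)]
    ring
  simp only [hterm]
  -- pull out the constant from inner products
  apply Finset.prod_congr rfl
  intro r _
  rw [Finset.prod_mul_distrib, Finset.prod_const, Finset.card_univ, Fintype.card_fin, hgn t0,
    one_mul]

theorem statement5 (n : ℕ) (hn : 0 < n) (x y w : ℂ) :
    pn n (w ^ n) x y
      = ((compC n ((-1) ^ n * x) ⊗ₖ (1 : Matrix (Fin n) (Fin n) ℂ)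
          + (1 : Matrix (Fin n) (Fin n) ℂ) ⊗ₖ compC n ((-1) ^ n * y)).charpoly).eval w := by
  have hn' : (n : ℂ) ≠ 0 := Nat.cast_ne_zero.mpr hn.ne'
  set ω : ℂ := Complex.exp (2 * Real.pi * Complex.I / n) with hω
  set a : ℂ := x ^ (n : ℂ)⁻¹ with ha
  set b : ℂ := y ^ (n : ℂ)⁻¹ with hb
  obtain ⟨P, T, hPdet, hTtri, hTdiag, hPT⟩ := compC_triangularize n hn x
  obtain ⟨Q, S, hQdet, hStri, hSdiag, hQS⟩ := compC_triangularize n hn y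
  set A := compC n ((-1) ^ n * x) with hA
  set B := compC n ((-1) ^ n * y) with hB
  set R : Matrix (Fin n × Fin n) (Fin n × Fin n) ℂ := P ⊗ₖ Q with hR
  have hRdet : IsUnit R.det := by
    rw [hR, Matrix.det_kronecker]
    exact (hPdet.pow _).mul (hQdet.pow _)
  have hRunit : IsUnit R := (Matrix.isUnit_iff_isUnit_det R).mpr hRdet
  have hRinv : R * R⁻¹ = 1 := Matrix.mul_nonsing_inv R hRdet
  have hcomm : (A ⊗ₖ (1 : Matrix (Fin n) (Fin n) ℂ)
      + (1 : Matrix (Fin n) (Fin n) ℂ) ⊗ₖ B) * R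
      = R * (T ⊗ₖ (1 : Matrix (Fin n) (Fin n) ℂ)
      + (1 : Matrix (Fin n) (Fin n) ℂ) ⊗ₖ S) := by
    rw [hR, Matrix.add_mul, Matrix.mul_add, ← Matrix.mul_kronecker_mul,
      ← Matrix.mul_kronecker_mul, ← Matrix.mul_kronecker_mul, ← Matrix.mul_kronecker_mul,
      one_mul, mul_one, one_mul, mul_one, hPT, hQS]
  rw [my_eval_charpoly]
  have key : w • (1 : Matrix (Fin n × Fin n) (Fin n × Fin n) ℂ)
      - (A ⊗ₖ (1 : Matrix (Fin n) (Fin n) ℂ) + (1 : Matrix (Fin n) (Fin n) ℂ) ⊗ₖ B)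
      = R * (w • (1 : Matrix (Fin n × Fin n) (Fin n × Fin n) ℂ)
          - (T ⊗ₖ (1 : Matrix (Fin n) (Fin n) ℂ) + (1 : Matrix (Fin n) (Fin n) ℂ) ⊗ₖ S)) * R⁻¹ := by
    rw [Matrix.mul_sub, Matrix.sub_mul]
    congr 1
    · rw [Matrix.mul_smul, mul_one, Matrix.smul_mul, hRinv]
    · rw [← hcomm, Matrix.mul_assoc, hRinv, Matrix.mul_one]
  rw [key, Matrix.det_conj hRunit, det_kron_sum T S hTtri hStri w]
  have hexp : ∀ m : ℕ, Complex.exp (2 * Real.pi * Complex.I * ((m : ℂ) + 1) / n)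
      = ω ^ (m + 1) := by
    intro m
    rw [hω, ← Complex.exp_nat_mul]
    congr 1
    push_cast
    ring
  have hLHS : pn n (w ^ n) x y = ∏ r : Fin n, ∏ s : Fin n,
      ((w ^ n) ^ (n : ℂ)⁻¹ + ω ^ ((r : ℕ) + 1) * a + ω ^ ((s : ℕ) + 1) * b) := by
    unfold pn
    apply Finset.prod_congr rfl
    intro r _
    apply Finset.prod_congr rfl
    intro s _
    rw [hexp, hexp, ha, hb]
  rw [hLHS]
  have hu : ((w ^ n) ^ (n : ℂ)⁻¹) ^ n = w ^ n := Complex.cpow_nat_inv_pow _ hn.ne'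
  rw [cyc_prod_eq n hn _ w a b hu]
  apply Finset.prod_congr rfl
  intro r _
  apply Finset.prod_congr rfl
  intro s _
  rw [hTdiag r, hSdiag s, ← hω, ← ha, ← hb]
  ring
end

section
/- For every positive integer n, the polynomial p_n(z; x, y) = ∏_{r,s=1}^{n}(z^{1/n} + ε^r x^{1/n} + ε^s y^{1/n}) is a homogeneous polynomial of degree n in the variables x, y, z with integer coefficients. -/
namespace Statement6Aux

open MvPolynomial Finset

variable {K : Type*} [Field K]

lemma prodL {n : ℕ} (hn : 0 < n) {ζ : K} (hζ : IsPrimitiveRoot ζ n) (g : K → K) :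
    ∏ r : Fin n, g (ζ ^ ((r : ℕ) + 1)) = ∏ ξ ∈ Polynomial.nthRootsFinset n (1 : K), g ξ := by
  haveI : NeZero n := ⟨hn.ne'⟩
  have hz : ζ ≠ 0 := hζ.ne_zero hn.ne'
  refine Finset.prod_bij (fun r _ => ζ ^ ((r : ℕ) + 1)) ?_ ?_ ?_ ?_
  · intro r _
    rw [Polynomial.mem_nthRootsFinset hn, ← pow_mul, mul_comm, pow_mul, hζ.pow_eq_one, one_pow]
  · intro r _ r' _ h
    have h' : ζ ^ ((r : ℕ) + 1) = ζ ^ ((r' : ℕ) + 1) := h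
    rw [pow_succ, pow_succ] at h'
    exact Fin.ext (hζ.pow_inj r.isLt r'.isLt (mul_right_cancel₀ hz h'))
  · intro ξ hξ
    rw [Polynomial.mem_nthRootsFinset hn] at hξ
    obtain ⟨i, hi, rfl⟩ := hζ.eq_pow_of_pow_eq_one hξ
    rcases Nat.eq_zero_or_pos i with rfl | hipos
    · refine ⟨⟨n - 1, by omega⟩, Finset.mem_univ _, ?_⟩
      show ζ ^ ((n - 1) + 1) = ζ ^ 0
      rw [Nat.sub_add_cancel hn, hζ.pow_eq_one, pow_zero]
    · refine ⟨⟨i - 1, by omega⟩, Finset.mem_univ _, ?_⟩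
      show ζ ^ ((i - 1) + 1) = ζ ^ i
      rw [Nat.sub_add_cancel hipos]
  · intros; rfl

lemma prod_nthRoots_mul {n : ℕ} (hn : 0 < n) {ζ : K} (hζ : ζ ∈ Polynomial.nthRootsFinset n (1 : K))
    (g : K → K) :
    ∏ ξ ∈ Polynomial.nthRootsFinset n (1 : K), g (ξ * ζ) = ∏ ξ ∈ Polynomial.nthRootsFinset n (1 : K), g ξ := by
  rw [Polynomial.mem_nthRootsFinset hn] at hζ
  have hz : ζ ≠ 0 := by rintro rfl; rw [zero_pow hn.ne'] at hζ; exact zero_ne_one hζ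
  refine Finset.prod_bij (fun ξ _ => ξ * ζ) ?_ ?_ ?_ ?_
  · intro ξ hξ
    rw [Polynomial.mem_nthRootsFinset hn] at hξ ⊢
    rw [mul_pow, hξ, hζ, one_mul]
  · intro a _ b _ h
    exact mul_right_cancel₀ hz h
  · intro b hb
    rw [Polynomial.mem_nthRootsFinset hn] at hb
    refine ⟨b * ζ⁻¹, ?_, by field_simp⟩
    rw [Polynomial.mem_nthRootsFinset hn, mul_pow, hb, inv_pow, hζ, inv_one, one_mul]
  · intros; rfl

lemma prod_two_prim {n : ℕ} (hn : 0 < n) {ζ η : K} (hζ : IsPrimitiveRoot ζ n)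
    (hη : IsPrimitiveRoot η n) (g : K → K) :
    ∏ r : Fin n, g (η ^ ((r : ℕ) + 1)) = ∏ r : Fin n, g (ζ ^ ((r : ℕ) + 1)) := by
  rw [prodL hn hη, prodL hn hζ]

lemma prod2_two_prim {n : ℕ} (hn : 0 < n) {ζ η : K} (hζ : IsPrimitiveRoot ζ n)
    (hη : IsPrimitiveRoot η n) (g : K → K → K) :
    ∏ r : Fin n, ∏ s : Fin n, g (η ^ ((r : ℕ) + 1)) (η ^ ((s : ℕ) + 1))
      = ∏ r : Fin n, ∏ s : Fin n, g (ζ ^ ((r : ℕ) + 1)) (ζ ^ ((s : ℕ) + 1)) := by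
  have h1 : ∀ t : K, ∏ s : Fin n, g t (η ^ ((s : ℕ) + 1))
      = ∏ s : Fin n, g t (ζ ^ ((s : ℕ) + 1)) := fun t => prod_two_prim hn hζ hη (g t)
  calc ∏ r : Fin n, ∏ s : Fin n, g (η ^ ((r : ℕ) + 1)) (η ^ ((s : ℕ) + 1))
      = ∏ r : Fin n, ∏ s : Fin n, g (η ^ ((r : ℕ) + 1)) (ζ ^ ((s : ℕ) + 1)) :=
        Finset.prod_congr rfl fun r _ => h1 _
    _ = ∏ r : Fin n, ∏ s : Fin n, g (ζ ^ ((r : ℕ) + 1)) (ζ ^ ((s : ℕ) + 1)) :=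
        prod_two_prim hn hζ hη (fun t => ∏ s : Fin n, g t (ζ ^ ((s : ℕ) + 1)))

lemma coeff_scale {R : Type*} [CommRing R] (c : Fin 3 → R) (p : MvPolynomial (Fin 3) R)
    (m : Fin 3 →₀ ℕ) :
    coeff m ((aeval fun i => C (c i) * X i) p) = (m.prod fun i k => c i ^ k) * coeff m p := by
  classical
  conv_lhs => rw [p.as_sum, map_sum]
  rw [coeff_sum]
  have key : ∀ d : Fin 3 →₀ ℕ, ∀ a : R, (aeval fun i => C (c i) * X i) (monomial d a)
      = monomial d ((d.prod fun i k => c i ^ k) * a) := by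
    intro d a
    rw [aeval_monomial]
    have h1 : (d.prod fun i k => ((C (c i) * X i : MvPolynomial (Fin 3) R)) ^ k)
        = C (d.prod fun i k => c i ^ k) * d.prod fun i k => (X i : MvPolynomial (Fin 3) R) ^ k := by
      rw [map_finsuppProd (C : R →+* MvPolynomial (Fin 3) R), ← Finsupp.prod_mul]
      exact Finsupp.prod_congr fun i _ => by rw [mul_pow, C_pow]
    rw [h1, monomial_eq, algebraMap_eq, C_mul]
    ring
  simp only [key, coeff_monomial]
  rw [Finset.sum_ite_eq' p.support m (fun d => (d.prod fun i k => c i ^ k) * coeff d p)]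
  split_ifs with h
  · rfl
  · rw [notMem_support_iff.mp h, mul_zero]

lemma degree_fin3 (f : Fin 3 →₀ ℕ) : f.degree = f 0 + f 1 + f 2 := by
  rw [Finsupp.degree_apply,
    Finset.sum_subset (Finset.subset_univ f.support)
      (fun i _ hi => Finsupp.notMem_support_iff.mp hi)]
  rw [Fin.sum_univ_three]

end Statement6Aux

set_option maxHeartbeats 2000000 in
set_option synthInstance.maxHeartbeats 400000 in
open MvPolynomial Finset Statement6Aux in
theorem statement6 (n : ℕ) (hn : 0 < n) :
    ∃ P : MvPolynomial (Fin 3) ℤ,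
      P.IsHomogeneous n ∧
      ∀ x y z : ℂ, MvPolynomial.eval₂ (Int.castRingHom ℂ) ![x, y, z] P = pn n z x y := by
  classical
  haveI : NeZero n := ⟨hn.ne'⟩
  set N : ℕ+ := ⟨n, hn⟩ with hNdef
  set L := CyclotomicField N ℚ with hLdef
  haveI : CharZero L := charZero_of_injective_algebraMap (algebraMap ℚ L).injective
  haveI : IsCyclotomicExtension {(N : ℕ)} ℚ L :=
    CyclotomicField.isCyclotomicExtension (N : ℕ) ℚ
  haveI := IsCyclotomicExtension.finiteDimensional {(N : ℕ)} ℚ L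
  haveI := IsCyclotomicExtension.isGalois {(N : ℕ)} ℚ L
  haveI : Algebra.IsAlgebraic ℚ L := Algebra.IsAlgebraic.of_finite ℚ L
  set ζ : L := IsCyclotomicExtension.zeta N ℚ L with hζdef
  have hζ : IsPrimitiveRoot ζ n := IsCyclotomicExtension.zeta_spec N ℚ L
  set F : MvPolynomial (Fin 3) L :=
    ∏ r : Fin n, ∏ s : Fin n,
      (X 2 + C (ζ ^ ((r : ℕ) + 1)) * X 0 + C (ζ ^ ((s : ℕ) + 1)) * X 1) with hF
  -- generic evaluation of F
  have hevalF : ∀ {K' : Type} [Field K'] (φ : L →+* K') (w : Fin 3 → K'),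
      eval₂ φ w F = ∏ r : Fin n, ∏ s : Fin n,
        (w 2 + φ ζ ^ ((r : ℕ) + 1) * w 0 + φ ζ ^ ((s : ℕ) + 1) * w 1) := by
    intro K' _ φ w
    rw [hF, show (eval₂ φ w) = ⇑(eval₂Hom φ w) from rfl, map_prod]
    refine Finset.prod_congr rfl fun r _ => ?_
    rw [map_prod]
    refine Finset.prod_congr rfl fun s _ => ?_
    simp [eval₂_add, eval₂_mul, map_pow]
  have hevalF' : ∀ (w : Fin 3 → L),
      eval w F = ∏ r : Fin n, ∏ s : Fin n,
        (w 2 + ζ ^ ((r : ℕ) + 1) * w 0 + ζ ^ ((s : ℕ) + 1) * w 1) := by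
    intro w
    have := hevalF (RingHom.id L) w
    simpa using this
  -- homogeneity of F
  have hFhom : F.IsHomogeneous (n * n) := by
    have hfac : ∀ (a b : L), IsHomogeneous
        (X 2 + C a * X 0 + C b * X 1 : MvPolynomial (Fin 3) L) 1 := fun a b =>
      ((isHomogeneous_X _ _).add ((isHomogeneous_X _ _).C_mul _)).add
        ((isHomogeneous_X _ _).C_mul _)
    have hinner : ∀ r : Fin n, IsHomogeneous
        (∏ s : Fin n, (X 2 + C (ζ ^ ((r : ℕ) + 1)) * X 0 + C (ζ ^ ((s : ℕ) + 1)) * X 1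
          : MvPolynomial (Fin 3) L)) n := by
      intro r
      have := IsHomogeneous.prod Finset.univ
        (fun s : Fin n => X 2 + C (ζ ^ ((r : ℕ) + 1)) * X 0 + C (ζ ^ ((s : ℕ) + 1)) * X 1)
        (fun _ => 1) (fun s _ => hfac _ _)
      simpa only [Finset.sum_const, smul_eq_mul, mul_one, Finset.card_univ,
        Fintype.card_fin] using this
    have := IsHomogeneous.prod Finset.univ
      (fun r : Fin n => ∏ s : Fin n,
        (X 2 + C (ζ ^ ((r : ℕ) + 1)) * X 0 + C (ζ ^ ((s : ℕ) + 1)) * X 1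
          : MvPolynomial (Fin 3) L))
      (fun _ => n) (fun r _ => hinner r)
    rw [hF]
    simpa only [Finset.sum_const, smul_eq_mul, Finset.card_univ, Fintype.card_fin] using this
  have hζroot : ζ ∈ Polynomial.nthRootsFinset n (1 : L) := by
    rw [Polynomial.mem_nthRootsFinset hn]; exact hζ.pow_eq_one
  -- invariance under scaling variable 0
  have hscale : ∀ i0 : Fin 3, i0 = 0 ∨ i0 = 1 →
      (aeval fun i => C (if i = i0 then ζ else 1) * X i) F = F := by
    intro i0 hi0
    apply MvPolynomial.funext
    intro x
    have hcomp : eval x ((aeval fun i => C (if i = i0 then ζ else 1) * X i) F)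
        = eval (fun i => (if i = i0 then ζ else 1) * x i) F := by
      rw [aeval_def, algebraMap_eq, eval₂_comp_left (eval x) C (fun i => C (if i = i0 then ζ else 1) * X i) F]
      have h1 : (eval x).comp (C : L →+* MvPolynomial (Fin 3) L) = RingHom.id L := by
        ext r; simp
      rw [h1]
      have h2 : (eval x ∘ fun i => C (if i = i0 then ζ else 1) * X i)
          = fun i => (if i = i0 then ζ else 1) * x i := by
        funext i; simp
      rw [h2]
      rfl
    rw [hcomp, hevalF', hevalF']
    rcases hi0 with rfl | rfl
    · -- scaling variable 0
      have t2 : (if (2 : Fin 3) = 0 then ζ else 1) = 1 := if_neg (by decide)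
      have t0 : (if (0 : Fin 3) = 0 then ζ else 1) = ζ := if_pos rfl
      have t1 : (if (1 : Fin 3) = 0 then ζ else 1) = 1 := if_neg (by decide)
      simp only [t0, t1, t2, if_true, one_mul]
      set G : L → L := fun t => ∏ s : Fin n, (x 2 + t * x 0 + ζ ^ ((s : ℕ) + 1) * x 1) with hG
      have lhs_eq : ∏ r : Fin n, ∏ s : Fin n,
          (x 2 + ζ ^ ((r : ℕ) + 1) * (ζ * x 0) + ζ ^ ((s : ℕ) + 1) * x 1)
          = ∏ r : Fin n, G (ζ ^ ((r : ℕ) + 1) * ζ) := by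
        refine Finset.prod_congr rfl fun r _ => ?_
        refine Finset.prod_congr rfl fun s _ => ?_
        show _ = x 2 + ζ ^ ((r : ℕ) + 1) * ζ * x 0 + ζ ^ ((s : ℕ) + 1) * x 1
        ring
      rw [lhs_eq]
      calc ∏ r : Fin n, G (ζ ^ ((r : ℕ) + 1) * ζ)
          = ∏ ξ ∈ Polynomial.nthRootsFinset n (1 : L), G (ξ * ζ) := prodL hn hζ (fun t => G (t * ζ))
        _ = ∏ ξ ∈ Polynomial.nthRootsFinset n (1 : L), G ξ := prod_nthRoots_mul hn hζroot G
        _ = ∏ r : Fin n, G (ζ ^ ((r : ℕ) + 1)) := (prodL hn hζ G).symm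
    · -- scaling variable 1
      have t2 : (if (2 : Fin 3) = 1 then ζ else 1) = 1 := if_neg (by decide)
      have t0 : (if (0 : Fin 3) = 1 then ζ else 1) = 1 := if_neg (by decide)
      have t1 : (if (1 : Fin 3) = 1 then ζ else 1) = ζ := if_pos rfl
      simp only [t0, t1, t2, if_true, one_mul]
      refine Finset.prod_congr rfl fun r _ => ?_
      set G : L → L := fun t => x 2 + ζ ^ ((r : ℕ) + 1) * x 0 + t * x 1 with hG
      have lhs_eq : ∏ s : Fin n, (x 2 + ζ ^ ((r : ℕ) + 1) * x 0 + ζ ^ ((s : ℕ) + 1) * (ζ * x 1))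
          = ∏ s : Fin n, G (ζ ^ ((s : ℕ) + 1) * ζ) := by
        refine Finset.prod_congr rfl fun s _ => ?_
        show _ = x 2 + ζ ^ ((r : ℕ) + 1) * x 0 + ζ ^ ((s : ℕ) + 1) * ζ * x 1
        ring
      rw [lhs_eq]
      calc ∏ s : Fin n, G (ζ ^ ((s : ℕ) + 1) * ζ)
          = ∏ ξ ∈ Polynomial.nthRootsFinset n (1 : L), G (ξ * ζ) := prodL hn hζ (fun t => G (t * ζ))
        _ = ∏ ξ ∈ Polynomial.nthRootsFinset n (1 : L), G ξ := prod_nthRoots_mul hn hζroot G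
        _ = ∏ s : Fin n, G (ζ ^ ((s : ℕ) + 1)) := (prodL hn hζ G).symm
  -- divisibility of exponents
  have hdvd : ∀ m ∈ F.support, ∀ i0 : Fin 3, i0 = 0 ∨ i0 = 1 → n ∣ m i0 := by
    intro m hm i0 hi0
    have h1 := coeff_scale (fun i => if i = i0 then ζ else 1) F m
    rw [hscale i0 hi0] at h1
    have hw : (m.prod fun i k => (if i = i0 then ζ else 1) ^ k) = ζ ^ m i0 := by
      rw [Finsupp.prod]
      have : ∀ i ∈ m.support, (if i = i0 then ζ else 1) ^ m i
          = if i = i0 then ζ ^ m i else 1 := by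
        intro i _; split_ifs <;> simp
      rw [Finset.prod_congr rfl this, Finset.prod_ite_eq' m.support i0 (fun i => ζ ^ m i)]
      split_ifs with h
      · rfl
      · rw [Finsupp.notMem_support_iff.mp h, pow_zero]
    rw [hw] at h1
    have hc : coeff m F ≠ 0 := mem_support_iff.mp hm
    have hone : ζ ^ m i0 = 1 := by
      have := h1.symm
      nth_rewrite 2 [show coeff m F = 1 * coeff m F by rw [one_mul]] at this
      exact mul_right_cancel₀ hc this
    exact (hζ.pow_eq_one_iff_dvd _).mp hone
  have hdeg3 : ∀ m ∈ F.support, m 0 + m 1 + m 2 = n * n := by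
    intro m hm
    have h1 : Finsupp.weight 1 m = n * n := hFhom (mem_support_iff.mp hm)
    have h2 : m.degree = n * n := by rw [Finsupp.degree_eq_weight_one]; exact h1
    rw [← degree_fin3 m]; exact h2
  have hdvd2 : ∀ m ∈ F.support, n ∣ m 2 := by
    intro m hm
    have hsum : n ∣ m 0 + m 1 + m 2 := by rw [hdeg3 m hm]; exact Dvd.intro n rfl
    have h2 : m 2 = m 0 + m 1 + m 2 - m 0 - m 1 := by omega
    rw [h2]
    exact Nat.dvd_sub (Nat.dvd_sub hsum (hdvd m hm 0 (Or.inl rfl))) (hdvd m hm 1 (Or.inr rfl))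
  -- rationality of coefficients
  have hrat : ∀ m : Fin 3 →₀ ℕ, ∃ q : ℚ, algebraMap ℚ L q = coeff m F := by
    intro m
    have hfix : ∀ σ : L ≃ₐ[ℚ] L, σ (coeff m F) = coeff m F := by
      intro σ
      have hη : IsPrimitiveRoot (σ ζ) n := hζ.map_of_injective (f := σ.toAlgHom) σ.injective
      have hmap : MvPolynomial.map (σ.toAlgHom.toRingHom) F = F := by
        apply MvPolynomial.funext
        intro x
        rw [eval_map]
        rw [hevalF σ.toAlgHom.toRingHom x]
        rw [show eval x F = eval₂ (RingHom.id L) x F from rfl, hevalF (RingHom.id L) x]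
        simp only [RingHom.id_apply]
        exact prod2_two_prim hn hζ hη (fun t u => x 2 + t * x 0 + u * x 1)
      have := coeff_map σ.toAlgHom.toRingHom F m
      rw [hmap] at this
      exact this.symm
    have hbot : coeff m F ∈ (⊥ : IntermediateField ℚ L) := by
      rw [← IsGalois.fixedField_fixingSubgroup (⊥ : IntermediateField ℚ L)]
      exact fun σ => hfix σ.1
    exact IntermediateField.mem_bot.mp hbot
  -- coefficients lie in adjoin ℤ {ζ}
  have hζS : ζ ∈ Algebra.adjoin ℤ ({ζ} : Set L) := Algebra.self_mem_adjoin_singleton ℤ ζ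
  have hmemS : ∀ m : Fin 3 →₀ ℕ, coeff m F ∈ Algebra.adjoin ℤ ({ζ} : Set L) := by
    intro m
    set S₀ := Algebra.adjoin ℤ ({ζ} : Set L)
    set ζ' : S₀ := ⟨ζ, hζS⟩ with hζ'
    set F' : MvPolynomial (Fin 3) S₀ :=
      ∏ r : Fin n, ∏ s : Fin n,
        (X 2 + C (ζ' ^ ((r : ℕ) + 1)) * X 0 + C (ζ' ^ ((s : ℕ) + 1)) * X 1) with hF'
    have hmap : MvPolynomial.map (algebraMap S₀ L) F' = F := by
      rw [hF', hF, show ⇑(MvPolynomial.map (algebraMap S₀ L)) = ⇑(MvPolynomial.map (algebraMap S₀ L)) from rfl]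
      rw [map_prod]
      refine Finset.prod_congr rfl fun r _ => ?_
      rw [map_prod]
      refine Finset.prod_congr rfl fun s _ => ?_
      simp only [map_add, map_mul, MvPolynomial.map_C, MvPolynomial.map_X, map_pow]
      norm_cast
    rw [← hmap, coeff_map]
    exact (coeff m F').2
  -- coefficients are integers
  have hζint : IsIntegral ℤ ζ := by
    refine ⟨Polynomial.X ^ n - 1, Polynomial.monic_X_pow_sub_C 1 hn.ne', ?_⟩
    simp [hζ.pow_eq_one]
  have hint : ∀ m : Fin 3 →₀ ℕ, ∃ zi : ℤ, algebraMap ℤ L zi = coeff m F := by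
    intro m
    have hintc : IsIntegral ℤ (coeff m F) := adjoin_le_integralClosure hζint (hmemS m)
    obtain ⟨q, hq⟩ := hrat m
    have hqint : IsIntegral ℤ q := by
      rw [← isIntegral_algebraMap_iff (algebraMap ℚ L).injective, hq]
      exact hintc
    obtain ⟨zi, hzi⟩ := IsIntegrallyClosed.isIntegral_iff.mp hqint
    refine ⟨zi, ?_⟩
    rw [IsScalarTower.algebraMap_apply ℤ ℚ L, hzi, hq]
  choose zf hzf using hint
  -- construct P
  set D : (Fin 3 →₀ ℕ) → (Fin 3 →₀ ℕ) :=
    fun m => Finsupp.mapRange (· / n) (Nat.zero_div n) m with hD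
  set P : MvPolynomial (Fin 3) ℤ := ∑ m ∈ F.support, monomial (D m) (zf m) with hP
  have hDdvd : ∀ m ∈ F.support, ∀ i : Fin 3, n * (D m i) = m i := by
    intro m hm i
    have : n ∣ m i := by
      fin_cases i
      · exact hdvd m hm 0 (Or.inl rfl)
      · exact hdvd m hm 1 (Or.inr rfl)
      · exact hdvd2 m hm
    rw [hD]
    simp only [Finsupp.mapRange_apply]
    exact Nat.mul_div_cancel' this
  refine ⟨P, ?_, ?_⟩
  · -- homogeneity
    rw [hP]
    refine IsHomogeneous.sum _ _ _ fun m hm => isHomogeneous_monomial _ ?_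
    have h0 := hDdvd m hm 0
    have h1 := hDdvd m hm 1
    have h2 := hDdvd m hm 2
    have h3 := hdeg3 m hm
    rw [degree_fin3]
    have : n * (D m 0 + D m 1 + D m 2) = n * n := by
      rw [Nat.mul_add, Nat.mul_add, h0, h1, h2]; exact h3
    exact Nat.eq_of_mul_eq_mul_left hn this
  · -- evaluation
    intro x y z
    set w : Fin 3 → ℂ := ![x ^ (n : ℂ)⁻¹, y ^ (n : ℂ)⁻¹, z ^ (n : ℂ)⁻¹] with hw
    obtain ⟨ψ'⟩ : Nonempty (L →ₐ[ℚ] ℂ) := ⟨IsAlgClosed.lift⟩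
    set ψ : L →+* ℂ := ψ'.toRingHom with hψ
    have hψζ : IsPrimitiveRoot (ψ ζ) n := hζ.map_of_injective ψ.injective
    have hε : IsPrimitiveRoot (Complex.exp (2 * Real.pi * Complex.I / n)) n :=
      Complex.isPrimitiveRoot_exp n hn.ne'
    have hpn : pn n z x y = eval₂ ψ w F := by
      rw [hevalF ψ w, pn]
      have hexp : ∀ k : ℕ, Complex.exp (2 * Real.pi * Complex.I * ((k : ℂ) + 1) / n)
          = Complex.exp (2 * Real.pi * Complex.I / n) ^ (k + 1) := by
        intro k
        rw [← Complex.exp_nat_mul]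
        congr 1
        push_cast
        ring
      simp only [hexp]
      have := prod2_two_prim hn hψζ hε
        (fun t u => w 2 + t * w 0 + u * w 1)
      rw [← this]
      refine Finset.prod_congr rfl fun r _ => ?_
      refine Finset.prod_congr rfl fun s _ => ?_
      rw [hw]
      simp [Matrix.cons_val_zero, Matrix.cons_val_one]
    rw [hpn]
    -- both sides as sums over F.support
    conv_rhs => rw [F.as_sum]
    rw [hP, show (eval₂ (Int.castRingHom ℂ) ![x, y, z]) = ⇑(eval₂Hom (Int.castRingHom ℂ) ![x, y, z]) from rfl,
      show (eval₂ ψ w) = ⇑(eval₂Hom ψ w) from rfl, map_sum, map_sum]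
    refine Finset.sum_congr rfl fun m hm => ?_
    rw [show (eval₂Hom (Int.castRingHom ℂ) ![x, y, z]) (monomial (D m) (zf m))
        = eval₂ (Int.castRingHom ℂ) ![x, y, z] (monomial (D m) (zf m)) from rfl,
      show (eval₂Hom ψ w) (monomial m (coeff m F)) = eval₂ ψ w (monomial m (coeff m F)) from rfl,
      eval₂_monomial, eval₂_monomial]
    congr 1
    · rw [← hzf m]
      simp [algebraMap_int_eq]
    · rw [Finsupp.prod_fintype _ _ (fun i => pow_zero _),
        Finsupp.prod_fintype _ _ (fun i => pow_zero _)]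
      refine Finset.prod_congr rfl fun i _ => ?_
      have hwn : w i ^ n = ![x, y, z] i := by
        fin_cases i <;> simp [hw, Complex.cpow_nat_inv_pow _ hn.ne']
      rw [← hwn, ← pow_mul, hDdvd m hm i]
end

section
/- For every positive integer n and complex numbers x, y, w, one has p_n(wⁿ; x, y) = det(Aⁿ + (−1)^{n+1}x·I_n), where A = w·I_n − C and C is the Frobenius companion matrix of the polynomial tⁿ − y. -/
open Matrix

section Aux

open Finset Polynomial

lemma prod_shift_one' {M : Type*} [CommMonoidWithZero M] [IsCancelMulZero M] {n : ℕ} (hn : 0 < n)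
    (g : ℕ → M) (hg : g n = g 0) :
    ∏ r ∈ Finset.range n, g (r + 1) = ∏ r ∈ Finset.range n, g r := by
  by_cases h0 : g 0 = 0
  · rw [Finset.prod_eq_zero (i := n - 1) (Finset.mem_range.2 (by omega)) (by
      rw [Nat.sub_add_cancel hn, hg, h0]),
      Finset.prod_eq_zero (i := 0) (Finset.mem_range.2 hn) h0]
  · have h1 := (Finset.prod_range_succ' g n).symm.trans (Finset.prod_range_succ g n)
    rw [hg] at h1
    exact mul_right_cancel₀ h0 h1

lemma prod_pow_shift' {M : Type*} [CommMonoidWithZero M] [IsCancelMulZero M] {n : ℕ} (hn : 0 < n)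
    {ζ : M} (hζ : ζ ^ n = 1) (f : M → M) (k : ℕ) :
    ∏ r ∈ Finset.range n, f (ζ ^ (r + k)) = ∏ r ∈ Finset.range n, f (ζ ^ r) := by
  induction k with
  | zero => simp
  | succ k ih =>
    have h1 := prod_shift_one' hn (fun r => f (ζ ^ (r + k)))
      (by simp only [pow_add, hζ, zero_add, one_mul])
    calc ∏ r ∈ Finset.range n, f (ζ ^ (r + (k + 1)))
        = ∏ r ∈ Finset.range n, f (ζ ^ (r + 1 + k)) := by
          refine Finset.prod_congr rfl fun r _ => by ring_nf
      _ = ∏ r ∈ Finset.range n, f (ζ ^ (r + k)) := h1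
      _ = _ := ih

lemma prodA' {n : ℕ} (hn : 0 < n) {ζ : ℂ} (hζ : IsPrimitiveRoot ζ n) (a c : ℂ) :
    ∏ r ∈ Finset.range n, (a + ζ ^ r * c) = a ^ n + (-1) ^ (n + 1) * c ^ n := by
  have h := congrArg (Polynomial.eval a) (X_pow_sub_C_eq_prod hζ hn (rfl : (-c) ^ n = (-c) ^ n))
  simp only [eval_sub, eval_pow, eval_X, eval_C, eval_prod, eval_mul, eval_add] at h
  calc ∏ r ∈ Finset.range n, (a + ζ ^ r * c)
      = ∏ r ∈ Finset.range n, (a - ζ ^ r * (-c)) := by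
        refine Finset.prod_congr rfl fun r _ => by ring
    _ = a ^ n - (-c) ^ n := h.symm
    _ = a ^ n + (-1) ^ (n + 1) * c ^ n := by
        rw [neg_pow, pow_succ]; ring

lemma prodApoly' {n : ℕ} (hn : 0 < n) {ζ : ℂ} (hζ : IsPrimitiveRoot ζ n) (c : ℂ) :
    ∏ r ∈ Finset.range n, (X + C (ζ ^ (r + 1) * c)) = X ^ n + C ((-1) ^ (n + 1) * c ^ n) := by
  have hshift := prod_pow_shift' (M := Polynomial ℂ) hn
    (ζ := C ζ) (by rw [← _root_.map_pow, hζ.pow_eq_one, _root_.map_one])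
    (fun p => X + p * C c) 1
  have h2 : ∀ m : ℕ, X + (C ζ) ^ m * C c = X + C (ζ ^ m * c) := by
    intro m; rw [← _root_.map_pow, ← _root_.map_mul]
  calc ∏ r ∈ Finset.range n, (X + C (ζ ^ (r + 1) * c))
      = ∏ r ∈ Finset.range n, (X + (C ζ) ^ (r + 1) * C c) := by
        exact Finset.prod_congr rfl fun r _ => (h2 _).symm
    _ = ∏ r ∈ Finset.range n, (X + (C ζ) ^ r * C c) := hshift
    _ = ∏ r ∈ Finset.range n, (X - C (ζ ^ r * -c)) := by
        refine Finset.prod_congr rfl fun r _ => by rw [h2]; rw [mul_neg, _root_.map_neg, sub_neg_eq_add]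
    _ = X ^ n - C ((-c) ^ n) := (X_pow_sub_C_eq_prod hζ hn rfl).symm
    _ = X ^ n + C ((-1) ^ (n + 1) * c ^ n) := by
        rw [neg_pow, pow_succ]; rw [show ((-1:ℂ)^n * c^n) = -((-1)^n * -1 * c^n) by ring, _root_.map_neg, sub_neg_eq_add]

lemma detC' : ∀ {n : ℕ}, 0 < n → ∀ (u c : ℂ),
    Matrix.det (u • (1 : Matrix (Fin n) (Fin n) ℂ) - compC n c) = u ^ n - c := by
  intro n hn u c
  match n, hn with
  | 1, _ =>
    rw [Matrix.det_fin_one]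
    simp [compC, Matrix.one_apply, Matrix.sub_apply]
  | (m+2), _ =>
    set N := u • (1 : Matrix (Fin (m+2)) (Fin (m+2)) ℂ) - compC (m+2) c with hN
    have hEntry : ∀ i j : Fin (m+2), N i j =
        (if (i:ℕ) = (j:ℕ) then u else 0) -
          (if (i:ℕ) = 0 ∧ (j:ℕ) = m + 1 then c
            else if (i:ℕ) = (j:ℕ) + 1 then 1 else 0) := by
      intro i j
      simp only [hN, compC, Matrix.sub_apply, Matrix.smul_apply, Matrix.one_apply,
        smul_eq_mul, mul_ite, mul_one, mul_zero, Fin.ext_iff, Matrix.of_apply]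
      simp
    have hcs : ∀ k : Fin (m+1), ((Fin.castSucc k : Fin (m+2)) : ℕ) = (k : ℕ) := fun k => rfl
    have hsc : ∀ k : Fin (m+1), ((Fin.succ k : Fin (m+2)) : ℕ) = (k : ℕ) + 1 := fun k => rfl
    have hminor0 :
        (N.submatrix (Fin.succAbove 0) (Fin.succAbove (Fin.last (m+1)))).det
          = (-1 : ℂ) ^ (m+1) := by
      rw [Fin.succAbove_last, Fin.succAbove_zero]
      rw [Matrix.det_of_upperTriangular (by
        intro k l hkl
        have h1 : (l : ℕ) < (k : ℕ) := hkl
        rw [Matrix.submatrix_apply, hEntry]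
        simp only [hcs, hsc]
        rw [if_neg (by omega), if_neg (by omega), if_neg (by omega)]
        ring)]
      rw [Finset.prod_congr rfl (fun k _ => ?_), Finset.prod_const, Finset.card_univ,
        Fintype.card_fin]
      rw [Matrix.submatrix_apply, hEntry]
      simp only [hcs, hsc]
      rw [if_neg (by omega), if_neg (by omega)]
      norm_num
    have hminorL :
        (N.submatrix (Fin.succAbove (Fin.last (m+1))) (Fin.succAbove (Fin.last (m+1)))).det
          = u ^ (m+1) := by
      rw [Fin.succAbove_last]
      rw [Matrix.det_of_lowerTriangular _ (by
        intro k l hkl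
        have h1 : (k : ℕ) < (l : ℕ) := hkl
        rw [Matrix.submatrix_apply, hEntry]
        simp only [hcs, hsc]
        rw [if_neg (by omega), if_neg (by omega), if_neg (by omega)]
        ring)]
      rw [Finset.prod_congr rfl (fun k _ => ?_), Finset.prod_const, Finset.card_univ,
        Fintype.card_fin]
      rw [Matrix.submatrix_apply, hEntry]
      simp only [hcs, hsc]
      have h3 : ¬((k:ℕ) = 0 ∧ (k:ℕ) = m+1) := by omega
      have h4 : ¬((k:ℕ) = (k:ℕ)+1) := by omega
      simp only [h3, h4, if_false, if_true]
      ring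
    have hlastv : ((Fin.last (m+1) : Fin (m+2)) : ℕ) = m + 1 := rfl
    have h0v : ((0 : Fin (m+2)) : ℕ) = 0 := rfl
    have hN0 : N 0 (Fin.last (m+1)) = -c := by
      rw [hEntry, h0v, hlastv, if_neg (by omega), if_pos ⟨rfl, rfl⟩]
      ring
    have hNL : N (Fin.last (m+1)) (Fin.last (m+1)) = u := by
      rw [hEntry, hlastv, if_pos rfl, if_neg (by omega), if_neg (by omega)]
      ring
    rw [show N.det = ∑ i : Fin (m+2),
        (-1 : ℂ) ^ ((i : ℕ) + ((Fin.last (m+1) : Fin (m+2)) : ℕ)) * N i (Fin.last (m+1)) *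
          (N.submatrix i.succAbove (Fin.last (m+1)).succAbove).det from
      Matrix.det_succ_column N (Fin.last (m+1)), Fin.sum_univ_succ, Fin.sum_univ_castSucc]
    have hmid : ∑ i : Fin m,
        (-1 : ℂ) ^ (((Fin.succ (Fin.castSucc i) : Fin (m+2)) : ℕ) + ((Fin.last (m+1) : Fin (m+2)) : ℕ)) *
          N (Fin.succ (Fin.castSucc i)) (Fin.last (m+1)) *
          (N.submatrix (Fin.succ (Fin.castSucc i)).succAbove (Fin.last (m+1)).succAbove).det = 0 := by
      refine Finset.sum_eq_zero fun i _ => ?_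
      have hiv : ((Fin.succ (Fin.castSucc i) : Fin (m+2)) : ℕ) = (i : ℕ) + 1 := rfl
      have hz : N (Fin.succ (Fin.castSucc i)) (Fin.last (m+1)) = 0 := by
        rw [hEntry, hiv, hlastv, if_neg (by omega), if_neg (by omega), if_neg (by omega)]
        ring
      rw [hz]
      ring
    rw [hmid]
    have hsl : Fin.succ (Fin.last m) = Fin.last (m+1) := by
      ext; rfl
    rw [hsl, hN0, hNL, hminor0, hminorL, h0v, hlastv]
    have he : ((-1 : ℂ)) ^ ((m+1) + (m+1)) = 1 := Even.neg_one_pow ⟨m+1, rfl⟩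
    rw [zero_add, zero_add]
    calc (-1 : ℂ) ^ (m+1) * -c * (-1) ^ (m+1) + (-1) ^ ((m+1) + (m+1)) * u * u ^ (m+1)
        = ((-1 : ℂ)) ^ ((m+1) + (m+1)) * -c + ((-1 : ℂ)) ^ ((m+1) + (m+1)) * (u * u ^ (m+1)) := by
          rw [pow_add]; ring
      _ = u ^ (m+2) - c := by rw [he, pow_succ]; ring

end Aux

theorem statement7 (n : ℕ) (hn : 0 < n) (x y w : ℂ) :
    pn n (w ^ n) x y
      = Matrix.det ((w • (1 : Matrix (Fin n) (Fin n) ℂ) - compC n ((-1) ^ n * y)) ^ n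
          + ((-1) ^ (n + 1) * x) • (1 : Matrix (Fin n) (Fin n) ℂ)) := by
  classical
  have hn' : (n : ℂ) ≠ 0 := Nat.cast_ne_zero.2 hn.ne'
  set ζ : ℂ := Complex.exp (2 * Real.pi * Complex.I / n) with hζdef
  have hζ : IsPrimitiveRoot ζ n := Complex.isPrimitiveRoot_exp n hn.ne'
  have hζn : ζ ^ n = 1 := hζ.pow_eq_one
  set b : ℂ := x ^ (n : ℂ)⁻¹ with hbdef
  set d : ℂ := y ^ (n : ℂ)⁻¹ with hddef
  set u : ℂ := (w ^ n) ^ (n : ℂ)⁻¹ with hudef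
  have hb : b ^ n = x := Complex.cpow_nat_inv_pow x hn.ne'
  have hd : d ^ n = y := Complex.cpow_nat_inv_pow y hn.ne'
  have hu : u ^ n = w ^ n := Complex.cpow_nat_inv_pow _ hn.ne'
  have hexp : ∀ m : ℕ, Complex.exp (2 * Real.pi * Complex.I * ((m : ℂ) + 1) / n) = ζ ^ (m + 1) := by
    intro m
    rw [hζdef, ← Complex.exp_nat_mul]
    congr 1
    push_cast
    ring
  set e : ℂ := (-1) ^ (n + 1) * y with hedef
  -- LHS
  have hLHS : pn n (w ^ n) x y
      = ∏ r ∈ Finset.range n, ((u + ζ ^ (r + 1) * b) ^ n + e) := by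
    rw [pn, ← Finset.prod_range fun r =>
      ∏ s : Fin n, ((w^n) ^ (n:ℂ)⁻¹
        + Complex.exp (2 * Real.pi * Complex.I * ((r : ℂ) + 1) / n) * x ^ (n : ℂ)⁻¹
        + Complex.exp (2 * Real.pi * Complex.I * ((s : ℕ) + 1) / n) * y ^ (n : ℂ)⁻¹)]
    refine Finset.prod_congr rfl fun r _ => ?_
    rw [← Finset.prod_range fun s => (w^n) ^ (n:ℂ)⁻¹
        + Complex.exp (2 * Real.pi * Complex.I * ((r : ℂ) + 1) / n) * x ^ (n : ℂ)⁻¹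
        + Complex.exp (2 * Real.pi * Complex.I * ((s : ℂ) + 1) / n) * y ^ (n : ℂ)⁻¹]
    have : ∀ s ∈ Finset.range n, (w^n) ^ (n:ℂ)⁻¹
        + Complex.exp (2 * Real.pi * Complex.I * ((r : ℂ) + 1) / n) * x ^ (n : ℂ)⁻¹
        + Complex.exp (2 * Real.pi * Complex.I * ((s : ℂ) + 1) / n) * y ^ (n : ℂ)⁻¹
        = (u + ζ ^ (r + 1) * b) + ζ ^ (s + 1) * d := by
      intro s _
      rw [hexp, hexp]
    rw [Finset.prod_congr rfl this]
    have hshift := prod_pow_shift' hn hζn (fun t => (u + ζ ^ (r + 1) * b) + t * d) 1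
    rw [hshift, prodA' hn hζ, hd]
  -- RHS
  set c : ℂ := (-1) ^ n * y with hcdef
  set A : Matrix (Fin n) (Fin n) ℂ := w • 1 - compC n c with hAdef
  have hRHS : Matrix.det (A ^ n + ((-1) ^ (n + 1) * x) • (1 : Matrix (Fin n) (Fin n) ℂ))
      = ∏ r ∈ Finset.range n, ((w + ζ ^ (r + 1) * b) ^ n + e) := by
    have hq := prodApoly' hn hζ b
    rw [hb] at hq
    have haq : A ^ n + ((-1) ^ (n + 1) * x) • (1 : Matrix (Fin n) (Fin n) ℂ)
        = Polynomial.aeval A (∏ r ∈ Finset.range n, (Polynomial.X + Polynomial.C (ζ ^ (r + 1) * b))) := by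
      rw [hq, _root_.map_add, _root_.map_pow, Polynomial.aeval_X, Polynomial.aeval_C,
        Algebra.algebraMap_eq_smul_one]
    rw [haq]
    let φ : Polynomial ℂ →* ℂ :=
      Matrix.detMonoidHom.comp ((Polynomial.aeval A).toRingHom.toMonoidHom)
    have hφ : ∀ p : Polynomial ℂ, φ p = Matrix.det (Polynomial.aeval A p) := fun p => rfl
    rw [← hφ, map_prod]
    refine Finset.prod_congr rfl fun r _ => ?_
    rw [hφ]
    have h1 : Polynomial.aeval A (Polynomial.X + Polynomial.C (ζ ^ (r + 1) * b))
        = (w + ζ ^ (r + 1) * b) • 1 - compC n c := by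
      rw [_root_.map_add, Polynomial.aeval_X, Polynomial.aeval_C,
        Algebra.algebraMap_eq_smul_one, hAdef, add_smul]
      abel
    rw [h1, detC' hn]
    rw [hcdef, hedef, pow_succ]
    ring
  rw [hLHS, hRHS]
  -- reconcile u with w
  obtain ⟨k, hkn, hk⟩ : ∃ k, k ≤ n ∧ u = ζ ^ k * w := by
    by_cases hw : w = 0
    · refine ⟨0, Nat.zero_le n, ?_⟩
      rw [hudef, hw, zero_pow hn.ne', Complex.zero_cpow (inv_ne_zero hn')]
      ring
    · have h1 : (u / w) ^ n = 1 := by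
        rw [div_pow, hu, div_self (pow_ne_zero n hw)]
      haveI : NeZero n := ⟨hn.ne'⟩
      obtain ⟨i, hi, hiu⟩ := hζ.eq_pow_of_pow_eq_one h1
      exact ⟨i, hi.le, by rw [hiu, div_mul_cancel₀ _ hw]⟩
  have hterm : ∀ r : ℕ, (u + ζ ^ (r + 1) * b) ^ n = (w + ζ ^ (r + 1 + (n - k)) * b) ^ n := by
    intro r
    have h2 : ζ ^ k * (w + ζ ^ (r + 1 + (n - k)) * b) = u + ζ ^ (r + 1) * b := by
      have h3 : k + (r + 1 + (n - k)) = (r + 1) + n := by omega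
      calc ζ ^ k * (w + ζ ^ (r + 1 + (n - k)) * b)
          = ζ ^ k * w + ζ ^ (k + (r + 1 + (n - k))) * b := by rw [pow_add]; ring
        _ = ζ ^ k * w + ζ ^ (r + 1) * ζ ^ n * b := by rw [h3, pow_add]
        _ = u + ζ ^ (r + 1) * b := by rw [hζn, hk]; ring
    rw [← h2, mul_pow, ← pow_mul, mul_comm k n, pow_mul, hζn, one_pow, one_mul]
  calc ∏ r ∈ Finset.range n, ((u + ζ ^ (r + 1) * b) ^ n + e)
      = ∏ r ∈ Finset.range n, ((w + ζ ^ (r + (1 + (n - k))) * b) ^ n + e) := by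
        refine Finset.prod_congr rfl fun r _ => ?_
        rw [hterm, add_assoc]
    _ = ∏ r ∈ Finset.range n, ((w + ζ ^ r * b) ^ n + e) :=
        prod_pow_shift' hn hζn (fun t => (w + t * b) ^ n + e) (1 + (n - k))
    _ = ∏ r ∈ Finset.range n, ((w + ζ ^ (r + 1) * b) ^ n + e) :=
        (prod_pow_shift' hn hζn (fun t => (w + t * b) ^ n + e) 1).symm
end

section
/- For every positive integer n and complex numbers x, y, w with wⁿ = z, the polynomial p_n(z; x, y) equals the determinant of the n×n y-circulant matrix Circ_y(wⁿ + (−1)^{n+1}x + y, C(n,1)w, C(n,2)w², …, C(n,n−1)w^{n−1}), whose (i,j) entry is binom(n, j−i)·w^{j−i}·y when j > i (for the off-diagonal part above the diagonal multiplied by y), binom(n, n+j−i)·w^{n+j−i} when j < i, and wⁿ + (−1)^{n+1}x + y on the diagonal. -/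
open Matrix

open Finset


noncomputable def eps (n : ℕ) : ℂ := Complex.exp (2 * Real.pi * Complex.I / n)

lemma eps_prim {n : ℕ} (hn : 0 < n) : IsPrimitiveRoot (eps n) n :=
  Complex.isPrimitiveRoot_exp n hn.ne'

lemma eps_pow_n {n : ℕ} (hn : 0 < n) : eps n ^ n = 1 := (eps_prim hn).pow_eq_one

lemma eps_pow_mod {n : ℕ} (hn : 0 < n) (a : ℕ) : eps n ^ (a % n) = eps n ^ a :=
  (pow_eq_pow_mod a (eps_pow_n hn)).symm

noncomputable def chi (n : ℕ) (b : Fin n) : ℂ := eps n ^ (b : ℕ)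

lemma chi_pow_n {n : ℕ} (hn : 0 < n) (b : Fin n) : chi n b ^ n = 1 := by
  rw [chi, ← pow_mul, mul_comm, pow_mul, eps_pow_n hn, one_pow]

lemma chi_add {n : ℕ} (hn : 0 < n) (a b : Fin n) : chi n (a + b) = chi n a * chi n b := by
  rw [chi, Fin.val_add, eps_pow_mod hn, pow_add]; rfl

lemma chi_inj {n : ℕ} (hn : 0 < n) : Function.Injective (chi n) := by
  intro a b h
  exact Fin.ext ((eps_prim hn).pow_inj a.isLt b.isLt h)

lemma prod_chi {n : ℕ} (hn : 0 < n) (A B : ℂ) :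
    ∏ b : Fin n, (A + chi n b * B) = A ^ n + (-1) ^ (n + 1) * B ^ n := by
  have h1 : A ^ n + (-1) ^ (n + 1) * B ^ n = A ^ n - (-B) ^ n := by
    rw [neg_pow, pow_succ]; ring
  rw [h1, IsPrimitiveRoot.pow_sub_pow_eq_prod_sub_mul A (-B) hn (eps_prim hn)]
  refine Finset.prod_nbij (chi n) (fun b _ => ?_) (fun a _ b _ h => chi_inj hn h)
    (fun ζ hζ => ?_) (fun b _ => by ring)
  · exact (Polynomial.mem_nthRootsFinset hn _).2 (chi_pow_n hn b)
  · haveI : NeZero n := ⟨hn.ne'⟩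
    simp only [Finset.coe_univ, Set.mem_image]
    obtain ⟨i, hi, hpow⟩ := (eps_prim hn).eq_pow_of_pow_eq_one
      ((Polynomial.mem_nthRootsFinset hn _).1 hζ)
    exact ⟨⟨i, hi⟩, trivial, hpow⟩


lemma fin_sub_val {n : ℕ} (a b : Fin n) :
    ((a - b : Fin n) : ℕ) = if (b : ℕ) ≤ (a : ℕ) then (a : ℕ) - (b : ℕ)
      else n + (a : ℕ) - (b : ℕ) := by
  have ha := a.isLt; have hb := b.isLt
  rw [Fin.sub_def]
  show (n - (b : ℕ) + (a : ℕ)) % n = _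
  split_ifs with h
  · have h2 : n - (b : ℕ) + (a : ℕ) = n + ((a : ℕ) - (b : ℕ)) := by omega
    rw [h2, Nat.add_mod_left, Nat.mod_eq_of_lt (by omega)]
  · rw [Nat.mod_eq_of_lt (by omega)]; omega

lemma entry_sum {n : ℕ} (hn : 0 < n) (w x y t : ℂ) (ht : t ≠ 0) (hty : t ^ n = y) (i : Fin n) :
    ∑ j : Fin n, (if i = j then w ^ n + (-1) ^ (n + 1) * x + y
      else if (i : ℕ) < (j : ℕ) then
        y * (n.choose ((j : ℕ) - (i : ℕ))) * w ^ ((j : ℕ) - (i : ℕ))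
      else (n.choose (n + (j : ℕ) - (i : ℕ))) * w ^ (n + (j : ℕ) - (i : ℕ)))
      * t ^ (n - 1 - (j : ℕ))
    = t ^ (n - 1 - (i : ℕ)) * ((w + t) ^ n + (-1) ^ (n + 1) * x) := by
  haveI : NeZero n := ⟨hn.ne'⟩
  have hi := i.isLt
  apply mul_right_cancel₀ (pow_ne_zero (i : ℕ) ht)
  rw [Finset.sum_mul]
  set a0 : ℂ := w ^ n + (-1) ^ (n + 1) * x + y with ha0
  set G : ℕ → ℂ := fun m => if m = 0 then a0 * t ^ (n - 1)
    else (n.choose m : ℂ) * w ^ m * t ^ (2 * n - 1 - m) with hG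
  have key : ∀ j : Fin n, (if i = j then a0
      else if (i : ℕ) < (j : ℕ) then
        y * (n.choose ((j : ℕ) - (i : ℕ))) * w ^ ((j : ℕ) - (i : ℕ))
      else (n.choose (n + (j : ℕ) - (i : ℕ))) * w ^ (n + (j : ℕ) - (i : ℕ)))
      * t ^ (n - 1 - (j : ℕ)) * t ^ (i : ℕ) = G ((j - i : Fin n) : ℕ) := by
    intro j
    have hj := j.isLt
    rcases lt_trichotomy ((i : ℕ)) ((j : ℕ)) with hij | hij | hij
    · have hne : i ≠ j := fun h => by rw [h] at hij; omega
      have hk : ((j - i : Fin n) : ℕ) = (j : ℕ) - (i : ℕ) := by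
        rw [fin_sub_val, if_pos (le_of_lt hij)]
      rw [if_neg hne, if_pos hij, hk, hG]
      simp only []
      rw [if_neg (by omega)]
      rw [← hty]
      rw [show t ^ n * (n.choose ((j:ℕ) - (i:ℕ)) : ℂ) * w ^ ((j:ℕ) - (i:ℕ)) * t ^ (n - 1 - (j:ℕ))
          * t ^ (i:ℕ) = (n.choose ((j:ℕ) - (i:ℕ)) : ℂ) * w ^ ((j:ℕ) - (i:ℕ))
          * (t ^ n * t ^ (n - 1 - (j:ℕ)) * t ^ (i:ℕ)) from by ring, ← pow_add, ← pow_add]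
      congr 2
      omega
    · have heq : i = j := Fin.ext hij
      subst heq
      rw [if_pos rfl, sub_self]
      show a0 * t ^ (n - 1 - (i:ℕ)) * t ^ (i:ℕ) = G ((0 : Fin n) : ℕ)
      rw [show ((0 : Fin n) : ℕ) = 0 from rfl, hG]
      simp only [if_pos rfl]
      rw [mul_assoc, ← pow_add]
      congr 2
      omega
    · have hne : i ≠ j := fun h => by rw [h] at hij; omega
      have hk : ((j - i : Fin n) : ℕ) = n + (j : ℕ) - (i : ℕ) := by
        rw [fin_sub_val, if_neg (by omega)]
      rw [if_neg hne, if_neg (by omega), hk, hG]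
      simp only []
      rw [if_neg (by omega)]
      rw [mul_assoc, ← pow_add]
      congr 2
      omega
  rw [Finset.sum_congr rfl (fun j _ => key j)]
  rw [show ∑ j : Fin n, G ((j - i : Fin n) : ℕ) = ∑ k : Fin n, G (k : ℕ) from
    Fintype.sum_equiv (Equiv.subRight i) _ _ (fun j => rfl)]
  rw [Fin.sum_univ_eq_sum_range G n]
  rw [Finset.range_eq_Ico, Finset.sum_eq_sum_Ico_succ_bot hn G]
  have hG0 : G 0 = a0 * t ^ (n - 1) := by simp [hG]
  have hGm : ∀ m ∈ Finset.Ico 1 n, G m = (n.choose m : ℂ) * w ^ m * t ^ (2 * n - 1 - m) := by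
    intro m hm
    rw [Finset.mem_Ico] at hm
    rw [hG]; simp only []; rw [if_neg (by omega)]
  rw [Finset.sum_congr rfl hGm, hG0]
  -- binomial expansion
  have hbin : (w + t) ^ n * t ^ (n - 1)
      = ∑ m ∈ Finset.range (n + 1), (n.choose m : ℂ) * w ^ m * t ^ (2 * n - 1 - m) := by
    rw [add_pow, Finset.sum_mul]
    refine Finset.sum_congr rfl (fun m hm => ?_)
    rw [Finset.mem_range] at hm
    rw [show w ^ m * t ^ (n - m) * (n.choose m : ℂ) * t ^ (n - 1)
        = (n.choose m : ℂ) * w ^ m * (t ^ (n - m) * t ^ (n - 1)) from by ring, ← pow_add]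
    congr 2
    omega
  have hsplit : ∑ m ∈ Finset.range (n + 1), (n.choose m : ℂ) * w ^ m * t ^ (2 * n - 1 - m)
      = t ^ (2 * n - 1) + (∑ m ∈ Finset.Ico 1 n, (n.choose m : ℂ) * w ^ m * t ^ (2 * n - 1 - m))
        + w ^ n * t ^ (n - 1) := by
    rw [Finset.sum_range_succ, Finset.range_eq_Ico,
      Finset.sum_eq_sum_Ico_succ_bot (by omega : 0 < n)]
    simp only [Nat.choose_zero_right, Nat.choose_self, Nat.cast_one, pow_zero, Nat.sub_zero]
    have : 2 * n - 1 - n = n - 1 := by omega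
    rw [this]
    ring
  have ht2n : t ^ (2 * n - 1) = y * t ^ (n - 1) := by
    rw [← hty, ← pow_add]; congr 1; omega
  have hS : ∑ m ∈ Finset.Ico 1 n, (n.choose m : ℂ) * w ^ m * t ^ (2 * n - 1 - m)
      = (w + t) ^ n * t ^ (n - 1) - y * t ^ (n - 1) - w ^ n * t ^ (n - 1) := by
    rw [hbin, hsplit, ht2n]; ring
  rw [hS, show t ^ (n - 1 - (i:ℕ)) * ((w + t) ^ n + (-1) ^ (n + 1) * x) * t ^ (i:ℕ)
    = ((w + t) ^ n + (-1) ^ (n + 1) * x) * (t ^ (n - 1 - (i:ℕ)) * t ^ (i:ℕ)) from by ring,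
    ← pow_add, show n - 1 - (i:ℕ) + (i:ℕ) = n - 1 from by omega, ha0]
  ring

lemma det_circ {n : ℕ} (hn : 0 < n) (w x y η : ℂ) (hy : η ^ n = y) :
    Matrix.det (Matrix.of fun i j : Fin n =>
      if i = j then w ^ n + (-1) ^ (n + 1) * x + y
      else if (i : ℕ) < (j : ℕ) then
        y * (n.choose ((j : ℕ) - (i : ℕ))) * w ^ ((j : ℕ) - (i : ℕ))
      else (n.choose (n + (j : ℕ) - (i : ℕ))) * w ^ (n + (j : ℕ) - (i : ℕ)))
    = ∏ b : Fin n, ((w + η * chi n b) ^ n + (-1) ^ (n + 1) * x) := by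
  haveI : NeZero n := ⟨hn.ne'⟩
  set M : Matrix (Fin n) (Fin n) ℂ := Matrix.of fun i j : Fin n =>
      if i = j then w ^ n + (-1) ^ (n + 1) * x + y
      else if (i : ℕ) < (j : ℕ) then
        y * (n.choose ((j : ℕ) - (i : ℕ))) * w ^ ((j : ℕ) - (i : ℕ))
      else (n.choose (n + (j : ℕ) - (i : ℕ))) * w ^ (n + (j : ℕ) - (i : ℕ)) with hM
  by_cases hη : η = 0
  · -- lower triangular case
    have hy0 : y = 0 := by rw [← hy, hη, zero_pow hn.ne']
    have htri : M.BlockTriangular OrderDual.toDual := by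
      intro i j hij
      have hij' : i < j := hij
      have hne : i ≠ j := ne_of_lt hij'
      have hlt : (i : ℕ) < (j : ℕ) := hij'
      show (if i = j then w ^ n + (-1) ^ (n + 1) * x + y
        else if (i : ℕ) < (j : ℕ) then
          y * (n.choose ((j : ℕ) - (i : ℕ))) * w ^ ((j : ℕ) - (i : ℕ))
        else (n.choose (n + (j : ℕ) - (i : ℕ))) * w ^ (n + (j : ℕ) - (i : ℕ))) = 0
      rw [if_neg hne, if_pos hlt, hy0]
      ring
    rw [Matrix.det_of_lowerTriangular M htri]
    refine Finset.prod_congr rfl (fun i _ => ?_)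
    simp [hM, hη, hy0]
  · -- eigen decomposition
    set t : Fin n → ℂ := fun b => η * chi n b with htdef
    have ht0 : ∀ b, t b ≠ 0 := by
      intro b
      refine mul_ne_zero hη (fun h => ?_)
      have := chi_pow_n hn b
      rw [h, zero_pow hn.ne'] at this
      exact zero_ne_one this
    have htn : ∀ b, t b ^ n = y := by
      intro b
      rw [htdef]
      simp only []
      rw [mul_pow, chi_pow_n hn b, mul_one, hy]
    have htinj : Function.Injective t := by
      intro a b h
      exact chi_inj hn (mul_left_cancel₀ hη h)
    set V : Matrix (Fin n) (Fin n) ℂ :=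
      Matrix.of fun i b : Fin n => t b ^ (n - 1 - (i : ℕ)) with hV
    set D : Matrix (Fin n) (Fin n) ℂ :=
      Matrix.diagonal (fun b => (w + t b) ^ n + (-1) ^ (n + 1) * x) with hD
    have hMV : M * V = V * D := by
      ext i b
      rw [Matrix.mul_apply, Matrix.mul_diagonal]
      show ∑ j : Fin n, M i j * V j b = V i b * ((w + t b) ^ n + (-1) ^ (n + 1) * x)
      simp only [hM, hV, Matrix.of_apply]
      exact entry_sum hn w x y (t b) (ht0 b) (htn b) i
    have hdetV : V.det ≠ 0 := by
      have hVsub : V = ((Matrix.vandermonde t)ᵀ).submatrix (Fin.revPerm) id := by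
        ext i b
        simp only [Matrix.submatrix_apply, Matrix.transpose_apply, Matrix.vandermonde_apply, id]
        rw [hV]
        simp only [Matrix.of_apply]
        congr 1
        rw [show Fin.revPerm i = i.rev from rfl, Fin.val_rev]
        omega
      rw [hVsub, Matrix.det_permute, Matrix.det_transpose]
      refine mul_ne_zero ?_ (Matrix.det_vandermonde_ne_zero_iff.mpr htinj)
      rcases Int.units_eq_one_or (Equiv.Perm.sign Fin.revPerm) with h | h <;> rw [h] <;> norm_num
    have := congrArg Matrix.det hMV
    rw [Matrix.det_mul, Matrix.det_mul] at this
    have hdM : M.det = D.det := by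
      have h2 : M.det * V.det = D.det * V.det := by
        rw [this]; ring
      exact mul_right_cancel₀ hdetV h2
    rw [hdM, hD, Matrix.det_diagonal]

lemma chi_succ {n : ℕ} [NeZero n] (hn : 0 < n) (r : Fin n) : chi n (r + 1) = eps n ^ ((r : ℕ) + 1) := by
  haveI : NeZero n := ⟨hn.ne'⟩
  rw [chi, Fin.val_add, eps_pow_mod hn, Fin.val_one', pow_add, pow_add, eps_pow_mod hn 1]

lemma exp_eq {n : ℕ} (m : ℕ) :
    Complex.exp (2 * Real.pi * Complex.I * ((m : ℂ) + 1) / n) = eps n ^ (m + 1) := by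
  rw [eps, ← Complex.exp_nat_mul]
  congr 1
  push_cast
  ring

lemma prod_shift {n : ℕ} (hn : 0 < n) (ζ w ξ η : ℂ) (h : w ^ n = ζ ^ n) :
    ∏ a : Fin n, ∏ b : Fin n, (w + chi n a * ξ + chi n b * η)
      = ∏ a : Fin n, ∏ b : Fin n, (ζ + chi n a * ξ + chi n b * η) := by
  haveI : NeZero n := ⟨hn.ne'⟩
  by_cases hζ : ζ = 0
  · have hw : w = 0 := by
      rw [hζ, zero_pow hn.ne'] at h
      exact (pow_eq_zero_iff hn.ne').1 h
    rw [hw, hζ]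
  · have hq : (w / ζ) ^ n = 1 := by rw [div_pow, h, div_self (pow_ne_zero n hζ)]
    obtain ⟨k, hk, hek⟩ := (eps_prim hn).eq_pow_of_pow_eq_one hq
    set c : Fin n := ⟨k, hk⟩ with hc
    have hwc : w = chi n c * ζ := by
      show w = eps n ^ k * ζ
      rw [hek]
      field_simp
    have hcn : chi n c ^ n = 1 := chi_pow_n hn c
    have hfac : ∀ a b : Fin n, w + chi n a * ξ + chi n b * η
        = chi n c * (ζ + chi n (a - c) * ξ + chi n (b - c) * η) := by
      intro a b
      have h1 : chi n c * chi n (a - c) = chi n a := by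
        rw [← chi_add hn, add_sub_cancel]
      have h2 : chi n c * chi n (b - c) = chi n b := by
        rw [← chi_add hn, add_sub_cancel]
      rw [hwc, ← h1, ← h2]; ring
    calc ∏ a : Fin n, ∏ b : Fin n, (w + chi n a * ξ + chi n b * η)
        = ∏ a : Fin n, ∏ b : Fin n,
            (chi n c * (ζ + chi n (a - c) * ξ + chi n (b - c) * η)) := by
          exact Finset.prod_congr rfl fun a _ => Finset.prod_congr rfl fun b _ => hfac a b
      _ = ∏ a : Fin n, ∏ b : Fin n, (ζ + chi n (a - c) * ξ + chi n (b - c) * η) := by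
          refine Finset.prod_congr rfl fun a _ => ?_
          rw [Finset.prod_mul_distrib, Finset.prod_const, Finset.card_univ, Fintype.card_fin,
            hcn, one_mul]
      _ = ∏ a : Fin n, ∏ b : Fin n, (ζ + chi n a * ξ + chi n b * η) := by
          refine Fintype.prod_equiv (Equiv.subRight c) _ _ (fun a => ?_)
          refine Fintype.prod_equiv (Equiv.subRight c) _ _ (fun b => ?_)
          simp



theorem statement8 (n : ℕ) (hn : 0 < n) (x y z w : ℂ) (hw : w ^ n = z) :
    pn n z x y = Matrix.det (Matrix.of fun i j : Fin n =>
      if i = j then w ^ n + (-1) ^ (n + 1) * x + y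
      else if (i : ℕ) < (j : ℕ) then
        y * (n.choose ((j : ℕ) - (i : ℕ))) * w ^ ((j : ℕ) - (i : ℕ))
      else (n.choose (n + (j : ℕ) - (i : ℕ))) * w ^ (n + (j : ℕ) - (i : ℕ))) := by
  haveI : NeZero n := ⟨hn.ne'⟩
  set ζ := z ^ (n : ℂ)⁻¹ with hζdef
  set ξ := x ^ (n : ℂ)⁻¹ with hξdef
  set η := y ^ (n : ℂ)⁻¹ with hηdef
  have hζ : ζ ^ n = z := Complex.cpow_nat_inv_pow z hn.ne'
  have hξ : ξ ^ n = x := Complex.cpow_nat_inv_pow x hn.ne'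
  have hη : η ^ n = y := Complex.cpow_nat_inv_pow y hn.ne'
  have hpn : pn n z x y = ∏ a : Fin n, ∏ b : Fin n, (ζ + chi n a * ξ + chi n b * η) := by
    rw [pn]
    refine Fintype.prod_equiv (Equiv.addRight (1 : Fin n)) _ _ (fun r => ?_)
    refine Fintype.prod_equiv (Equiv.addRight (1 : Fin n)) _ _ (fun s => ?_)
    simp only [Equiv.coe_addRight, exp_eq, chi_succ hn]
    rfl
  rw [hpn, ← prod_shift hn ζ w ξ η (hw.trans hζ.symm)]
  rw [det_circ hn w x y η hη]
  have hinner : ∀ b : Fin n, (w + η * chi n b) ^ n + (-1) ^ (n + 1) * x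
      = ∏ a : Fin n, (w + η * chi n b + chi n a * ξ) := by
    intro b
    rw [prod_chi hn, hξ]
  rw [Finset.prod_congr rfl (fun b _ => hinner b), Finset.prod_comm]
  exact Finset.prod_congr rfl fun a _ => Finset.prod_congr rfl fun b _ => by ring
end

section
/- For every prime p ≥ 5, the binomial coefficient binom(2p−1, p−1) is congruent to 1 modulo p³ (Wolstenholme's theorem). -/
open Finset Nat

lemma prod_add_sq_zero {R ι : Type*} [CommRing R] [DecidableEq ι] (s : Finset ι) (a : ι → R)
    (c : R) (hc : c * c = 0) :
    ∏ i ∈ s, (a i + c) = ∏ i ∈ s, a i + c * ∑ i ∈ s, ∏ j ∈ s.erase i, a j := by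
  induction s using Finset.induction_on with
  | empty => simp
  | insert _ _ hx ih =>
    rename_i x s
    rw [prod_insert hx, prod_insert hx, ih, sum_insert hx, erase_insert hx]
    have h2 : ∀ j ∈ s, ∏ k ∈ (insert x s).erase j, a k = a x * ∏ k ∈ s.erase j, a k := by
      intro j hj
      rw [erase_insert_of_ne (by rintro rfl; exact hx hj), prod_insert (by simp [hx])]
    rw [sum_congr rfl h2, ← mul_sum]
    linear_combination (∑ i ∈ s, ∏ j ∈ s.erase i, a j) * hc

lemma zmod_sum_range (p e : ℕ) [NeZero p] :
    ∑ i ∈ range p, (i : ZMod p) ^ e = ∑ x : ZMod p, x ^ e :=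
  Finset.sum_nbij' (fun i => (i : ZMod p)) (fun x => x.val)
    (fun _ _ => mem_univ _)
    (fun x _ => mem_range.mpr (ZMod.val_lt x))
    (fun i hi => ZMod.val_natCast_of_lt (mem_range.mp hi))
    (fun x _ => by simp [ZMod.natCast_val, ZMod.cast_id])
    (fun _ _ => rfl)

lemma half_sum_inv_sq (p m : ℕ) (hp : p.Prime) (h5 : 5 ≤ p) (hm : p = 2 * m + 1) :
    ∑ i ∈ range m, ((((1 + i : ℕ)) : ZMod p) ^ 2)⁻¹ = 0 := by
  haveI : Fact p.Prime := ⟨hp⟩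
  set F := ZMod p
  set e := p - 3 with he
  have hne : ∀ i : ℕ, i < p - 1 → ((1 + i : ℕ) : F) ≠ 0 := by
    intro i hi h0
    rw [ZMod.natCast_eq_zero_iff] at h0
    have := Nat.le_of_dvd (by omega) h0
    omega
  have key : ∀ i : ℕ, i < p - 1 → (((1 + i : ℕ) : F) ^ 2)⁻¹ = ((1 + i : ℕ) : F) ^ e := by
    intro i hi
    have hx := hne i hi
    have h1 : ((1 + i : ℕ) : F) ^ 2 * ((1 + i : ℕ) : F) ^ e = 1 := by
      rw [← pow_add]
      have : 2 + e = p - 1 := by omega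
      rw [this, ZMod.pow_card_sub_one_eq_one hx]
    exact inv_eq_of_mul_eq_one_right h1
  have full : ∑ i ∈ range (2 * m), ((((1 + i : ℕ)) : F) ^ 2)⁻¹ = 0 := by
    rw [sum_congr rfl fun i hi => key i (by have := mem_range.mp hi; omega)]
    have hp' : p = 2 * m + 1 := hm
    have : ∑ i ∈ range (2 * m), ((1 + i : ℕ) : F) ^ e = ∑ i ∈ range p, (i : F) ^ e := by
      have hr : range p = range (2 * m + 1) := by rw [← hp']
      rw [hr, sum_range_succ']
      have h0 : ((0 : ℕ) : F) ^ e = 0 := by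
        rw [Nat.cast_zero, zero_pow (by omega)]
      rw [h0, add_zero]
      exact sum_congr rfl fun i _ => by rw [add_comm 1 i]
    rw [this, zmod_sum_range]
    exact FiniteField.sum_pow_lt_card_sub_one F e (by rw [ZMod.card]; omega)
  have split : ∑ i ∈ range (2 * m), ((((1 + i : ℕ)) : F) ^ 2)⁻¹ =
      (∑ i ∈ range m, ((((1 + i : ℕ)) : F) ^ 2)⁻¹) +
      ∑ i ∈ range m, ((((1 + (m + i) : ℕ)) : F) ^ 2)⁻¹ := by
    rw [two_mul, sum_range_add]
  have hrefl : ∑ i ∈ range m, ((((1 + (m + i) : ℕ)) : F) ^ 2)⁻¹ =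
      ∑ i ∈ range m, ((((1 + i : ℕ)) : F) ^ 2)⁻¹ := by
    rw [← sum_range_reflect (fun i => ((((1 + (m + i) : ℕ)) : F) ^ 2)⁻¹) m]
    refine sum_congr rfl fun i hi => ?_
    have him := mem_range.mp hi
    have h1 : 1 + (m + (m - 1 - i)) = 2 * m - i := by omega
    rw [h1]
    have h2 : ((2 * m - i : ℕ) : F) = -((1 + i : ℕ) : F) := by
      have : (2 * m - i : ℕ) + (1 + i) = p := by omega
      have hc : ((2 * m - i : ℕ) : F) + ((1 + i : ℕ) : F) = 0 := by
        rw [← Nat.cast_add, this, ZMod.natCast_self]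
      exact eq_neg_of_add_eq_zero_left hc
    rw [h2, neg_pow]
    norm_num
  have h2ne : (2 : F) ≠ 0 := by
    have : ((2 : ℕ) : F) ≠ 0 := by
      rw [Ne, ZMod.natCast_eq_zero_iff]
      intro h; have := Nat.le_of_dvd (by norm_num) h; omega
    simpa using this
  rw [split, hrefl, ← two_mul] at full
  exact (mul_eq_zero.mp full).resolve_left h2ne

lemma p_dvd_S (p m : ℕ) (hp : p.Prime) (h5 : 5 ≤ p) (hm : p = 2 * m + 1) :
    p ∣ ∑ i ∈ range m, ∏ j ∈ (range m).erase i, (1 + j) * (p - (1 + j)) := by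
  haveI : Fact p.Prime := ⟨hp⟩
  set F := ZMod p
  rw [← ZMod.natCast_eq_zero_iff]
  rw [Nat.cast_sum]
  have hne : ∀ j : ℕ, j < m → ((1 + j : ℕ) : F) ≠ 0 := by
    intro j hj h0
    rw [ZMod.natCast_eq_zero_iff] at h0
    have := Nat.le_of_dvd (by omega) h0
    omega
  have hA : ∀ j : ℕ, j < m →
      (((1 + j) * (p - (1 + j)) : ℕ) : F) = -((1 + j : ℕ) : F) ^ 2 := by
    intro j hj
    rw [Nat.cast_mul]
    have hc : ((p - (1 + j) : ℕ) : F) = -((1 + j : ℕ) : F) := by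
      have hadd : (p - (1 + j) : ℕ) + (1 + j) = p := by omega
      have : ((p - (1 + j) : ℕ) : F) + ((1 + j : ℕ) : F) = 0 := by
        rw [← Nat.cast_add, hadd, ZMod.natCast_self]
      exact eq_neg_of_add_eq_zero_left this
    rw [hc]; ring
  have step : ∀ i ∈ range m,
      ((∏ j ∈ (range m).erase i, (1 + j) * (p - (1 + j)) : ℕ) : F) =
      (∏ j ∈ range m, -((1 + j : ℕ) : F) ^ 2) * (-((1 + i : ℕ) : F) ^ 2)⁻¹ := by
    intro i hi
    rw [Nat.cast_prod]
    have hprod : ∏ j ∈ (range m).erase i, (((1 + j) * (p - (1 + j)) : ℕ) : F) =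
        ∏ j ∈ (range m).erase i, -((1 + j : ℕ) : F) ^ 2 :=
      prod_congr rfl fun j hj => hA j (mem_range.mp (mem_of_mem_erase hj))
    rw [hprod]
    have hgi : -((1 + i : ℕ) : F) ^ 2 ≠ 0 := by
      simpa using pow_ne_zero 2 (hne i (mem_range.mp hi))
    have hkey := Finset.prod_erase_mul (range m) (fun j => -((1 + j : ℕ) : F) ^ 2) hi
    rw [← hkey, mul_assoc, mul_inv_cancel₀ hgi, mul_one]
  rw [sum_congr rfl step, ← mul_sum]
  have : ∑ i ∈ range m, (-((1 + i : ℕ) : F) ^ 2)⁻¹ = 0 := by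
    have h1 : ∀ i ∈ range m, (-((1 + i : ℕ) : F) ^ 2)⁻¹ = -(((1 + i : ℕ) : F) ^ 2)⁻¹ := by
      intro i _; rw [inv_neg]
    rw [sum_congr rfl h1, sum_neg_distrib]
    rw [half_sum_inv_sq p m hp h5 hm, neg_zero]
  rw [this, mul_zero]

lemma ascFactorial_prod (n : ℕ) : ∀ k, n.ascFactorial k = ∏ i ∈ range k, (n + i)
  | 0 => by simp
  | k + 1 => by rw [Nat.ascFactorial_succ, prod_range_succ, ascFactorial_prod n k, mul_comm]

lemma choose_mul_fac (p : ℕ) (hp : 1 ≤ p) :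
    (2 * p - 1).choose (p - 1) * (p - 1)! = ∏ i ∈ range (p - 1), (p + 1 + i) := by
  have h := Nat.ascFactorial_eq_factorial_mul_choose p (p - 1)
  have h2 : p + (p - 1) = 2 * p - 1 := by omega
  rw [h2] at h
  rw [mul_comm, ← h, ascFactorial_prod]

lemma fac_pair (p m : ℕ) (hm : p = 2 * m + 1) :
    (p - 1)! = ∏ i ∈ range m, (1 + i) * (p - (1 + i)) := by
  have h1 : p - 1 = m + m := by omega
  rw [h1, ← prod_range_add_one_eq_factorial, prod_range_add]
  have h2 : ∏ i ∈ range m, (m + i + 1) = ∏ i ∈ range m, (p - (1 + i)) := by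
    rw [← prod_range_reflect (fun i => m + i + 1) m]
    refine prod_congr rfl fun i hi => ?_
    have := mem_range.mp hi
    omega
  rw [h2, ← prod_mul_distrib]
  exact prod_congr rfl fun i _ => by rw [add_comm i 1]

theorem statement11 (p : ℕ) (hp : p.Prime) (h5 : 5 ≤ p) :
    (2 * p - 1).choose (p - 1) ≡ 1 [MOD p ^ 3] := by
  obtain ⟨m, hm⟩ : ∃ m, p = 2 * m + 1 := by
    obtain ⟨k, hk⟩ := hp.odd_of_ne_two (by omega)
    exact ⟨k, hk⟩
  set R := ZMod (p ^ 3) with hR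
  letI : CommRing R := inferInstanceAs (CommRing (ZMod (p ^ 3)))
  haveI : NeZero (p ^ 3) := ⟨by positivity⟩
  have hq3 : ((p : R)) ^ 3 = 0 := by
    rw [← Nat.cast_pow]; exact ZMod.natCast_self (p ^ 3)
  -- cast the nat identity
  have hcast : (((2 * p - 1).choose (p - 1) : ℕ) : R) * (((p - 1)! : ℕ) : R) =
      ∏ i ∈ range (p - 1), ((p : R) + 1 + (i : R)) := by
    have h := congrArg (fun n : ℕ => (n : R)) (choose_mul_fac p (by omega))
    simp only [Nat.cast_mul, Nat.cast_prod, Nat.cast_add, Nat.cast_one] at h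
    exact h
  -- pair the product
  have hpair : ∏ i ∈ range (p - 1), ((p : R) + 1 + (i : R)) =
      ∏ i ∈ range m, ((((1 + i) * (p - (1 + i)) : ℕ) : R) + 2 * (p : R) ^ 2) := by
    have h1 : p - 1 = m + m := by omega
    rw [h1, prod_range_add]
    have h2 : ∏ i ∈ range m, ((p : R) + 1 + ((m + i : ℕ) : R)) =
        ∏ i ∈ range m, ((p : R) + 1 + ((m + (m - 1 - i) : ℕ) : R)) :=
      (prod_range_reflect (fun i => (p : R) + 1 + ((m + i : ℕ) : R)) m).symm
    rw [h2, ← prod_mul_distrib]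
    refine prod_congr rfl fun i hi => ?_
    have him := mem_range.mp hi
    have e1 : m + (m - 1 - i) = 2 * m - (1 + i) := by omega
    rw [e1]
    have e2 : ((2 * m - (1 + i) : ℕ) : R) = 2 * (m : R) - (1 + (i : R)) := by
      rw [Nat.cast_sub (by omega)]; push_cast; ring
    have e3 : (((1 + i) * (p - (1 + i)) : ℕ) : R) = (1 + (i : R)) * ((p : R) - (1 + (i : R))) := by
      rw [Nat.cast_mul, Nat.cast_sub (by omega)]; push_cast; ring
    have e4 : (p : R) = 2 * (m : R) + 1 := by
      have h := congrArg (fun n : ℕ => (n : R)) hm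
      rw [h]; push_cast; ring
    rw [e2, e3, e4]; ring
  -- expand: square-zero element 2p²
  have hc : (2 * (p : R) ^ 2) * (2 * (p : R) ^ 2) = 0 := by
    have h : (2 * (p : R) ^ 2) * (2 * (p : R) ^ 2) = 4 * (p : R) * ((p : R) ^ 3) := by ring
    rw [h, hq3, mul_zero]
  have hexp := prod_add_sq_zero (range m)
    (fun i => (((1 + i) * (p - (1 + i)) : ℕ) : R)) (2 * (p : R) ^ 2) hc
  -- the sum term vanishes mod p³
  obtain ⟨t, ht⟩ := p_dvd_S p m hp h5 hm
  have hsum : ∑ i ∈ range m, ∏ j ∈ (range m).erase i, (((1 + j) * (p - (1 + j)) : ℕ) : R)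
      = ((p * t : ℕ) : R) := by
    rw [← ht, Nat.cast_sum]
    exact sum_congr rfl fun i _ => (Nat.cast_prod _ _).symm
  have hzero : (2 * (p : R) ^ 2) *
      (∑ i ∈ range m, ∏ j ∈ (range m).erase i, (((1 + j) * (p - (1 + j)) : ℕ) : R)) = 0 := by
    rw [hsum]
    have h : (2 * (p : R) ^ 2) * ((p * t : ℕ) : R) = 2 * (t : R) * ((p : R) ^ 3) := by
      push_cast; ring
    rw [h, hq3, mul_zero]
  -- combine
  have hAprod : ∏ i ∈ range m, (((1 + i) * (p - (1 + i)) : ℕ) : R) = (((p - 1)! : ℕ) : R) := by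
    rw [← Nat.cast_prod, ← fac_pair p m hm]
  have main : ∏ i ∈ range (p - 1), ((p : R) + 1 + (i : R)) = (((p - 1)! : ℕ) : R) := by
    rw [hpair, hexp, hzero, add_zero, hAprod]
  -- cancel the unit (p-1)!
  have hu : IsUnit (((p - 1)! : ℕ) : R) := by
    refine (ZMod.isUnit_iff_coprime (p - 1)! (p ^ 3)).mpr ?_
    apply Nat.Coprime.pow_right
    have hnd : ¬ p ∣ (p - 1)! := by
      intro h
      have := (Nat.Prime.dvd_factorial hp).mp h
      omega
    exact Nat.Coprime.symm ((hp.coprime_iff_not_dvd).mpr hnd)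
  have h1 : (((2 * p - 1).choose (p - 1) : ℕ) : R) * (((p - 1)! : ℕ) : R) =
      1 * (((p - 1)! : ℕ) : R) := by rw [hcast, main, one_mul]
  have h2 := hu.mul_right_cancel h1
  exact (ZMod.natCast_eq_natCast_iff _ _ _).mp (by exact h2.trans Nat.cast_one.symm)
end

section
/- For every prime n ≥ 5, the sum ∑_{k=1}^{n−1} k·binom(n,k)² is divisible by n⁴. -/
open Finset

private lemma sq_sum_aux {R : Type*} [CommRing R] (f : ℕ → R) (m : ℕ) :
    (∑ k ∈ Ico 1 m, f k) ^ 2 =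
      ∑ k ∈ Ico 1 m, (f k) ^ 2 + 2 * ∑ k ∈ Ico 1 m, f k * ∑ i ∈ Ico 1 k, f i := by
  induction m with
  | zero => simp
  | succ m ih =>
    rcases Nat.eq_zero_or_pos m with rfl | hm
    · simp
    rw [Finset.sum_Ico_succ_top hm, Finset.sum_Ico_succ_top hm, Finset.sum_Ico_succ_top hm]
    linear_combination ih

private lemma coprime_aux {n k : ℕ} (hn : n.Prime) (h1 : 1 ≤ k) (h2 : k < n) :
    Nat.Coprime k n :=
  Nat.Coprime.symm ((Nat.Prime.coprime_iff_not_dvd hn).mpr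
    (fun hd => absurd (Nat.le_of_dvd h1 hd) (not_le.mpr h2)))

private lemma isUnit_sq_aux {n k : ℕ} (hn : n.Prime) (h1 : 1 ≤ k) (h2 : k < n) :
    IsUnit ((k : ℕ) : ZMod (n ^ 2)) := by
  rw [ZMod.isUnit_iff_coprime]
  exact (coprime_aux hn h1 h2).pow_right _

private lemma nsq_zero_aux (n : ℕ) : ((n : ZMod (n ^ 2)) * (n : ZMod (n ^ 2))) = 0 := by
  rw [← Nat.cast_mul, ← sq, ZMod.natCast_self]

/-- transfer: if the reduction of `x : ZMod (n^2)` mod `n` is zero, then `n * x = 0`. -/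
private lemma mul_n_zero_aux {n : ℕ} (hn : n.Prime) {x : ZMod (n ^ 2)}
    (hx : (ZMod.castHom (dvd_pow_self n two_ne_zero) (ZMod n)) x = 0) :
    (n : ZMod (n ^ 2)) * x = 0 := by
  haveI : NeZero (n ^ 2) := ⟨pow_ne_zero 2 hn.pos.ne'⟩
  obtain ⟨m, rfl⟩ := ZMod.natCast_zmod_surjective x
  rw [map_natCast, ZMod.natCast_eq_zero_iff] at hx
  obtain ⟨c, rfl⟩ := hx
  rw [← Nat.cast_mul, ZMod.natCast_eq_zero_iff]
  ring_nf
  exact Dvd.intro c (by ring)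

private lemma inv_transfer_aux {n k : ℕ} (hn : n.Prime) (h1 : 1 ≤ k) (h2 : k < n) :
    (ZMod.castHom (dvd_pow_self n two_ne_zero) (ZMod n)) (((k : ℕ) : ZMod (n ^ 2))⁻¹)
      = ((k : ℕ) : ZMod n)⁻¹ := by
  haveI : Fact n.Prime := ⟨hn⟩
  have hu := isUnit_sq_aux hn h1 h2
  have h := ZMod.mul_inv_of_unit _ hu
  have h' := congrArg (ZMod.castHom (dvd_pow_self n two_ne_zero) (ZMod n)) h
  rw [map_mul, map_natCast, map_one] at h'
  exact (eq_inv_of_mul_eq_one_left (by rw [mul_comm] at h'; exact h')).symm ▸ rfl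

private lemma inv_transfer_aux' {n k : ℕ} (hn : n.Prime) (h1 : 1 ≤ k) (h2 : k < n) :
    (ZMod.castHom (dvd_pow_self n two_ne_zero) (ZMod n)) (((k : ℕ) : ZMod (n ^ 2))⁻¹)
      = ((k : ℕ) : ZMod n)⁻¹ := by
  haveI : Fact n.Prime := ⟨hn⟩
  have hu := isUnit_sq_aux hn h1 h2
  have h := ZMod.mul_inv_of_unit _ hu
  have h' := congrArg (ZMod.castHom (dvd_pow_self n two_ne_zero) (ZMod n)) h
  rw [map_mul, map_natCast, map_one] at h'
  exact eq_inv_of_mul_eq_one_left (by rw [mul_comm] at h'; exact h')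

/-- `∑_{k=1}^{n-1} (k⁻¹)² = 0` in `ZMod n` for a prime `n ≥ 5`. -/
private lemma sum_inv_sq_aux {n : ℕ} (hn : n.Prime) (h5 : 5 ≤ n) :
    ∑ k ∈ Ico 1 n, (((k : ℕ) : ZMod n))⁻¹ ^ 2 = 0 := by
  haveI : Fact n.Prime := ⟨hn⟩
  have h0 : ∑ k ∈ Ico 1 n, (((k : ℕ) : ZMod n))⁻¹ ^ 2
      = ∑ k ∈ range n, (((k : ℕ) : ZMod n))⁻¹ ^ 2 := by
    rw [range_eq_Ico, Finset.sum_eq_sum_Ico_succ_bot (by omega : 0 < n)]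
    simp
  have h1 : ∑ k ∈ range n, (((k : ℕ) : ZMod n))⁻¹ ^ 2 = ∑ x : ZMod n, x⁻¹ ^ 2 := by
    apply Finset.sum_nbij' (fun k => ((k : ℕ) : ZMod n)) (fun x => x.val)
    · intro a _; exact Finset.mem_univ _
    · intro x _; exact Finset.mem_range.mpr (ZMod.val_lt x)
    · intro a ha; exact ZMod.val_natCast_of_lt (Finset.mem_range.mp ha)
    · intro x _; exact ZMod.natCast_zmod_val x
    · intro a _; rfl
  have h2 : ∑ x : ZMod n, x⁻¹ ^ 2 = ∑ x : ZMod n, x ^ 2 := by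
    exact (Fintype.sum_bijective (fun x : ZMod n => x⁻¹)
      (Function.Involutive.bijective (fun x => inv_inv x)) _ _ (fun x => by rw [inv_inv])).symm
  have h3 : ∑ x : ZMod n, x ^ 2 = 0 := by
    apply FiniteField.sum_pow_lt_card_sub_one
    rw [ZMod.card]; omega
  rw [h0, h1, h2, h3]

/-- `n * ∑ k⁻¹² = 0` in `ZMod (n^2)`. -/
private lemma nQ_zero_aux {n : ℕ} (hn : n.Prime) (h5 : 5 ≤ n) :
    (n : ZMod (n ^ 2)) * ∑ k ∈ Ico 1 n, (((k : ℕ) : ZMod (n ^ 2)))⁻¹ ^ 2 = 0 := by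
  apply mul_n_zero_aux hn
  rw [map_sum]
  rw [← sum_inv_sq_aux hn h5]
  apply Finset.sum_congr rfl
  intro k hk
  rw [Finset.mem_Ico] at hk
  rw [map_pow, inv_transfer_aux' hn hk.1 hk.2]

/-- Wolstenholme: `∑_{k=1}^{n-1} k⁻¹ = 0` in `ZMod (n^2)`. -/
private lemma H_zero_aux {n : ℕ} (hn : n.Prime) (h5 : 5 ≤ n) :
    ∑ i ∈ Ico 1 n, (((i : ℕ) : ZMod (n ^ 2)))⁻¹ = 0 := by
  haveI : Fact n.Prime := ⟨hn⟩
  set R := ZMod (n ^ 2)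
  set H : R := ∑ i ∈ Ico 1 n, (((i : ℕ) : R))⁻¹ with hH
  have hrev : H = ∑ i ∈ Ico 1 n, (((n - i : ℕ) : R))⁻¹ := by
    rw [hH]
    apply Finset.sum_nbij' (fun i => n - i) (fun i => n - i)
    · intro a ha; rw [Finset.mem_Ico] at ha ⊢; omega
    · intro a ha; rw [Finset.mem_Ico] at ha ⊢; omega
    · intro a ha; rw [Finset.mem_Ico] at ha; omega
    · intro a ha; rw [Finset.mem_Ico] at ha; omega
    · intro a ha; rw [Finset.mem_Ico] at ha
      congr 2
      omega
  have h2H : (2 : R) * H = (n : R) * ∑ i ∈ Ico 1 n,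
      ((((i : ℕ) : R))⁻¹ * (((n - i : ℕ) : R))⁻¹) := by
    have key : H + H = ∑ i ∈ Ico 1 n,
        ((n : R) * ((((i : ℕ) : R))⁻¹ * (((n - i : ℕ) : R))⁻¹)) := by
      nth_rewrite 2 [hrev]
      rw [hH, ← Finset.sum_add_distrib]
      apply Finset.sum_congr rfl
      intro i hi
      rw [Finset.mem_Ico] at hi
      have hi1 := isUnit_sq_aux hn hi.1 hi.2
      have hni1 := isUnit_sq_aux hn (k := n - i) (by omega) (by omega)
      have ha : ((i : ℕ) : R) * (((i : ℕ) : R))⁻¹ = 1 := ZMod.mul_inv_of_unit _ hi1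
      have hb : ((n - i : ℕ) : R) * (((n - i : ℕ) : R))⁻¹ = 1 := ZMod.mul_inv_of_unit _ hni1
      have hab : ((i : ℕ) : R) + ((n - i : ℕ) : R) = (n : R) := by
        rw [← Nat.cast_add]
        congr 1
        omega
      linear_combination (-(((n - i : ℕ) : R))⁻¹) * ha + (-(((i : ℕ) : R))⁻¹) * hb
        + ((((i : ℕ) : R))⁻¹ * (((n - i : ℕ) : R))⁻¹) * hab
    rw [two_mul, key, Finset.mul_sum]
  have hB : (n : R) * ∑ i ∈ Ico 1 n,
      ((((i : ℕ) : R))⁻¹ * (((n - i : ℕ) : R))⁻¹) = 0 := by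
    apply mul_n_zero_aux hn
    rw [map_sum]
    have : ∀ i ∈ Ico 1 n,
        (ZMod.castHom (dvd_pow_self n two_ne_zero) (ZMod n))
          ((((i : ℕ) : R))⁻¹ * (((n - i : ℕ) : R))⁻¹)
        = -((((i : ℕ) : ZMod n))⁻¹ ^ 2) := by
      intro i hi
      rw [Finset.mem_Ico] at hi
      rw [map_mul, inv_transfer_aux' hn hi.1 hi.2,
        inv_transfer_aux' hn (k := n - i) (by omega) (by omega)]
      have : ((n - i : ℕ) : ZMod n) = -((i : ℕ) : ZMod n) := by
        have : ((n - i : ℕ) : ZMod n) + ((i : ℕ) : ZMod n) = ((n : ℕ) : ZMod n) := by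
          rw [← Nat.cast_add]; congr 1; omega
        rw [ZMod.natCast_self] at this
        exact eq_neg_of_add_eq_zero_left this
      rw [this, inv_neg]
      ring
    rw [Finset.sum_congr rfl this, Finset.sum_neg_distrib, sum_inv_sq_aux hn h5, neg_zero]
  have h2H0 : (2 : R) * H = 0 := by rw [h2H, hB]
  have hu2 : IsUnit (2 : R) := by
    have := isUnit_sq_aux (n := n) (k := 2) hn (by omega) (by omega)
    simpa using this
  exact (hu2.mul_right_eq_zero).mp h2H0

/-- `C(n-1, j) ≡ (-1)^j (1 - n·H_j)` mod `n²`. -/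
private lemma chooseA {n : ℕ} (hn : n.Prime) (h5 : 5 ≤ n) :
    ∀ j, j < n → (((n - 1).choose j : ℕ) : ZMod (n ^ 2)) =
      (-1) ^ j * (1 - (n : ZMod (n ^ 2)) * ∑ i ∈ Ico 1 (j + 1), (((i : ℕ) : ZMod (n ^ 2)))⁻¹) := by
  set R := ZMod (n ^ 2)
  intro j
  induction j with
  | zero => intro _; simp
  | succ j ih =>
    intro hj
    have hj' : j < n := Nat.lt_of_succ_lt hj
    have ihj := ih hj'
    have hkey := congrArg (fun m : ℕ => (m : R)) (Nat.choose_succ_right_eq (n - 1) j)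
    rw [Nat.cast_mul, Nat.cast_mul] at hkey
    have hc1 : ((n - 1 - j : ℕ) : R) = (n : R) - ((j + 1 : ℕ) : R) := by
      have : n - 1 - j = n - (j + 1) := by omega
      rw [this, Nat.cast_sub (by omega)]
    rw [hc1] at hkey
    set c : R := ((j + 1 : ℕ) : R) with hc
    have hu : IsUnit c := isUnit_sq_aux hn (by omega) hj
    have hcv : c * c⁻¹ = 1 := ZMod.mul_inv_of_unit _ hu
    have hn2 : (n : R) * (n : R) = 0 := nsq_zero_aux n
    set H : R := ∑ i ∈ Ico 1 (j + 1), (((i : ℕ) : R))⁻¹ with hHd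
    have hX : (((n - 1).choose (j + 1) : ℕ) : R)
        = ((-1) ^ j * (1 - (n : R) * H)) * ((n : R) - c) * c⁻¹ := by
      have h1 : (((n - 1).choose (j + 1) : ℕ) : R) * (c * c⁻¹)
          = ((-1) ^ j * (1 - (n : R) * H)) * ((n : R) - c) * c⁻¹ := by
        rw [← mul_assoc, hkey, ihj]
      rwa [hcv, mul_one] at h1
    have hsum : ∑ i ∈ Ico 1 (j + 1 + 1), (((i : ℕ) : R))⁻¹ = H + c⁻¹ := by
      rw [Finset.sum_Ico_succ_top (by omega)]
    rw [hX, hsum]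
    linear_combination (-(-1 : R) ^ j * H * c⁻¹) * hn2
      + (-(-1 : R) ^ j * (1 - (n : R) * H)) * hcv

theorem statement12 (n : ℕ) (hn : n.Prime) (h5 : 5 ≤ n) :
    n ^ 4 ∣ ∑ k ∈ Finset.Ico 1 n, k * (n.choose k) ^ 2 := by
  classical
  set R := ZMod (n ^ 2)
  set a : ℕ → ℕ := fun k => n.choose k / n with ha
  have hna : ∀ k ∈ Ico 1 n, n * a k = n.choose k := by
    intro k hk
    rw [Finset.mem_Ico] at hk
    exact Nat.mul_div_cancel' (hn.dvd_choose_self (by omega) hk.2)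
  have hka : ∀ k ∈ Ico 1 n, k * a k = (n - 1).choose (k - 1) := by
    intro k hk
    have hk' := hk
    rw [Finset.mem_Ico] at hk'
    have key : n * ((n - 1).choose (k - 1)) = n.choose k * k := by
      have h := Nat.add_one_mul_choose_eq (n - 1) (k - 1)
      rwa [show n - 1 + 1 = n by omega, show k - 1 + 1 = k by omega] at h
    have : n * (k * a k) = n * ((n - 1).choose (k - 1)) := by
      rw [key, ← hna k hk]; ring
    exact Nat.eq_of_mul_eq_mul_left (by omega) this
  have hS : ∑ k ∈ Ico 1 n, k * (n.choose k) ^ 2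
      = n ^ 2 * ∑ k ∈ Ico 1 n, k * (a k) ^ 2 := by
    rw [Finset.mul_sum]
    apply Finset.sum_congr rfl
    intro k hk
    rw [← hna k hk]; ring
  rw [hS, show n ^ 4 = n ^ 2 * n ^ 2 by ring]
  apply mul_dvd_mul_left
  rw [← ZMod.natCast_eq_zero_iff]
  push_cast
  have hterm : ∀ k ∈ Ico 1 n, ((k : ℕ) : R) * (((a k : ℕ) : R)) ^ 2
      = (((k : ℕ) : R))⁻¹ - 2 * (n : R) * ((((k : ℕ) : R))⁻¹
          * ∑ i ∈ Ico 1 k, (((i : ℕ) : R))⁻¹) := by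
    intro k hk
    have hk' := hk
    rw [Finset.mem_Ico] at hk'
    have hu : IsUnit ((k : ℕ) : R) := isUnit_sq_aux hn hk'.1 hk'.2
    have hkv : ((k : ℕ) : R) * (((k : ℕ) : R))⁻¹ = 1 := ZMod.mul_inv_of_unit _ hu
    have hn2 : (n : R) * (n : R) = 0 := nsq_zero_aux n
    have hch : (((n - 1).choose (k - 1) : ℕ) : R)
        = (-1) ^ (k - 1) * (1 - (n : R) * ∑ i ∈ Ico 1 k, (((i : ℕ) : R))⁻¹) := by
      have := chooseA hn h5 (k - 1) (by omega)
      rwa [show k - 1 + 1 = k by omega] at this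
    have hcast : (((k * a k : ℕ)) : R) = ((k : ℕ) : R) * ((a k : ℕ) : R) := Nat.cast_mul _ _
    have hchk : ((k : ℕ) : R) * ((a k : ℕ) : R)
        = (-1) ^ (k - 1) * (1 - (n : R) * ∑ i ∈ Ico 1 k, (((i : ℕ) : R))⁻¹) := by
      rw [← hcast, hka k hk, hch]
    set H : R := ∑ i ∈ Ico 1 k, (((i : ℕ) : R))⁻¹
    have hsq : (((k : ℕ) : R) * ((a k : ℕ) : R)) ^ 2 = (1 - (n : R) * H) ^ 2 := by
      rw [hchk, mul_pow, ← pow_mul, mul_comm (k-1) 2, pow_mul]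
      norm_num
    -- k * a^2 = k⁻¹ * (k*a)^2 and expand
    have step : ((k : ℕ) : R) * (((a k : ℕ) : R)) ^ 2
        = (((k : ℕ) : R))⁻¹ * (((k : ℕ) : R) * ((a k : ℕ) : R)) ^ 2 := by
      linear_combination (-((k : ℕ) : R) * (((a k : ℕ) : R)) ^ 2) * hkv
    rw [step, hsq]
    linear_combination ((((k : ℕ) : R))⁻¹ * H ^ 2) * hn2
  rw [Finset.sum_congr rfl hterm, Finset.sum_sub_distrib, ← Finset.mul_sum]
  have hH : ∑ i ∈ Ico 1 n, (((i : ℕ) : R))⁻¹ = 0 := H_zero_aux hn h5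
  have hQ : (n : R) * ∑ k ∈ Ico 1 n, (((k : ℕ) : R))⁻¹ ^ 2 = 0 := nQ_zero_aux hn h5
  have hsqs := sq_sum_aux (fun i => (((i : ℕ) : R))⁻¹) n
  set H : R := ∑ i ∈ Ico 1 n, (((i : ℕ) : R))⁻¹
  set Q : R := ∑ k ∈ Ico 1 n, (((k : ℕ) : R))⁻¹ ^ 2
  set W : R := ∑ k ∈ Ico 1 n, ((((k : ℕ) : R))⁻¹ * ∑ i ∈ Ico 1 k, (((i : ℕ) : R))⁻¹)
  linear_combination (n : R) * hsqs + (1 - (n : R) * H) * hH + hQ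
end

section
/- For every positive integer n, p_n(z; x, y) = (−1)ⁿ · Res_t(z − (u + vt)ⁿ, tⁿ − 1), where uⁿ = (−1)ⁿx and vⁿ = (−1)ⁿy are fixed n-th roots. -/
open Polynomial

/-- The resultant of `f` (of degree `m`) and `g` (of degree `n`), as the determinant
of the `(n + m) × (n + m)` Sylvester matrix: the first `n` rows carry the
coefficients of `f`, the last `m` rows those of `g`. -/
noncomputable def resultant {R : Type*} [CommRing R] (m n : ℕ) (f g : Polynomial R) : R :=
  Matrix.det (Matrix.of fun i j : Fin (n + m) =>
    if (i : ℕ) < n then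
      (if (i : ℕ) ≤ (j : ℕ) ∧ (j : ℕ) ≤ (i : ℕ) + m then f.coeff (m + i - j) else 0)
    else
      (if (i : ℕ) - n ≤ (j : ℕ) ∧ (j : ℕ) ≤ ((i : ℕ) - n) + n then
        g.coeff (n + ((i : ℕ) - n) - (j : ℕ)) else 0))

namespace S14

open Matrix Finset

set_option linter.unusedSectionVars false

variable {n : ℕ} [NeZero n] {ζ : ℂ}

noncomputable def chi (n : ℕ) (ζ : ℂ) (k : ZMod n) : ℂ := ζ ^ k.val

lemma chi_natCast (h1 : ζ ^ n = 1) (m : ℕ) : chi n ζ (m : ZMod n) = ζ ^ m := by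
  rw [chi, ZMod.val_natCast]
  conv_rhs => rw [← Nat.div_add_mod m n]
  rw [pow_add, pow_mul, h1, one_pow, one_mul]

lemma chi_add (h1 : ζ ^ n = 1) (a b : ZMod n) :
    chi n ζ (a + b) = chi n ζ a * chi n ζ b := by
  have : a + b = ((a.val + b.val : ℕ) : ZMod n) := by
    rw [Nat.cast_add, ZMod.natCast_rightInverse a, ZMod.natCast_rightInverse b]
  rw [this, chi_natCast h1, pow_add, chi, chi]

lemma chi_mul (h1 : ζ ^ n = 1) (a b : ZMod n) :
    chi n ζ (a * b) = chi n ζ a ^ b.val := by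
  have : a * b = ((a.val * b.val : ℕ) : ZMod n) := by
    rw [Nat.cast_mul, ZMod.natCast_rightInverse a, ZMod.natCast_rightInverse b]
  rw [this, chi_natCast h1, pow_mul, chi]

lemma chi_pow_n (h1 : ζ ^ n = 1) (a : ZMod n) : chi n ζ a ^ n = 1 := by
  rw [chi, ← pow_mul, mul_comm, pow_mul, h1, one_pow]

def finEquiv (n : ℕ) [NeZero n] : Fin n ≃ ZMod n where
  toFun i := ((i : ℕ) : ZMod n)
  invFun a := ⟨a.val, a.val_lt⟩
  left_inv i := by
    ext
    simp [ZMod.val_cast_of_lt i.isLt]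
  right_inv a := by simp [ZMod.natCast_rightInverse a]

lemma chi_inj (hζ : IsPrimitiveRoot ζ n) {a b : ZMod n}
    (h : chi n ζ a = chi n ζ b) : a = b := by
  have := hζ.pow_inj a.val_lt b.val_lt h
  rw [← ZMod.natCast_rightInverse a, ← ZMod.natCast_rightInverse b, this]

lemma prod_one_sub (hζ : IsPrimitiveRoot ζ n) (w : ℂ) :
    ∏ r : ZMod n, (w - chi n ζ r) = w ^ n - 1 := by
  have h := X_pow_sub_one_eq_prod (NeZero.pos n) hζ
  have h2 := congrArg (Polynomial.eval w) h
  simp only [eval_sub, eval_pow, eval_X, eval_one, eval_prod, eval_sub, eval_C] at h2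
  rw [h2]
  refine Finset.prod_bij (i := fun (r : ZMod n) _ => chi n ζ r) ?_ ?_ ?_ ?_
  · intro r _
    exact (Polynomial.mem_nthRootsFinset (NeZero.pos n) (1 : ℂ)).2 (chi_pow_n hζ.pow_eq_one r)
  · intro a _ b _ hab
    exact chi_inj hζ hab
  · intro ξ hξ
    obtain ⟨i, _, hio⟩ := hζ.eq_pow_of_pow_eq_one
      ((Polynomial.mem_nthRootsFinset (NeZero.pos n) (1 : ℂ)).1 hξ)
    exact ⟨(i : ZMod n), Finset.mem_univ _, by
      show chi n ζ (i : ZMod n) = ξ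
      rw [chi_natCast hζ.pow_eq_one, hio]⟩
  · intro r _
    rfl

lemma prod_lin (hζ : IsPrimitiveRoot ζ n) (w a : ℂ) :
    ∏ r : ZMod n, (w - chi n ζ r * a) = w ^ n - a ^ n := by
  rcases eq_or_ne a 0 with rfl | ha
  · simp [Finset.prod_const, ZMod.card, zero_pow (NeZero.ne n)]
  · have key : ∀ r : ZMod n, w - chi n ζ r * a = a * (w / a - chi n ζ r) := by
      intro r; field_simp
    rw [Finset.prod_congr rfl (fun r _ => key r), Finset.prod_mul_distrib,
      Finset.prod_const, prod_one_sub hζ, Finset.card_univ, ZMod.card]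
    rw [div_pow, mul_sub, mul_one, mul_div_assoc', mul_comm (a ^ n) (w ^ n), mul_div_assoc,
      div_self (pow_ne_zero _ ha), mul_one]

lemma prod_shift (hζ : IsPrimitiveRoot ζ n) {a b : ℂ} (hab : a ^ n = b ^ n) (G : ℂ → ℂ) :
    ∏ r : ZMod n, G (chi n ζ r * a) = ∏ r : ZMod n, G (chi n ζ r * b) := by
  rcases eq_or_ne a 0 with rfl | ha
  · have hb : b = 0 := by
      have : b ^ n = 0 := by rw [← hab, zero_pow (NeZero.ne n)]
      exact pow_eq_zero_iff (NeZero.ne n) |>.1 this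
    rw [hb]
  · have h1 : (b / a) ^ n = 1 := by
      rw [div_pow, ← hab, div_self (pow_ne_zero _ ha)]
    obtain ⟨i, _, hio⟩ := hζ.eq_pow_of_pow_eq_one h1
    have hb : b = chi n ζ (i : ZMod n) * a := by
      rw [chi_natCast hζ.pow_eq_one, hio]; field_simp
    have h2 : ∏ r : ZMod n, G (chi n ζ r * b)
        = ∏ r : ZMod n, G (chi n ζ (r + (i : ZMod n)) * a) :=
      Finset.prod_congr rfl fun r _ => by rw [hb, chi_add hζ.pow_eq_one, mul_assoc]
    rw [h2]
    exact (Fintype.prod_equiv (Equiv.addRight ((i : ZMod n)))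
      (fun r => G (chi n ζ (r + (i : ZMod n)) * a))
      (fun r => G (chi n ζ r * a)) (fun r => rfl)).symm

lemma det_circ (hζ : IsPrimitiveRoot ζ n) (c : ZMod n → ℂ) :
    (Matrix.of fun i k : ZMod n => c (i - k)).det
      = ∏ s : ZMod n, ∑ m : ZMod n, c m * chi n ζ (m * s) := by
  set lam : ZMod n → ℂ := fun s => ∑ m : ZMod n, c m * chi n ζ (m * s) with hlam
  set W : Matrix (ZMod n) (ZMod n) ℂ := Matrix.of fun k s => chi n ζ (-(k * s)) with hW
  have hMW : (Matrix.of fun i k : ZMod n => c (i - k)) * W = W * diagonal lam := by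
    ext i s
    rw [Matrix.mul_apply, Matrix.mul_diagonal]
    have step : ∀ m : ZMod n,
        (Matrix.of fun i k : ZMod n => c (i - k)) i ((Equiv.subLeft i) m) * W ((Equiv.subLeft i) m) s
          = c m * chi n ζ (m * s) * chi n ζ (-(i * s)) := by
      intro m
      simp only [Matrix.of_apply, Equiv.subLeft_apply, hW, sub_sub_cancel]
      rw [show -((i - m) * s) = m * s + -(i * s) by ring, chi_add hζ.pow_eq_one, mul_assoc]
    calc ∑ k : ZMod n, (Matrix.of fun i k : ZMod n => c (i - k)) i k * W k s
        = ∑ m : ZMod n, (Matrix.of fun i k : ZMod n => c (i - k)) i ((Equiv.subLeft i) m)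
            * W ((Equiv.subLeft i) m) s := (Equiv.sum_comp (Equiv.subLeft i) _).symm
      _ = ∑ m : ZMod n, c m * chi n ζ (m * s) * chi n ζ (-(i * s)) :=
          Finset.sum_congr rfl fun m _ => step m
      _ = W i s * lam s := by
          rw [← Finset.sum_mul, hlam]
          simp only [hW, Matrix.of_apply]
          ring
  have hdetW : W.det ≠ 0 := by
    set v : Fin n → ℂ := fun j => chi n ζ (-((j : ℕ) : ZMod n)) with hv
    have hsub : W.submatrix (finEquiv n) (finEquiv n) = (Matrix.vandermonde v).transpose := by
      ext i j
      simp only [Matrix.submatrix_apply, hW, Matrix.of_apply, Matrix.transpose_apply,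
        Matrix.vandermonde, hv, Matrix.of_apply, finEquiv, Equiv.coe_fn_mk]
      rw [show ((i : ℕ) : ZMod n) * ((j : ℕ) : ZMod n) = (-((j : ℕ) : ZMod n)) * (-((i : ℕ) : ZMod n)) by ring,
        show -((-((j : ℕ) : ZMod n)) * (-((i : ℕ) : ZMod n))) = (-((j : ℕ) : ZMod n)) * ((i : ℕ) : ZMod n) by ring,
        chi_mul hζ.pow_eq_one, ZMod.val_cast_of_lt i.isLt]
    have : W.det = (Matrix.vandermonde v).det := by
      rw [← Matrix.det_submatrix_equiv_self (finEquiv n) W, hsub, Matrix.det_transpose]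
    rw [this, Matrix.det_vandermonde]
    refine Finset.prod_ne_zero_iff.2 fun i _ => Finset.prod_ne_zero_iff.2 fun j hj => ?_
    rw [Finset.mem_Ioi] at hj
    refine sub_ne_zero.2 fun hvv => ?_
    have := chi_inj hζ (hv ▸ hvv)
    have h2 : ((j : ℕ) : ZMod n) = ((i : ℕ) : ZMod n) := neg_injective this
    have : (j : ℕ) = (i : ℕ) := by
      have := congrArg ZMod.val h2
      rwa [ZMod.val_cast_of_lt j.isLt, ZMod.val_cast_of_lt i.isLt] at this
    omega
  have hdd := congrArg Matrix.det hMW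
  rw [Matrix.det_mul, Matrix.det_mul, Matrix.det_diagonal, mul_comm W.det] at hdd
  exact mul_right_cancel₀ hdetW hdd

omit [NeZero n] in
lemma res_eq (hn : 0 < n) (f : Polynomial ℂ) :
    resultant n n f (X ^ n - 1)
      = (-1 : ℂ) ^ n * (Matrix.of fun i k : Fin n =>
          (if (i : ℕ) ≤ (k : ℕ) then f.coeff (n + i - k) else 0)
          + (if (k : ℕ) ≤ (i : ℕ) then f.coeff ((i : ℕ) - (k : ℕ)) else 0)).det := by
  have hg : ∀ j : ℕ, ((X : Polynomial ℂ) ^ n - 1).coeff j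
      = (if j = n then 1 else 0) - (if j = 0 then 1 else 0) := by
    intro j; rw [coeff_sub, coeff_X_pow, coeff_one]
  set g : Polynomial ℂ := X ^ n - 1 with hgdef
  set S : Matrix (Fin (n + n)) (Fin (n + n)) ℂ := Matrix.of fun i j : Fin (n + n) =>
    if (i : ℕ) < n then
      (if (i : ℕ) ≤ (j : ℕ) ∧ (j : ℕ) ≤ (i : ℕ) + n then f.coeff (n + i - j) else 0)
    else
      (if (i : ℕ) - n ≤ (j : ℕ) ∧ (j : ℕ) ≤ ((i : ℕ) - n) + n then
        g.coeff (n + ((i : ℕ) - n) - (j : ℕ)) else 0) with hS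
  have h0 : resultant n n f g = S.det := rfl
  set A : Matrix (Fin n) (Fin n) ℂ :=
    Matrix.of fun i k => if (i : ℕ) ≤ (k : ℕ) then f.coeff (n + i - k) else 0 with hA
  set B : Matrix (Fin n) (Fin n) ℂ :=
    Matrix.of fun i k => if (k : ℕ) ≤ (i : ℕ) then f.coeff ((i : ℕ) - (k : ℕ)) else 0 with hB
  have hT : S.submatrix finSumFinEquiv finSumFinEquiv = Matrix.fromBlocks A B 1 (-1) := by
    ext i j
    cases' i with i i <;> cases' j with j j <;>
      simp only [Matrix.submatrix_apply, finSumFinEquiv_apply_left, finSumFinEquiv_apply_right,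
        Fin.coe_castAdd, Fin.coe_natAdd, hS, Matrix.of_apply, Matrix.fromBlocks_apply₁₁,
        Matrix.fromBlocks_apply₁₂, Matrix.fromBlocks_apply₂₁, Matrix.fromBlocks_apply₂₂,
        hA, hB, Matrix.one_apply, Matrix.neg_apply]
    · rw [if_pos i.isLt]
      by_cases h : (i : ℕ) ≤ (j : ℕ)
      · rw [if_pos ⟨h, by omega⟩, if_pos h]
      · rw [if_neg (by omega), if_neg h]
    · rw [if_pos i.isLt]
      by_cases h : (j : ℕ) ≤ (i : ℕ)
      · rw [if_pos ⟨by omega, by omega⟩, if_pos h]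
        congr 1
        omega
      · rw [if_neg (by omega), if_neg h]
    · rw [if_neg (by omega)]
      by_cases h : (i : ℕ) = (j : ℕ)
      · rw [if_pos ⟨by omega, by omega⟩, hg]
        rw [if_pos (by omega), if_neg (by omega), if_pos (Fin.ext h)]
        norm_num
      · by_cases h2 : (i : ℕ) ≤ (j : ℕ)
        · rw [if_pos ⟨by omega, by omega⟩, hg]
          rw [if_neg (by omega), if_neg (by omega), if_neg (fun hh => h (congrArg Fin.val hh))]
          norm_num
        · rw [if_neg (by omega), if_neg (fun hh => h (congrArg Fin.val hh))]
    · rw [if_neg (by omega)]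
      by_cases h : (i : ℕ) = (j : ℕ)
      · rw [if_pos ⟨by omega, by omega⟩, hg]
        rw [if_neg (by omega), if_pos (by omega), if_pos (Fin.ext h)]
        norm_num
      · by_cases h2 : (j : ℕ) ≤ (i : ℕ)
        · rw [if_pos ⟨by omega, by omega⟩, hg]
          rw [if_neg (by omega), if_neg (by omega), if_neg (fun hh => h (congrArg Fin.val hh))]
          norm_num
        · rw [if_neg (by omega), if_neg (fun hh => h (congrArg Fin.val hh))]
          norm_num
  have hP : (Matrix.fromBlocks (1 : Matrix (Fin n) (Fin n) ℂ) (0 : Matrix (Fin n) (Fin n) ℂ)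
      (1 : Matrix (Fin n) (Fin n) ℂ) (1 : Matrix (Fin n) (Fin n) ℂ)).det = 1 := by
    rw [Matrix.det_fromBlocks_zero₁₂]
    simp
  have hmul : Matrix.fromBlocks A B (1 : Matrix (Fin n) (Fin n) ℂ) (-1)
      * Matrix.fromBlocks (1 : Matrix (Fin n) (Fin n) ℂ) (0 : Matrix (Fin n) (Fin n) ℂ)
        (1 : Matrix (Fin n) (Fin n) ℂ) (1 : Matrix (Fin n) (Fin n) ℂ)
      = Matrix.fromBlocks (A + B) B (0 : Matrix (Fin n) (Fin n) ℂ) (-1) := by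
    rw [Matrix.fromBlocks_multiply]
    congr 1 <;> simp
  have hdet : S.det = (A + B).det * (-1 : ℂ) ^ n := by
    rw [← Matrix.det_submatrix_equiv_self finSumFinEquiv S, hT]
    have h1 : (Matrix.fromBlocks A B (1 : Matrix (Fin n) (Fin n) ℂ) (-1)).det
        = (Matrix.fromBlocks (A + B) B (0 : Matrix (Fin n) (Fin n) ℂ) (-1)).det := by
      rw [← hmul, Matrix.det_mul, hP, mul_one]
    rw [h1, Matrix.det_fromBlocks_zero₂₁]
    congr 1
    have h2 : (-1 : Matrix (Fin n) (Fin n) ℂ) = -(1 : Matrix (Fin n) (Fin n) ℂ) := rfl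
    rw [h2, Matrix.det_neg, Matrix.det_one, mul_one, Fintype.card_fin]
  have hAB : A + B = Matrix.of (fun i k : Fin n =>
      (if (i : ℕ) ≤ (k : ℕ) then f.coeff (n + i - k) else 0)
      + (if (k : ℕ) ≤ (i : ℕ) then f.coeff ((i : ℕ) - (k : ℕ)) else 0)) := by
    ext i k
    simp [hA, hB]
  rw [h0, hdet, hAB]
  ring

end S14

theorem statement14 (n : ℕ) (hn : 0 < n) (x y z u v : ℂ)
    (hu : u ^ n = (-1) ^ n * x) (hv : v ^ n = (-1) ^ n * y) :
    pn n z x y = (-1) ^ n * _root_.resultant n n (C z - (C u + C v * X) ^ n) (X ^ n - 1) := by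
  haveI : NeZero n := ⟨hn.ne'⟩
  open S14 in
  set ζ : ℂ := Complex.exp (2 * Real.pi * Complex.I / n) with hzeta
  have hζ : IsPrimitiveRoot ζ n := Complex.isPrimitiveRoot_exp n hn.ne'
  have h1 : ζ ^ n = 1 := hζ.pow_eq_one
  set f : Polynomial ℂ := C z - (C u + C v * X) ^ n with hf
  set Z : ℂ := z ^ (n : ℂ)⁻¹ with hZdef
  set X' : ℂ := x ^ (n : ℂ)⁻¹ with hXdef
  set Y' : ℂ := y ^ (n : ℂ)⁻¹ with hYdef
  have hZ : Z ^ n = z := Complex.cpow_nat_inv_pow z hn.ne'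
  have hX : X' ^ n = x := Complex.cpow_nat_inv_pow x hn.ne'
  have hY : Y' ^ n = y := Complex.cpow_nat_inv_pow y hn.ne'
  have hux : (-u) ^ n = X' ^ n := by
    rw [hX, neg_pow, hu, ← mul_assoc, ← mul_pow]
    norm_num
  have hvy : (-v) ^ n = Y' ^ n := by
    rw [hY, neg_pow, hv, ← mul_assoc, ← mul_pow]
    norm_num
  -- degree bound
  have hdeg : f.natDegree < n + 1 := by
    have hd1 : (C u + C v * X).natDegree ≤ 1 := by
      refine le_trans (natDegree_add_le _ _) ?_
      simp only [natDegree_C, max_le_iff]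
      exact ⟨Nat.zero_le _, le_trans (natDegree_C_mul_le _ _) (by simp)⟩
    have : f.natDegree ≤ n := by
      refine le_trans (natDegree_sub_le _ _) ?_
      simp only [natDegree_C, max_le_iff]
      refine ⟨Nat.zero_le _, le_trans (natDegree_pow_le) ?_⟩
      calc n * (C u + C v * X).natDegree ≤ n * 1 := Nat.mul_le_mul_left n hd1
        _ = n := mul_one n
    omega
  set c : ZMod n → ℂ := fun m => f.coeff m.val + (if m = 0 then f.coeff n else 0) with hc
  -- the eigenvalue sum equals the evaluation
  have hsum : ∀ w : ℂ, w ^ n = 1 →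
      ∑ m : ZMod n, c m * w ^ m.val = z - (u + v * w) ^ n := by
    intro w hw
    have heval : f.eval w = z - (u + v * w) ^ n := by
      simp [hf]
    rw [← heval, eval_eq_sum_range' hdeg w]
    have hstep : ∑ m : ZMod n, c m * w ^ m.val
        = ∑ i : Fin n, c ((i : ℕ) : ZMod n) * w ^ (((i : ℕ) : ZMod n)).val :=
      (Equiv.sum_comp (finEquiv n) (fun m : ZMod n => c m * w ^ m.val)).symm
    rw [hstep]
    have hterm : ∀ i : Fin n, c ((i : ℕ) : ZMod n) * w ^ (((i : ℕ) : ZMod n)).val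
        = f.coeff i * w ^ (i : ℕ) + (if (i : ℕ) = 0 then f.coeff n * w ^ (i : ℕ) else 0) := by
      intro i
      have hval : (((i : ℕ) : ZMod n)).val = (i : ℕ) := ZMod.val_cast_of_lt i.isLt
      have hzero : (((i : ℕ) : ZMod n) = 0) ↔ ((i : ℕ) = 0) := by
        rw [ZMod.natCast_eq_zero_iff]
        exact ⟨fun h => Nat.eq_zero_of_dvd_of_lt h i.isLt, fun h => by simp [h]⟩
      rw [hc]
      simp only [hval]
      by_cases h : (i : ℕ) = 0
      · rw [if_pos (hzero.2 h), if_pos h]; ring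
      · rw [if_neg (fun hh => h (hzero.1 hh)), if_neg h]; ring
    rw [Finset.sum_congr rfl (fun i _ => hterm i), Finset.sum_add_distrib]
    rw [Fin.sum_univ_eq_sum_range (fun i => f.coeff i * w ^ i),
      Fin.sum_univ_eq_sum_range (fun i => if i = 0 then f.coeff n * w ^ i else 0)]
    rw [Finset.sum_ite_eq' (Finset.range n) 0 (fun i => f.coeff n * w ^ i)]
    rw [if_pos (Finset.mem_range.2 hn), Finset.sum_range_succ, hw, pow_zero]
  -- RHS equals product over roots of unity
  have hRHS : (-1 : ℂ) ^ n * _root_.resultant n n f (X ^ n - 1)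
      = ∏ s : ZMod n, (z - (u + v * chi n ζ s) ^ n) := by
    rw [res_eq hn f, ← mul_assoc, ← mul_pow,
      show ((-1 : ℂ) * (-1)) = 1 by norm_num, one_pow, one_mul]
    have hMc : (Matrix.of fun i k : Fin n =>
        (if (i : ℕ) ≤ (k : ℕ) then f.coeff (n + i - k) else 0)
        + (if (k : ℕ) ≤ (i : ℕ) then f.coeff ((i : ℕ) - (k : ℕ)) else 0))
        = (Matrix.of fun i k : ZMod n => c (i - k)).submatrix (finEquiv n) (finEquiv n) := by
      ext i k
      simp only [Matrix.of_apply, Matrix.submatrix_apply, finEquiv, Equiv.coe_fn_mk, hc]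
      rcases lt_trichotomy (i : ℕ) (k : ℕ) with h | h | h
      · have hcast : ((i : ℕ) : ZMod n) - ((k : ℕ) : ZMod n) = ((n + i - k : ℕ) : ZMod n) := by
          have : ((n + (i : ℕ) - k : ℕ) : ZMod n) = ((n : ℕ) : ZMod n) + (i : ℕ) - (k : ℕ) := by
            rw [Nat.cast_sub (by omega)]
            push_cast
            ring
          rw [this, ZMod.natCast_self, zero_add]
        have hval : (((n + (i : ℕ) - k : ℕ)) : ZMod n).val = n + (i : ℕ) - k :=
          ZMod.val_cast_of_lt (by omega)
        have hne : (((n + (i : ℕ) - k : ℕ)) : ZMod n) ≠ 0 := by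
          intro hcon
          have := congrArg ZMod.val hcon
          rw [hval, ZMod.val_zero] at this
          omega
        rw [if_pos (show (i : ℕ) ≤ (k : ℕ) by omega),
          if_neg (show ¬ ((k : ℕ) ≤ (i : ℕ)) by omega), hcast, hval, if_neg hne]
      · have hcast : ((i : ℕ) : ZMod n) - ((k : ℕ) : ZMod n) = 0 := by
          rw [h]; ring
        rw [if_pos (by omega), if_pos (by omega), hcast, if_pos rfl, ZMod.val_zero]
        rw [show n + (i : ℕ) - (k : ℕ) = n by omega, show (i : ℕ) - (k : ℕ) = 0 by omega]
        ring
      · have hcast : ((i : ℕ) : ZMod n) - ((k : ℕ) : ZMod n) = (((i : ℕ) - k : ℕ) : ZMod n) := by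
          rw [Nat.cast_sub (by omega)]
        have hval : ((((i : ℕ) - k : ℕ)) : ZMod n).val = (i : ℕ) - k :=
          ZMod.val_cast_of_lt (by omega)
        have hne : ((((i : ℕ) - k : ℕ)) : ZMod n) ≠ 0 := by
          intro hcon
          have := congrArg ZMod.val hcon
          rw [hval, ZMod.val_zero] at this
          omega
        rw [if_neg (show ¬ ((i : ℕ) ≤ (k : ℕ)) by omega),
          if_pos (show (k : ℕ) ≤ (i : ℕ) by omega), hcast, hval, if_neg hne]
        simp
    rw [hMc, Matrix.det_submatrix_equiv_self, det_circ hζ c]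
    refine Finset.prod_congr rfl fun s _ => ?_
    have hms : ∀ m : ZMod n, chi n ζ (m * s) = chi n ζ s ^ m.val := by
      intro m
      rw [mul_comm, chi_mul h1]
    exact (Finset.sum_congr rfl fun m _ => by rw [hms m]).trans
      (hsum (chi n ζ s) (chi_pow_n h1 s))
  rw [hRHS]
  -- now the pn side
  have hexp : ∀ m : ℕ, Complex.exp (2 * Real.pi * Complex.I * ((m : ℂ) + 1) / n)
      = chi n ζ ((m + 1 : ℕ) : ZMod n) := by
    intro m
    rw [chi_natCast h1, hzeta, ← Complex.exp_nat_mul]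
    congr 1
    push_cast
    ring
  set e2 : Fin n ≃ ZMod n := (finEquiv n).trans (Equiv.addRight (1 : ZMod n)) with he2
  have he2a : ∀ r : Fin n, e2 r = (((r : ℕ) + 1 : ℕ) : ZMod n) := by
    intro r
    show ((r : ℕ) : ZMod n) + 1 = (((r : ℕ) + 1 : ℕ) : ZMod n)
    push_cast
    rfl
  have hpn : pn n z x y = ∏ a : ZMod n, ∏ b : ZMod n, (Z + chi n ζ a * X' + chi n ζ b * Y') := by
    rw [pn]
    have step1 : ∀ r s : Fin n,
        (z ^ (n : ℂ)⁻¹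
          + Complex.exp (2 * Real.pi * Complex.I * ((r : ℕ) + 1) / n) * x ^ (n : ℂ)⁻¹
          + Complex.exp (2 * Real.pi * Complex.I * ((s : ℕ) + 1) / n) * y ^ (n : ℂ)⁻¹)
        = (Z + chi n ζ (e2 r) * X' + chi n ζ (e2 s) * Y') := by
      intro r s
      rw [hexp (r : ℕ), hexp (s : ℕ), he2a r, he2a s]
    rw [Finset.prod_congr rfl (fun r _ => Finset.prod_congr rfl (fun s _ => step1 r s))]
    rw [show (fun r : Fin n => ∏ s : Fin n, (Z + chi n ζ (e2 r) * X' + chi n ζ (e2 s) * Y'))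
        = fun r : Fin n => (fun a : ZMod n => ∏ s : Fin n, (Z + chi n ζ a * X' + chi n ζ (e2 s) * Y')) (e2 r) from rfl]
    rw [Equiv.prod_comp e2 (fun a : ZMod n => ∏ s : Fin n, (Z + chi n ζ a * X' + chi n ζ (e2 s) * Y'))]
    exact Finset.prod_congr rfl fun a _ =>
      Equiv.prod_comp e2 (fun b : ZMod n => (Z + chi n ζ a * X' + chi n ζ b * Y'))
  rw [hpn]
  refine Eq.symm ?_
  calc ∏ s : ZMod n, (z - (u + v * chi n ζ s) ^ n)
      = ∏ s : ZMod n, ∏ r : ZMod n, (Z - chi n ζ r * (u + v * chi n ζ s)) := by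
        refine Finset.prod_congr rfl fun s _ => ?_
        rw [prod_lin hζ, hZ]
    _ = ∏ s : ZMod n, ∏ r : ZMod n, (Z + chi n ζ r * (-u) + chi n ζ (r + s) * (-v)) := by
        refine Finset.prod_congr rfl fun s _ => Finset.prod_congr rfl fun r _ => ?_
        rw [chi_add h1]
        ring
    _ = ∏ r : ZMod n, ∏ s : ZMod n, (Z + chi n ζ r * (-u) + chi n ζ (r + s) * (-v)) :=
        Finset.prod_comm
    _ = ∏ r : ZMod n, ∏ s : ZMod n, (Z + chi n ζ r * (-u) + chi n ζ s * (-v)) := by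
        refine Finset.prod_congr rfl fun r _ => ?_
        exact Equiv.prod_comp (Equiv.addLeft r) (fun s => Z + chi n ζ r * (-u) + chi n ζ s * (-v))
    _ = ∏ r : ZMod n, ∏ s : ZMod n, (Z + chi n ζ r * (-u) + chi n ζ s * Y') := by
        refine Finset.prod_congr rfl fun r _ => ?_
        exact prod_shift hζ hvy (fun t => Z + chi n ζ r * (-u) + t)
    _ = ∏ r : ZMod n, ∏ s : ZMod n, (Z + chi n ζ r * X' + chi n ζ s * Y') := by
        have := prod_shift hζ hux (fun t => ∏ s : ZMod n, (Z + t + chi n ζ s * Y'))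
        convert this using 2 <;> ring_nf
    _ = ∏ a : ZMod n, ∏ b : ZMod n, (Z + chi n ζ a * X' + chi n ζ b * Y') := rfl
end
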